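/- arXiv:1308.5018 — 6 statements merged into one kernel-verified Lean document; each statement's English description precedes it below -/
import Mathlib

section
/- The polynomials T^k_s satisfy the recurrence T^k_s = T^{k,h}_{s-1} + Σ_{j=1}^{k-1} y^j_0 · T^{k-j, h+jn}_{s-1} + y^k_0 for all k ≥ 1 and s ≥ 2, where T^{k,α}_s denotes the polynomial T^k_s with every variable y^r_j replaced by y^r_{j+α}. -/
open Finset

/-- The finset of compositions of `k` into `p` positive parts, encoded as
functions `Fin p → Fin (k+1)`. -/
def comps (k p : ℕ) : Finset (Fin p → Fin (k + 1)) :=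
  Finset.univ.filter fun K => (∀ i, 1 ≤ (K i : ℕ)) ∧ (∑ i, (K i : ℕ)) = k

/-- Partial sum `k_1 + ⋯ + k_{i-1}` of the parts of a composition before index `i`. -/
def prefSum {k p : ℕ} (K : Fin p → Fin (k + 1)) (i : Fin p) : ℤ :=
  ∑ j ∈ Finset.Iio i, ((K j : ℕ) : ℤ)

/-- Partial sum `k_{i+1} + ⋯ + k_p` of the parts of a composition after index `i`. -/
def sufSum {k p : ℕ} (K : Fin p → Fin (k + 1)) (i : Fin p) : ℤ :=
  ∑ j ∈ Finset.Ioi i, ((K j : ℕ) : ℤ)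

/-- The multivariate polynomial
`T^k_s = Σ_K Σ_{0 ≤ λ_1 < ⋯ < λ_p ≤ s-1} y^{k_1}_{λ_1 h} ⋯ y^{k_p}_{λ_p h + (k_1+⋯+k_{p-1})n}`,
summed over compositions `K = (k_1,…,k_p)` of `k`. -/
def Tpoly {R : Type*} [CommRing R] (y : ℕ → ℤ → R) (n h : ℤ) (k s : ℕ) : R :=
  ∑ p ∈ Finset.Icc 1 k, ∑ K ∈ comps k p,
    ∑ lam ∈ Finset.univ.filter (fun lam : Fin p → Fin s => ∀ i j, i < j → lam i < lam j),
      ∏ i, y ((K i : ℕ)) (((lam i : ℕ) : ℤ) * h + prefSum K i * n)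

/-- The multivariate polynomial
`S^k_s = (-1)^k Σ_K (-1)^p Σ_{0 ≤ λ_1 ≤ ⋯ ≤ λ_p ≤ s-1}
  y^{k_1}_{λ_1 h + (k_2+⋯+k_p)n} ⋯ y^{k_p}_{λ_p h}`,
summed over compositions `K = (k_1,…,k_p)` of `k`. -/
def Spoly {R : Type*} [CommRing R] (y : ℕ → ℤ → R) (n h : ℤ) (k s : ℕ) : R :=
  (-1) ^ k * ∑ p ∈ Finset.Icc 1 k, (-1) ^ p *
    ∑ K ∈ comps k p,
      ∑ lam ∈ Finset.univ.filter (fun lam : Fin p → Fin s => ∀ i j, i ≤ j → lam i ≤ lam j),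
        ∏ i, y ((K i : ℕ)) (((lam i : ℕ) : ℤ) * h + sufSum K i * n)

/-- The shift of variables `y^r_j ↦ y^r_{j+α}`. -/
def shiftVar {R : Type*} (y : ℕ → ℤ → R) (α : ℤ) : ℕ → ℤ → R := fun r j => y r (j + α)

def T2 {R : Type*} [CommRing R] (y : ℕ → ℤ → R) (n h a : ℤ) (k s : ℕ) : R :=
  ∑ f ∈ Finset.Nat.antidiagonalTuple s k,
    ∏ i : Fin s, if f i = 0 then 1 else
      y (f i) (((i : ℕ) : ℤ) * h + ((∑ j ∈ Finset.Iio i, f j : ℕ) : ℤ) * n + a)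

def Trec {R : Type*} [CommRing R] (y : ℕ → ℤ → R) (n h : ℤ) : ℕ → ℤ → ℕ → R
  | 0, _, k => if k = 0 then 1 else 0
  | s+1, a, k => Trec y n h s (a+h) k +
      ∑ c ∈ Finset.Icc 1 k, y c a * Trec y n h s (a + h + (c:ℤ)*n) (k - c)

lemma Trec_zero {R : Type*} [CommRing R] (y : ℕ → ℤ → R) (n h : ℤ) (s : ℕ) (a : ℤ) :
    Trec y n h s a 0 = 1 := by
  induction s generalizing a with
  | zero => simp [Trec]
  | succ s ih => simp [Trec, ih]

lemma sum_antidiagonalTuple_succ {M : Type*} [AddCommMonoid M] {s k : ℕ}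
    (F : (Fin (s+1) → ℕ) → M) :
    ∑ f ∈ Finset.Nat.antidiagonalTuple (s+1) k, F f
      = ∑ cm ∈ Finset.HasAntidiagonal.antidiagonal k, ∑ g ∈ Finset.Nat.antidiagonalTuple s cm.2,
          F (Fin.cons cm.1 g) := by
  rw [← Finset.sum_sigma (Finset.HasAntidiagonal.antidiagonal k) (fun cm => Finset.Nat.antidiagonalTuple s cm.2) (fun x => F (Fin.cons x.1.1 x.2))]
  refine Finset.sum_bij' (fun (f : Fin (s+1) → ℕ) (_ : f ∈ Finset.Nat.antidiagonalTuple (s+1) k) => (⟨(f 0, ∑ i : Fin s, f i.succ), Fin.tail f⟩ : Σ cm : ℕ × ℕ, Fin s → ℕ))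
    (fun x _ => Fin.cons x.1.1 x.2) ?_ ?_ ?_ ?_ ?_
  · intro f hf
    rw [Finset.Nat.mem_antidiagonalTuple] at hf
    rw [Finset.mem_sigma]
    refine ⟨?_, ?_⟩
    · rw [Finset.HasAntidiagonal.mem_antidiagonal]
      dsimp only
      rw [← hf, Fin.sum_univ_succ]
    · rw [Finset.Nat.mem_antidiagonalTuple]; rfl
  · intro x hx
    rw [Finset.mem_sigma, Finset.HasAntidiagonal.mem_antidiagonal, Finset.Nat.mem_antidiagonalTuple] at hx
    rw [Finset.Nat.mem_antidiagonalTuple, Fin.sum_univ_succ]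
    simp [hx.2, hx.1]
  · intro f hf; exact Fin.cons_self_tail f
  · rintro ⟨⟨c, m⟩, g⟩ hx
    rw [Finset.mem_sigma, Finset.HasAntidiagonal.mem_antidiagonal, Finset.Nat.mem_antidiagonalTuple] at hx
    simp [Fin.tail_cons, hx.2]
  · intro f hf; rw [Fin.cons_self_tail]

lemma sum_Iio_succ_fin {s : ℕ} (φ : Fin (s+1) → ℕ) (i : Fin s) :
    ∑ j ∈ Finset.Iio (Fin.succ i), φ j = φ 0 + ∑ j ∈ Finset.Iio i, φ (Fin.succ j) := by
  have key : ∀ (m : ℕ) (ψ : Fin m → ℕ) (t : Fin m),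
      ∑ j ∈ Finset.Iio t, ψ j = ∑ j : Fin m, if j < t then ψ j else 0 := by
    intro m ψ t
    have : Finset.Iio t = Finset.univ.filter (fun j => j < t) := by
      ext j; simp
    rw [this, Finset.sum_filter]
  rw [key _ φ (Fin.succ i), key _ (fun j => φ (Fin.succ j)) i, Fin.sum_univ_succ]
  simp [Fin.succ_pos, Fin.succ_lt_succ_iff]

lemma T2_eq_Trec {R : Type*} [CommRing R] (y : ℕ → ℤ → R) (n h : ℤ) (s : ℕ) :
    ∀ (a : ℤ) (k : ℕ), T2 y n h a k s = Trec y n h s a k := by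
  induction s with
  | zero =>
    intro a k
    cases k with
    | zero => simp [T2, Trec]
    | succ k => simp [T2, Trec]
  | succ s ih =>
    intro a k
    set F : (Fin (s+1) → ℕ) → R := fun f =>
      ∏ i : Fin (s+1), if f i = 0 then 1 else
        y (f i) ((i:ℤ)*h + ((∑ j ∈ Finset.Iio i, f j : ℕ) : ℤ)*n + a) with hF
    have h0 : Finset.Iio (0 : Fin (s+1)) = ∅ := by ext j; simp
    have step : ∀ cm ∈ Finset.HasAntidiagonal.antidiagonal k,
        (∑ g ∈ Finset.Nat.antidiagonalTuple s cm.2, F (Fin.cons cm.1 g))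
        = (if cm.1 = 0 then 1 else y cm.1 a) * Trec y n h s (a + h + (cm.1:ℤ)*n) cm.2 := by
      intro cm _
      rw [← ih (a + h + (cm.1:ℤ)*n) cm.2, T2, Finset.mul_sum]
      refine Finset.sum_congr rfl fun g _ => ?_
      rw [hF]
      dsimp only
      rw [Fin.prod_univ_succ]
      congr 1
      · simp [h0]
      · refine Finset.prod_congr rfl fun i _ => ?_
        rw [Fin.cons_succ, sum_Iio_succ_fin, Fin.cons_zero]
        simp only [Fin.cons_succ]
        by_cases hgi : g i = 0
        · simp [hgi]
        · rw [if_neg hgi, if_neg hgi]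
          congr 1
          push_cast [Fin.val_succ]
          ring
    have main : ∑ cm ∈ Finset.HasAntidiagonal.antidiagonal k,
        (if cm.1 = 0 then 1 else y cm.1 a) * Trec y n h s (a + h + (cm.1:ℤ)*n) cm.2
        = Trec y n h (s+1) a k := by
      rw [Finset.Nat.sum_antidiagonal_eq_sum_range_succ_mk, Finset.sum_range_succ']
      have e1 : ∀ c ∈ Finset.range k,
          (if c + 1 = 0 then 1 else y (c+1) a) * Trec y n h s (a + h + ((c+1 : ℕ):ℤ)*n) (k - (c+1))
          = y (c+1) a * Trec y n h s (a + h + ((c+1 : ℕ):ℤ)*n) (k - (c+1)) := by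
        intro c _; rw [if_neg (Nat.succ_ne_zero c)]
      rw [Finset.sum_congr rfl e1, Trec]
      have e2 : ∑ c ∈ Finset.Icc 1 k, y c a * Trec y n h s (a + h + (c:ℤ)*n) (k - c)
          = ∑ c ∈ Finset.range k, y (c+1) a * Trec y n h s (a + h + ((c+1 : ℕ):ℤ)*n) (k - (c+1)) := by
        have hIcc : Finset.Icc 1 k = Finset.Ico 1 (k+1) := by rw [Finset.Ico_add_one_right_eq_Icc]
        rw [hIcc, Finset.sum_Ico_eq_sum_range]
        simp only [Nat.add_sub_cancel]
        refine Finset.sum_congr rfl fun c _ => ?_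
        rw [Nat.add_comm 1 c]
      rw [e2]
      simp [add_comm]
    calc T2 y n h a k (s+1)
        = ∑ cm ∈ Finset.HasAntidiagonal.antidiagonal k, ∑ g ∈ Finset.Nat.antidiagonalTuple s cm.2,
            F (Fin.cons cm.1 g) := by rw [T2, sum_antidiagonalTuple_succ]
      _ = _ := (Finset.sum_congr rfl step).trans main

/-- support of a tuple -/
def supp {s : ℕ} (f : Fin s → ℕ) : Finset (Fin s) := Finset.univ.filter fun i => f i ≠ 0

/-- spreading a composition along an increasing sequence -/
def toF {k p s : ℕ} (K : Fin p → Fin (k+1)) (lam : Fin p → Fin s) : Fin s → ℕ :=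
  fun i => ∑ j ∈ Finset.univ.filter (fun j => lam j = i), (K j : ℕ)

lemma toF_apply_lam {k p s : ℕ} {K : Fin p → Fin (k+1)} {lam : Fin p → Fin s}
    (hmono : StrictMono lam) (j : Fin p) : toF K lam (lam j) = K j := by
  rw [toF]
  have : Finset.univ.filter (fun j' => lam j' = lam j) = {j} := by
    ext j'; simp [hmono.injective.eq_iff]
  rw [this, Finset.sum_singleton]

lemma toF_eq_zero {k p s : ℕ} {K : Fin p → Fin (k+1)} {lam : Fin p → Fin s} {i : Fin s}
    (hne : ∀ j, lam j ≠ i) : toF K lam i = 0 := by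
  rw [toF]
  have : Finset.univ.filter (fun j' => lam j' = i) = ∅ := by
    ext j'; simp [hne j']
  rw [this, Finset.sum_empty]

lemma supp_toF {k p s : ℕ} {K : Fin p → Fin (k+1)} {lam : Fin p → Fin s}
    (hK1 : ∀ j, 1 ≤ (K j : ℕ)) (hmono : StrictMono lam) :
    supp (toF K lam) = Finset.image lam Finset.univ := by
  ext i
  simp only [supp, Finset.mem_filter, Finset.mem_univ, true_and, Finset.mem_image]
  constructor
  · intro hne
    by_contra hc
    push_neg at hc
    exact hne (toF_eq_zero hc)
  · rintro ⟨j, _, rfl⟩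
    rw [toF_apply_lam hmono]
    exact Nat.one_le_iff_ne_zero.mp (hK1 j)

lemma sum_toF {k p s : ℕ} (K : Fin p → Fin (k+1)) (lam : Fin p → Fin s) :
    ∑ i, toF K lam i = ∑ j, (K j : ℕ) :=
  Finset.sum_fiberwise Finset.univ lam (fun j => (K j : ℕ))

lemma prefix_toF {k p s : ℕ} {K : Fin p → Fin (k+1)} {lam : Fin p → Fin s}
    (hmono : StrictMono lam) (j : Fin p) :
    ∑ i ∈ Finset.Iio (lam j), toF K lam i = ∑ j' ∈ Finset.Iio j, (K j' : ℕ) := by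
  have h1 : ∑ i ∈ Finset.Iio (lam j), toF K lam i
      = ∑ j' ∈ Finset.univ.filter (fun j' => lam j' ∈ Finset.Iio (lam j)), (K j' : ℕ) :=
    Finset.sum_fiberwise_eq_sum_filter Finset.univ (Finset.Iio (lam j)) lam (fun j' => (K j' : ℕ))
  rw [h1]
  congr 1
  ext j'
  simp [hmono.lt_iff_lt]

lemma f_le {s k : ℕ} {f : Fin s → ℕ} (hf : f ∈ Finset.Nat.antidiagonalTuple s k) (i : Fin s) :
    f i ≤ k := by
  rw [Finset.Nat.mem_antidiagonalTuple] at hf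
  rw [← hf]
  exact Finset.single_le_sum (fun j _ => Nat.zero_le _) (Finset.mem_univ i)

lemma image_orderEmbOfFin {s p : ℕ} (S : Finset (Fin s)) (hcard : S.card = p) :
    Finset.image (S.orderEmbOfFin hcard) Finset.univ = S := by
  ext i
  simp only [Finset.mem_image, Finset.mem_univ, true_and]
  constructor
  · rintro ⟨j, rfl⟩; exact Finset.orderEmbOfFin_mem S hcard j
  · intro hi
    have : i ∈ Set.range (S.orderEmbOfFin hcard) := by
      rw [Finset.range_orderEmbOfFin]; exact hi
    obtain ⟨j, hj⟩ := this; exact ⟨j, hj⟩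

lemma Tpoly_eq_T2 {R : Type*} [CommRing R] (y : ℕ → ℤ → R) (n h a : ℤ) (k s : ℕ)
    (hk : 1 ≤ k) : Tpoly (shiftVar y a) n h k s = T2 y n h a k s := by
  rw [Tpoly, T2]
  have hmaps : ∀ f ∈ Finset.Nat.antidiagonalTuple s k, (supp f).card ∈ Finset.Icc 1 k := by
    intro f hf
    have hf' := hf
    rw [Finset.Nat.mem_antidiagonalTuple] at hf'
    rw [Finset.mem_Icc]
    constructor
    · rw [Nat.one_le_iff_ne_zero]
      intro hc
      rw [Finset.card_eq_zero] at hc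
      have hz : ∀ i, f i = 0 := by
        intro i
        by_contra hne
        have : i ∈ supp f := by simp [supp, hne]
        simp [hc] at this
      have : k = 0 := by rw [← hf']; simp [hz]
      omega
    · calc (supp f).card = ∑ _i ∈ supp f, 1 := Finset.card_eq_sum_ones _
        _ ≤ ∑ i ∈ supp f, f i := Finset.sum_le_sum (fun i hi => by
              simp only [supp, Finset.mem_filter] at hi; omega)
        _ = ∑ i, f i := Finset.sum_filter_ne_zero _
        _ = k := hf'
  rw [← Finset.sum_fiberwise_of_maps_to hmaps]
  refine Finset.sum_congr rfl fun p _hp => ?_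
  rw [← Finset.sum_product']
  refine Finset.sum_bij' (fun x _ => toF x.1 x.2)
    (fun f hf => (fun j => (⟨f ((supp f).orderEmbOfFin (Finset.mem_filter.mp hf).2 j),
        Nat.lt_succ_of_le (f_le (Finset.mem_filter.mp hf).1 _)⟩ : Fin (k+1)),
      fun j => (supp f).orderEmbOfFin (Finset.mem_filter.mp hf).2 j))
    ?_ ?_ ?_ ?_ ?_
  · -- forward maps into fiber
    rintro ⟨K, lam⟩ ha
    rw [Finset.mem_product] at ha
    obtain ⟨haK, halam⟩ := ha
    rw [comps, Finset.mem_filter] at haK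
    rw [Finset.mem_filter] at halam
    have hmono : StrictMono lam := fun _ _ hij => halam.2 _ _ hij
    rw [Finset.mem_filter]
    constructor
    · rw [Finset.Nat.mem_antidiagonalTuple]
      rw [sum_toF]
      exact haK.2.2
    · rw [supp_toF haK.2.1 hmono, Finset.card_image_of_injective _ hmono.injective]
      simp
  · -- backward maps into product
    intro f hf
    have hfA := (Finset.mem_filter.mp hf).1
    have hcard := (Finset.mem_filter.mp hf).2
    set e := (supp f).orderEmbOfFin hcard with he
    rw [Finset.mem_product]
    constructor
    · rw [comps, Finset.mem_filter]
      refine ⟨Finset.mem_univ _, fun j => ?_, ?_⟩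
      · have : e j ∈ supp f := Finset.orderEmbOfFin_mem _ _ j
        simp only [supp, Finset.mem_filter] at this
        simpa using Nat.one_le_iff_ne_zero.mpr this.2
      · have h1 : ∑ j, f (e j) = ∑ i ∈ Finset.image e Finset.univ, f i :=
          (Finset.sum_image (fun a _ b _ hab => e.injective hab)).symm
        have h2 : Finset.image e Finset.univ = supp f := image_orderEmbOfFin _ _
        have h3 : ∑ i ∈ supp f, f i = ∑ i, f i := Finset.sum_filter_ne_zero _
        rw [Finset.Nat.mem_antidiagonalTuple] at hfA
        simp only []
        rw [h1, h2, h3, hfA]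
    · rw [Finset.mem_filter]
      exact ⟨Finset.mem_univ _, fun i j hij => e.strictMono hij⟩
  · -- left inverse : backward (forward x) = x
    rintro ⟨K, lam⟩ ha
    rw [Finset.mem_product] at ha
    obtain ⟨haK, halam⟩ := ha
    rw [comps, Finset.mem_filter] at haK
    rw [Finset.mem_filter] at halam
    have hmono : StrictMono lam := fun _ _ hij => halam.2 _ _ hij
    have hmem : ∀ x, lam x ∈ supp (toF K lam) := by
      intro x
      rw [supp_toF haK.2.1 hmono]
      exact Finset.mem_image_of_mem _ (Finset.mem_univ x)
    have key : ∀ pf : (supp (toF K lam)).card = p,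
        ⇑((supp (toF K lam)).orderEmbOfFin pf) = lam := fun pf =>
      (Finset.orderEmbOfFin_unique pf hmem hmono).symm
    rw [Prod.mk.injEq]
    constructor
    · funext j
      apply Fin.ext
      show toF K lam ((supp (toF K lam)).orderEmbOfFin _ j) = (K j : ℕ)
      rw [congrFun (key _) j, toF_apply_lam hmono]
    · funext j
      exact congrFun (key _) j
  · -- right inverse : forward (backward f) = f
    intro f hf
    have hcard := (Finset.mem_filter.mp hf).2
    set e := (supp f).orderEmbOfFin hcard with he
    funext i
    by_cases hi : i ∈ supp f
    · have : i ∈ Finset.image e Finset.univ := by rw [image_orderEmbOfFin]; exact hi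
      rw [Finset.mem_image] at this
      obtain ⟨j0, _, hj0⟩ := this
      have := toF_apply_lam (K := fun j => (⟨f (e j),
          Nat.lt_succ_of_le (f_le (Finset.mem_filter.mp hf).1 _)⟩ : Fin (k+1)))
        (lam := fun j => e j) (fun _ _ hij => e.strictMono hij) j0
      rw [← hj0]
      exact this
    · have hz : f i = 0 := by
        simp only [supp, Finset.mem_filter, Finset.mem_univ, true_and, not_not] at hi
        exact hi
      rw [hz]
      exact toF_eq_zero (fun j hj => hi (hj ▸ Finset.orderEmbOfFin_mem _ _ j))
  · -- values agree
    rintro ⟨K, lam⟩ ha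
    rw [Finset.mem_product] at ha
    obtain ⟨haK, halam⟩ := ha
    rw [comps, Finset.mem_filter] at haK
    rw [Finset.mem_filter] at halam
    have hmono : StrictMono lam := fun _ _ hij => halam.2 _ _ hij
    show ∏ j, shiftVar y a (K j) (((lam j : ℕ) : ℤ) * h + prefSum K j * n)
        = ∏ i : Fin s, if toF K lam i = 0 then 1 else
            y (toF K lam i) (((i : ℕ) : ℤ) * h
              + ((∑ j ∈ Finset.Iio i, toF K lam j : ℕ) : ℤ) * n + a)
    have hstep1 : ∏ i : Fin s, (if toF K lam i = 0 then 1 else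
          y (toF K lam i) (((i : ℕ) : ℤ) * h
            + ((∑ j ∈ Finset.Iio i, toF K lam j : ℕ) : ℤ) * n + a))
        = ∏ i ∈ supp (toF K lam),
            y (toF K lam i) (((i : ℕ) : ℤ) * h
              + ((∑ j ∈ Finset.Iio i, toF K lam j : ℕ) : ℤ) * n + a) := by
      rw [supp, Finset.prod_filter]
      refine Finset.prod_congr rfl fun i _ => ?_
      rw [ite_not]
    rw [hstep1, supp_toF haK.2.1 hmono,
      Finset.prod_image (fun x _ y _ hxy => hmono.injective hxy)]
    refine Finset.prod_congr rfl fun j _ => ?_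
    rw [toF_apply_lam hmono, prefix_toF hmono]
    show y (K j) ((((lam j : ℕ) : ℤ) * h + prefSum K j * n) + a) = _
    congr 1
    rw [prefSum]
    push_cast
    ring

/-- `T^k_s = T^{k,h}_{s-1} + Σ_{j=1}^{k-1} y^j_0 T^{k-j, h+jn}_{s-1} + y^k_0`. -/
theorem Tpoly_rec_shift {R : Type*} [CommRing R] (y : ℕ → ℤ → R) (n h : ℤ)
    (hn : 1 ≤ n) (hh : 1 ≤ h) (k s : ℕ) (hk : 1 ≤ k) (hs : 2 ≤ s) :
    Tpoly y n h k s =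
      Tpoly (shiftVar y h) n h k (s - 1) +
        (∑ j ∈ Finset.Ico 1 k, y j 0 * Tpoly (shiftVar y (h + (j : ℤ) * n)) n h (k - j) (s - 1)) +
        y k 0 := by
  obtain ⟨t, rfl⟩ : ∃ t, s = t + 1 := ⟨s - 1, by omega⟩
  have hy0 : shiftVar y 0 = y := by funext r j; simp [shiftVar]
  have hsub : t + 1 - 1 = t := by omega
  rw [hsub]
  have e0 : Tpoly y n h k (t+1) = T2 y n h 0 k (t+1) := by
    rw [← Tpoly_eq_T2 y n h 0 k (t+1) hk, hy0]
  rw [e0, T2_eq_Trec, Trec]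
  have hIcc : Finset.Icc 1 k = Finset.Ico 1 (k+1) := (Finset.Ico_add_one_right_eq_Icc 1 k).symm
  rw [hIcc, Finset.sum_Ico_succ_top hk, Nat.sub_self, Trec_zero, mul_one, ← add_assoc]
  congr 1
  congr 1
  · rw [zero_add, ← T2_eq_Trec, ← Tpoly_eq_T2 y n h h k t hk]
  · refine Finset.sum_congr rfl fun c hc => ?_
    rw [Finset.mem_Ico] at hc
    have hkc : 1 ≤ k - c := by omega
    rw [← T2_eq_Trec, ← Tpoly_eq_T2 y n h _ (k-c) t hkc, zero_add]
end

section
/- The polynomials S^k_s satisfy the recurrence S^{k,h}_{s-1} = S^k_s + Σ_{j=1}^{k-1} (-1)^j y^j_{(k-j)n} · S^{k-j}_s + (-1)^k y^k_0 for all k ≥ 1 and s ≥ 2. -/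
open Finset

namespace SpolyAux

variable {R : Type*} [CommRing R]

/-- the term of `Spoly`, with the composition given as a ℕ-valued function. -/
def termN (y : ℕ → ℤ → R) (n h : ℤ) {p s : ℕ} (c : Fin p → ℕ) (lam : Fin p → Fin s) : R :=
  ∏ i, y (c i) (((lam i : ℕ) : ℤ) * h + ((∑ j ∈ Ioi i, c j : ℕ) : ℤ) * n)

/-- monotone lambda tuples -/
def mset (p s : ℕ) : Finset (Fin p → Fin s) :=
  Finset.univ.filter (fun lam : Fin p → Fin s => ∀ i j, i ≤ j → lam i ≤ lam j)

/-- compositions of `m` living in `Fin p → Fin (k+1)` -/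
def compsIn (k p m : ℕ) : Finset (Fin p → Fin (k + 1)) :=
  Finset.univ.filter fun K => (∀ i, 1 ≤ (K i : ℕ)) ∧ (∑ i, (K i : ℕ)) = m

lemma comps_eq_compsIn (m p : ℕ) : comps m p = compsIn m p m := rfl

lemma term_eq_termN (y : ℕ → ℤ → R) (n h : ℤ) {k p s : ℕ} (K : Fin p → Fin (k + 1))
    (lam : Fin p → Fin s) :
    (∏ i, y ((K i : ℕ)) (((lam i : ℕ) : ℤ) * h + sufSum K i * n))
      = termN y n h (fun i => (K i : ℕ)) lam := by
  unfold termN sufSum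
  refine Finset.prod_congr rfl fun i _ => ?_
  push_cast
  ring_nf

lemma Spoly_eq (y : ℕ → ℤ → R) (n h : ℤ) (k s : ℕ) :
    Spoly y n h k s = (-1) ^ k * ∑ p ∈ Finset.Icc 1 k, (-1) ^ p *
      ∑ K ∈ comps k p, ∑ lam ∈ mset p s, termN y n h (fun i => (K i : ℕ)) lam := by
  unfold Spoly mset
  congr 1
  refine Finset.sum_congr rfl fun p _ => ?_
  congr 1
  exact Finset.sum_congr rfl fun K _ =>
    Finset.sum_congr rfl fun lam _ => term_eq_termN y n h K lam



lemma shift_step (y : ℕ → ℤ → R) (n h : ℤ) {p s : ℕ} (hs : 2 ≤ s) (c : Fin p → ℕ) :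
    ∑ lam ∈ mset p (s - 1), termN (shiftVar y h) n h c lam
      = ∑ lam ∈ (mset p s).filter (fun lam => ∀ i, 0 < (lam i : ℕ)),
          termN y n h c lam := by
  refine Finset.sum_nbij'
    (fun lam x => (⟨(lam x : ℕ) + 1, by have := (lam x).isLt; omega⟩ : Fin s))
    (fun lam x => (⟨(lam x : ℕ) - 1, by have := (lam x).isLt; omega⟩ : Fin (s - 1)))
    ?_ ?_ ?_ ?_ ?_
  · intro lam hlam
    simp only [mset, mem_filter, mem_univ, true_and] at hlam ⊢
    refine ⟨fun i j hij => ?_, fun i => by simp⟩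
    have := hlam i j hij
    simp only [Fin.le_def] at this ⊢
    omega
  · intro lam hlam
    simp only [mset, mem_filter, mem_univ, true_and] at hlam ⊢
    intro i j hij
    have := hlam.1 i j hij
    simp only [Fin.le_def] at this ⊢
    omega
  · intro lam _
    funext x; ext; simp
  · intro lam hlam
    simp only [mset, mem_filter, mem_univ, true_and] at hlam
    funext x; ext
    have := hlam.2 x
    simp only [Fin.val_mk]
    omega
  · intro lam _
    unfold termN shiftVar
    refine Finset.prod_congr rfl fun i _ => ?_
    have : ((((⟨(lam i : ℕ) + 1, by have := (lam i).isLt; omega⟩ : Fin s) : ℕ)) : ℤ)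
        = ((lam i : ℕ) : ℤ) + 1 := by push_cast; ring
    rw [this]
    ring_nf

lemma conslam_eq {p s : ℕ} (hs : 0 < s)
    (lam : Fin (p + 1) → Fin s)
    (hmono : ∀ i j, i ≤ j → lam i ≤ lam j) (hnp : ¬ ∀ i, 0 < (lam i : ℕ)) :
    Fin.cons ⟨0, hs⟩ (lam ∘ Fin.succ) = lam := by
  push_neg at hnp
  obtain ⟨i0, hi0⟩ := hnp
  have h0 : (lam 0 : ℕ) = 0 := by
    have := hmono 0 i0 (Fin.zero_le _)
    simp only [Fin.le_def] at this
    omega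
  funext x
  induction x using Fin.cases with
  | zero => simp only [Fin.cons_zero]; ext; simp [h0]
  | succ x' => simp [Fin.cons_succ]

lemma conslam_step {p s : ℕ} (hs : 0 < s) (F : (Fin (p + 1) → Fin s) → R) :
    ∑ lam ∈ (mset (p + 1) s).filter (fun lam => ¬ ∀ i, 0 < (lam i : ℕ)), F lam
      = ∑ lam ∈ mset p s, F (Fin.cons ⟨0, hs⟩ lam) := by
  refine Finset.sum_nbij' (fun lam => lam ∘ Fin.succ) (fun lam => Fin.cons ⟨0, hs⟩ lam)
    ?_ ?_ ?_ ?_ ?_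
  · intro lam hlam
    simp only [mset, mem_filter, mem_univ, true_and] at hlam ⊢
    intro i j hij
    exact hlam.1 i.succ j.succ (by simpa using hij)
  · intro lam hlam
    simp only [mset, mem_filter, mem_univ, true_and] at hlam ⊢
    constructor
    · intro i j hij
      induction i using Fin.cases with
      | zero =>
        simp only [Fin.cons_zero, Fin.le_def]
        exact Nat.zero_le _
      | succ i' =>
        induction j using Fin.cases with
        | zero =>
          have : (i'.succ : ℕ) ≤ 0 := hij
          simp at this
        | succ j' =>
          simp only [Fin.cons_succ]
          exact hlam i' j' (by simpa using hij)
    · push_neg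
      exact ⟨0, by simp⟩
  · intro lam hlam
    simp only [mset, mem_filter, mem_univ, true_and] at hlam
    exact conslam_eq hs lam hlam.1 hlam.2
  · intro lam _
    funext x; simp [Fin.cons_succ]
  · intro lam hlam
    simp only [mset, mem_filter, mem_univ, true_and] at hlam
    rw [conslam_eq hs lam hlam.1 hlam.2]



lemma termN_cons (y : ℕ → ℤ → R) (n h : ℤ) {p s : ℕ} (hs : 0 < s) (j m : ℕ)
    (c : Fin p → ℕ) (hc : ∑ i, c i = m) (lam : Fin p → Fin s) :
    termN y n h (Fin.cons j c) (Fin.cons ⟨0, hs⟩ lam)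
      = y j ((m : ℤ) * n) * termN y n h c lam := by
  unfold termN
  rw [Fin.prod_univ_succ]
  congr 1
  · have h1 : ∑ l ∈ Ioi (0 : Fin (p + 1)), Fin.cons j c l = m := by
      rw [Fin.sum_Ioi_zero]
      simpa [Fin.cons_succ] using hc
    rw [h1]
    norm_num
  · refine Finset.prod_congr rfl fun i _ => ?_
    rw [Fin.sum_Ioi_succ]
    simp [Fin.cons_succ]

lemma compsIn_bound {k p m : ℕ} (K : Fin p → Fin (k + 1)) (hK : K ∈ compsIn k p m)
    (x : Fin p) : (K x : ℕ) ≤ m := by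
  simp only [compsIn, mem_filter, mem_univ, true_and] at hK
  exact hK.2 ▸ Finset.single_le_sum (f := fun i => ((K i : ℕ)))
    (fun _ _ => Nat.zero_le _) (mem_univ x)

lemma recast {k k' p m : ℕ} (hm : m ≤ k) (hm' : m ≤ k') (F : (Fin p → ℕ) → R) :
    ∑ K ∈ compsIn k p m, F (fun i => (K i : ℕ))
      = ∑ K ∈ compsIn k' p m, F (fun i => (K i : ℕ)) := by
  refine Finset.sum_nbij'
    (fun K x => (⟨min (K x : ℕ) m, by omega⟩ : Fin (k' + 1)))
    (fun K x => (⟨min (K x : ℕ) m, by omega⟩ : Fin (k + 1))) ?_ ?_ ?_ ?_ ?_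
  · intro K hK
    have hb := compsIn_bound K hK
    simp only [compsIn, mem_filter, mem_univ, true_and] at hK ⊢
    constructor
    · intro i; have := hK.1 i; have := hb i; first | omega | (simp only [Fin.val_mk]; omega)
    · rw [← hK.2]
      exact Finset.sum_congr rfl fun i _ => by have := hb i; first | omega | (simp only [Fin.val_mk]; omega)
  · intro K hK
    have hb := compsIn_bound K hK
    simp only [compsIn, mem_filter, mem_univ, true_and] at hK ⊢
    constructor
    · intro i; have := hK.1 i; have := hb i; first | omega | (simp only [Fin.val_mk]; omega)
    · rw [← hK.2]
      exact Finset.sum_congr rfl fun i _ => by have := hb i; first | omega | (simp only [Fin.val_mk]; omega)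
  · intro K hK
    have hb := compsIn_bound K hK
    funext x; ext
    have := hb x
    simp only [Fin.val_mk]
    omega
  · intro K hK
    have hb := compsIn_bound K hK
    funext x; ext
    have := hb x
    simp only [Fin.val_mk]
    omega
  · intro K hK
    have hb := compsIn_bound K hK
    congr 1
    funext x
    have := hb x
    simp only [Fin.val_mk]
    omega

lemma consK_step {k p : ℕ} (hp : 1 ≤ p) (hk : 1 ≤ k) (F : (Fin (p + 1) → ℕ) → R) :
    ∑ K ∈ comps k (p + 1), F (fun i => (K i : ℕ))
      = ∑ j ∈ Finset.Ico 1 k, ∑ K' ∈ compsIn k p (k - j),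
          F (Fin.cons j (fun i => (K' i : ℕ))) := by
  rw [Finset.sum_sigma']
  refine Finset.sum_nbij'
    (fun K => (⟨(K 0 : ℕ), fun i => K i.succ⟩ : Σ j : ℕ, Fin p → Fin (k + 1)))
    (fun x => Fin.cons ⟨min x.1 k, by omega⟩ x.2) ?_ ?_ ?_ ?_ ?_
  · intro K hK
    simp only [comps, mem_filter, mem_univ, true_and] at hK
    obtain ⟨h1, h2⟩ := hK
    rw [Fin.sum_univ_succ] at h2
    have htail : (p : ℕ) ≤ ∑ i : Fin p, (K i.succ : ℕ) := by
      calc (p : ℕ) = ∑ _i : Fin p, 1 := by simp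
      _ ≤ _ := Finset.sum_le_sum fun i _ => h1 i.succ
    simp only [mem_sigma, mem_Ico, compsIn, mem_filter, mem_univ, true_and]
    refine ⟨⟨h1 0, by omega⟩, fun i => h1 i.succ, by omega⟩
  · intro x hx
    simp only [mem_sigma, mem_Ico, compsIn, mem_filter, mem_univ, true_and] at hx
    obtain ⟨⟨hx1, hx2⟩, hx3, hx4⟩ := hx
    simp only [comps, mem_filter, mem_univ, true_and]
    constructor
    · intro i
      induction i using Fin.cases with
      | zero => simp only [Fin.cons_zero]; omega
      | succ i' => simp only [Fin.cons_succ]; exact hx3 i'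
    · rw [Fin.sum_univ_succ]
      simp only [Fin.cons_zero, Fin.cons_succ]
      omega
  · intro K hK
    funext x
    induction x using Fin.cases with
    | zero =>
      simp only [Fin.cons_zero]
      ext
      have := (K 0).isLt
      simp only [Fin.val_mk]
      omega
    | succ x' => simp [Fin.cons_succ]
  · intro x hx
    simp only [mem_sigma, mem_Ico] at hx
    obtain ⟨j, K'⟩ := x
    simp only at hx
    have hj : min j k = j := by omega
    simp only [Fin.cons_zero, Fin.cons_succ, hj]
  · intro K hK
    congr 1
    funext x
    induction x using Fin.cases with
    | zero => simp [Fin.cons_zero]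
    | succ x' => simp [Fin.cons_succ]



lemma comps_eq_empty {k p : ℕ} (hkp : k < p) : comps k p = ∅ := by
  ext K
  simp only [comps, mem_filter, mem_univ, true_and, Finset.notMem_empty, iff_false, not_and]
  intro h1 h2
  have : (p : ℕ) ≤ ∑ i, (K i : ℕ) := by
    calc (p : ℕ) = ∑ _i : Fin p, 1 := by simp
    _ ≤ _ := Finset.sum_le_sum fun i _ => h1 i
  omega

lemma p_one (y : ℕ → ℤ → R) (n h : ℤ) {k s : ℕ} (hk : 1 ≤ k) (hs : 2 ≤ s) :
    ∑ K ∈ comps k 1, ∑ lam ∈ (mset 1 s).filter (fun lam => ¬ ∀ i, 0 < (lam i : ℕ)),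
      termN y n h (fun i => (K i : ℕ)) lam = y k 0 := by
  have hs0 : 0 < s := by omega
  have h1 : comps k 1 = {fun _ => ⟨k, Nat.lt_succ_self k⟩} := by
    ext K
    simp only [comps, mem_filter, mem_univ, true_and, mem_singleton]
    constructor
    · rintro ⟨_, h2⟩
      funext i
      have hi : i = 0 := Subsingleton.elim _ _
      subst hi
      ext
      simpa using h2
    · rintro rfl
      exact ⟨fun i => by simpa using hk, by simp⟩
  have h2 : (mset 1 s).filter (fun lam => ¬ ∀ i, 0 < ((lam i : ℕ)))
      = {fun _ => (⟨0, hs0⟩ : Fin s)} := by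
    ext lam
    simp only [mset, mem_filter, mem_univ, true_and, mem_singleton]
    constructor
    · rintro ⟨_, hnp⟩
      push_neg at hnp
      obtain ⟨i, hi⟩ := hnp
      funext x
      have hx : x = i := Subsingleton.elim _ _
      subst hx
      ext
      simpa using hi
    · rintro rfl
      refine ⟨fun i j hij => by rw [Subsingleton.elim i j], ?_⟩
      push_neg
      exact ⟨0, by simp⟩
  rw [h1, h2]
  simp only [Finset.sum_singleton]
  unfold termN
  rw [Fin.prod_univ_one]
  have h3 : ∑ j ∈ Ioi (0 : Fin 1), (fun _ => k) j = 0 := by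
    have : (Ioi (0 : Fin 1)) = ∅ := by
      ext x
      simp only [mem_Ioi, Finset.notMem_empty, iff_false]
      intro hx
      exact absurd (Subsingleton.elim (0 : Fin 1) x) (by intro hh; rw [← hh] at hx; exact lt_irrefl _ hx)
    rw [this]
    simp
  simp only [Fin.val_mk] at h3 ⊢
  rw [h3]
  norm_num

lemma split_one {k : ℕ} (hk : 1 ≤ k) (f : ℕ → R) :
    ∑ p ∈ Finset.Icc 1 k, f p = f 1 + ∑ p ∈ Finset.Icc 2 k, f p := by
  rw [Finset.Icc_eq_cons_Ioc hk, Finset.sum_cons]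
  congr 1

lemma reindex_p {k : ℕ} (f : ℕ → R) :
    ∑ p ∈ Finset.Icc 2 k, f p = ∑ p ∈ Finset.Icc 1 (k - 1), f (p + 1) := by
  refine Finset.sum_nbij' (fun p => p - 1) (fun p => p + 1) ?_ ?_ ?_ ?_ ?_ <;>
      intro a ha <;> simp only [mem_Icc] at ha ⊢ <;> try omega
  congr 1
  omega

lemma step_p (y : ℕ → ℤ → R) (n h : ℤ) {k s : ℕ} (hk : 1 ≤ k) (hs0 : 0 < s)
    {p : ℕ} (hp : 1 ≤ p) :
    (∑ K ∈ comps k (p + 1),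
        ∑ lam ∈ (mset (p + 1) s).filter (fun lam => ¬ ∀ i, 0 < (lam i : ℕ)),
          termN y n h (fun i => (K i : ℕ)) lam)
      = ∑ j ∈ Finset.Ico 1 k, y j (((k - j : ℕ) : ℤ) * n) *
          ∑ K' ∈ comps (k - j) p, ∑ lam ∈ mset p s,
            termN y n h (fun i => (K' i : ℕ)) lam := by
  calc (∑ K ∈ comps k (p + 1),
        ∑ lam ∈ (mset (p + 1) s).filter (fun lam => ¬ ∀ i, 0 < (lam i : ℕ)),
          termN y n h (fun i => (K i : ℕ)) lam)
      = ∑ K ∈ comps k (p + 1), ∑ lam ∈ mset p s,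
          termN y n h (fun i => (K i : ℕ)) (Fin.cons ⟨0, hs0⟩ lam) :=
        Finset.sum_congr rfl fun K _ => conslam_step hs0 _
    _ = ∑ j ∈ Finset.Ico 1 k, ∑ K' ∈ compsIn k p (k - j), ∑ lam ∈ mset p s,
          termN y n h (Fin.cons j (fun i => (K' i : ℕ))) (Fin.cons ⟨0, hs0⟩ lam) :=
        consK_step hp hk (fun c => ∑ lam ∈ mset p s, termN y n h c (Fin.cons ⟨0, hs0⟩ lam))
    _ = ∑ j ∈ Finset.Ico 1 k, ∑ K' ∈ compsIn k p (k - j), ∑ lam ∈ mset p s,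
          y j (((k - j : ℕ) : ℤ) * n) * termN y n h (fun i => (K' i : ℕ)) lam := by
        refine Finset.sum_congr rfl fun j hj => Finset.sum_congr rfl fun K' hK' =>
          Finset.sum_congr rfl fun lam _ => ?_
        have hc : ∑ i, (fun i => (K' i : ℕ)) i = k - j := by
          simp only [compsIn, mem_filter, mem_univ, true_and] at hK'
          exact hK'.2
        exact termN_cons y n h hs0 j (k - j) _ hc lam
    _ = ∑ j ∈ Finset.Ico 1 k, ∑ K' ∈ comps (k - j) p, ∑ lam ∈ mset p s,
          y j (((k - j : ℕ) : ℤ) * n) * termN y n h (fun i => (K' i : ℕ)) lam := by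
        refine Finset.sum_congr rfl fun j hj => ?_
        rw [comps_eq_compsIn]
        exact recast (Nat.sub_le k j) (le_refl _)
          (fun c => ∑ lam ∈ mset p s, y j (((k - j : ℕ) : ℤ) * n) * termN y n h c lam)
    _ = ∑ j ∈ Finset.Ico 1 k, y j (((k - j : ℕ) : ℤ) * n) *
          ∑ K' ∈ comps (k - j) p, ∑ lam ∈ mset p s,
            termN y n h (fun i => (K' i : ℕ)) lam := by
        refine Finset.sum_congr rfl fun j _ => ?_
        rw [Finset.mul_sum]
        exact Finset.sum_congr rfl fun K' _ => (Finset.mul_sum _ _ _).symm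

lemma trunc_spoly (y : ℕ → ℤ → R) (n h : ℤ) {k s : ℕ} {j : ℕ} (hj1 : 1 ≤ j) (hj2 : j < k) :
    ∑ p ∈ Finset.Icc 1 (k - 1), (-1 : R) ^ p *
        (∑ K ∈ comps (k - j) p, ∑ lam ∈ mset p s, termN y n h (fun i => (K i : ℕ)) lam)
      = (-1 : R) ^ (k - j) * Spoly y n h (k - j) s := by
  have hsub : Finset.Icc 1 (k - j) ⊆ Finset.Icc 1 (k - 1) := by
    intro x hx
    simp only [mem_Icc] at hx ⊢
    omega
  rw [← Finset.sum_subset hsub (fun x hx1 hx2 => ?_)]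
  · rw [Spoly_eq y n h (k - j) s, ← mul_assoc]
    have hsq : (-1 : R) ^ (k - j) * (-1) ^ (k - j) = 1 := by
      rw [← mul_pow]
      norm_num
    rw [hsq, one_mul]
  · have he : comps (k - j) x = ∅ := by
      refine comps_eq_empty ?_
      simp only [mem_Icc] at hx1 hx2
      omega
    rw [he]
    simp



lemma key3 (y : ℕ → ℤ → R) (n h : ℤ) {k s : ℕ} (hk : 1 ≤ k) (hs : 2 ≤ s) :
    ∑ p ∈ Finset.Icc 1 k, (-1 : R) ^ p *
        (∑ K ∈ comps k p,
          ∑ lam ∈ (mset p s).filter (fun lam => ¬ ∀ i, 0 < (lam i : ℕ)),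
            termN y n h (fun i => (K i : ℕ)) lam)
      = - y k 0 - ∑ j ∈ Finset.Ico 1 k,
          (-1 : R) ^ (k - j) * (y j (((k - j : ℕ) : ℤ) * n) * Spoly y n h (k - j) s) := by
  have hs0 : 0 < s := by omega
  rw [split_one hk]
  rw [reindex_p (f := fun p => (-1 : R) ^ p *
        (∑ K ∈ comps k p,
          ∑ lam ∈ (mset p s).filter (fun lam => ¬ ∀ i, 0 < (lam i : ℕ)),
            termN y n h (fun i => (K i : ℕ)) lam))]
  have h1 : (-1 : R) ^ 1 *
      (∑ K ∈ comps k 1,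
        ∑ lam ∈ (mset 1 s).filter (fun lam => ¬ ∀ i, 0 < (lam i : ℕ)),
          termN y n h (fun i => (K i : ℕ)) lam) = - y k 0 := by
    rw [p_one y n h hk hs]
    ring
  rw [h1]
  have h2 : ∀ p' ∈ Finset.Icc 1 (k - 1),
      (-1 : R) ^ (p' + 1) *
          (∑ K ∈ comps k (p' + 1),
            ∑ lam ∈ (mset (p' + 1) s).filter (fun lam => ¬ ∀ i, 0 < (lam i : ℕ)),
              termN y n h (fun i => (K i : ℕ)) lam)
        = ∑ j ∈ Finset.Ico 1 k, -((-1 : R) ^ p' *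
            (y j (((k - j : ℕ) : ℤ) * n) *
              ∑ K' ∈ comps (k - j) p', ∑ lam ∈ mset p' s,
                termN y n h (fun i => (K' i : ℕ)) lam)) := by
    intro p' hp'
    rw [step_p y n h hk hs0 (mem_Icc.mp hp').1, Finset.mul_sum]
    exact Finset.sum_congr rfl fun j _ => by ring
  rw [Finset.sum_congr rfl h2, Finset.sum_comm]
  have h3 : ∀ j ∈ Finset.Ico 1 k,
      (∑ p' ∈ Finset.Icc 1 (k - 1), -((-1 : R) ^ p' *
          (y j (((k - j : ℕ) : ℤ) * n) *
            ∑ K' ∈ comps (k - j) p', ∑ lam ∈ mset p' s,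
              termN y n h (fun i => (K' i : ℕ)) lam)))
        = -((-1 : R) ^ (k - j) * (y j (((k - j : ℕ) : ℤ) * n) * Spoly y n h (k - j) s)) := by
    intro j hj
    simp only [mem_Ico] at hj
    rw [Finset.sum_neg_distrib]
    congr 1
    calc (∑ p' ∈ Finset.Icc 1 (k - 1), (-1 : R) ^ p' *
            (y j (((k - j : ℕ) : ℤ) * n) *
              ∑ K' ∈ comps (k - j) p', ∑ lam ∈ mset p' s,
                termN y n h (fun i => (K' i : ℕ)) lam))
        = y j (((k - j : ℕ) : ℤ) * n) * ∑ p' ∈ Finset.Icc 1 (k - 1), (-1 : R) ^ p' *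
            (∑ K' ∈ comps (k - j) p', ∑ lam ∈ mset p' s,
              termN y n h (fun i => (K' i : ℕ)) lam) := by
          rw [Finset.mul_sum]
          exact Finset.sum_congr rfl fun p' _ => by ring
      _ = y j (((k - j : ℕ) : ℤ) * n) * ((-1 : R) ^ (k - j) * Spoly y n h (k - j) s) := by
          rw [trunc_spoly y n h hj.1 hj.2]
      _ = (-1 : R) ^ (k - j) * (y j (((k - j : ℕ) : ℤ) * n) * Spoly y n h (k - j) s) := by
          ring
  rw [Finset.sum_congr rfl h3, Finset.sum_neg_distrib]
  ring

end SpolyAux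


/-- `S^{k,h}_{s-1} = S^k_s + Σ_{j=1}^{k-1} (-1)^j y^j_{(k-j)n} S^{k-j}_s + (-1)^k y^k_0`. -/
theorem Spoly_rec_shift {R : Type*} [CommRing R] (y : ℕ → ℤ → R) (n h : ℤ)
    (hn : 1 ≤ n) (hh : 1 ≤ h) (k s : ℕ) (hk : 1 ≤ k) (hs : 2 ≤ s) :
    Spoly (shiftVar y h) n h k (s - 1) =
      Spoly y n h k s +
        (∑ j ∈ Finset.Ico 1 k,
          (-1 : R) ^ j * y j (((k - j : ℕ) : ℤ) * n) * Spoly y n h (k - j) s) +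
        (-1 : R) ^ k * y k 0 := by
  have hs0 : 0 < s := by omega
  rw [SpolyAux.Spoly_eq (shiftVar y h) n h k (s - 1), SpolyAux.Spoly_eq y n h k s]
  have hL : ∀ p ∈ Finset.Icc 1 k,
      (-1 : R) ^ p * ∑ K ∈ comps k p, ∑ lam ∈ SpolyAux.mset p (s - 1),
          SpolyAux.termN (shiftVar y h) n h (fun i => (K i : ℕ)) lam
        = (-1 : R) ^ p * ∑ K ∈ comps k p,
            ∑ lam ∈ (SpolyAux.mset p s).filter (fun lam => ∀ i, 0 < (lam i : ℕ)),
              SpolyAux.termN y n h (fun i => (K i : ℕ)) lam := by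
    intro p _
    congr 1
    exact Finset.sum_congr rfl fun K _ => SpolyAux.shift_step y n h hs (fun i => (K i : ℕ))
  rw [Finset.sum_congr rfl hL]
  have hR : ∀ p ∈ Finset.Icc 1 k,
      (-1 : R) ^ p * ∑ K ∈ comps k p, ∑ lam ∈ SpolyAux.mset p s,
          SpolyAux.termN y n h (fun i => (K i : ℕ)) lam
        = ((-1 : R) ^ p * ∑ K ∈ comps k p,
            ∑ lam ∈ (SpolyAux.mset p s).filter (fun lam => ∀ i, 0 < (lam i : ℕ)),
              SpolyAux.termN y n h (fun i => (K i : ℕ)) lam)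
          + ((-1 : R) ^ p * (∑ K ∈ comps k p,
              ∑ lam ∈ (SpolyAux.mset p s).filter (fun lam => ¬ ∀ i, 0 < (lam i : ℕ)),
                SpolyAux.termN y n h (fun i => (K i : ℕ)) lam)) := by
    intro p _
    rw [← mul_add]
    congr 1
    rw [← Finset.sum_add_distrib]
    exact Finset.sum_congr rfl fun K _ =>
      (Finset.sum_filter_add_sum_filter_not (SpolyAux.mset p s) _ _).symm
  rw [Finset.sum_congr rfl hR, Finset.sum_add_distrib, SpolyAux.key3 y n h hk hs]
  have hsign : ∀ j ∈ Finset.Ico 1 k,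
      (-1 : R) ^ k * ((-1 : R) ^ (k - j) *
          (y j (((k - j : ℕ) : ℤ) * n) * Spoly y n h (k - j) s))
        = (-1 : R) ^ j * y j (((k - j : ℕ) : ℤ) * n) * Spoly y n h (k - j) s := by
    intro j hj
    simp only [mem_Ico] at hj
    have e : (-1 : R) ^ k * (-1 : R) ^ (k - j) = (-1 : R) ^ j := by
      rw [← pow_add]
      have e2 : k + (k - j) = 2 * (k - j) + j := by omega
      rw [e2, pow_add, pow_mul]
      norm_num
    calc (-1 : R) ^ k * ((-1 : R) ^ (k - j) *
            (y j (((k - j : ℕ) : ℤ) * n) * Spoly y n h (k - j) s))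
        = ((-1 : R) ^ k * (-1 : R) ^ (k - j)) *
            (y j (((k - j : ℕ) : ℤ) * n) * Spoly y n h (k - j) s) := by ring
      _ = (-1 : R) ^ j * y j (((k - j : ℕ) : ℤ) * n) * Spoly y n h (k - j) s := by
          rw [e]; ring
  have hU : (∑ j ∈ Finset.Ico 1 k,
        (-1 : R) ^ j * y j (((k - j : ℕ) : ℤ) * n) * Spoly y n h (k - j) s)
      = (-1 : R) ^ k * ∑ j ∈ Finset.Ico 1 k,
          (-1 : R) ^ (k - j) * (y j (((k - j : ℕ) : ℤ) * n) * Spoly y n h (k - j) s) := by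
    rw [Finset.mul_sum]
    exact Finset.sum_congr rfl fun j hj => (hsign j hj).symm
  rw [hU]
  ring
end

section
/- For every k ≥ 1 and s ≥ 1 the identity S^k_s + Σ_{j=1}^{k-1} (-1)^j T^j_s · S^{k-j, jn}_s + (-1)^k T^k_s = 0 holds, i.e. the lower-triangular matrices built from the shifted polynomials T^j_s and (-1)^j S^j_s are mutually inverse. -/
open Finset

def compsNat (k p : ℕ) : Finset (Fin p → ℕ) :=
  (Fintype.piFinset fun _ => Finset.range (k+1)).filter
    fun c => (∀ i, 1 ≤ c i) ∧ (∑ i, c i) = k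

lemma mem_compsNat {k p : ℕ} {c : Fin p → ℕ} :
    c ∈ compsNat k p ↔ (∀ i, 1 ≤ c i) ∧ (∑ i, c i) = k := by
  simp only [compsNat, mem_filter, Fintype.mem_piFinset, mem_range]
  constructor
  · tauto
  · intro hc
    refine ⟨fun i => ?_, hc⟩
    have : c i ≤ ∑ j, c j := Finset.single_le_sum (f := c) (fun j _ => Nat.zero_le _) (mem_univ i)
    omega

lemma compsNat_le {k p : ℕ} {c : Fin p → ℕ} (hc : c ∈ compsNat k p) (i : Fin p) : c i ≤ k := by
  rw [mem_compsNat] at hc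
  have : c i ≤ ∑ j, c j := Finset.single_le_sum (f := c) (fun j _ => Nat.zero_le _) (mem_univ i)
  omega

def pref {p : ℕ} (c : Fin p → ℕ) (i : Fin p) : ℤ := ∑ j ∈ Finset.Iio i, (c j : ℤ)
def suf {p : ℕ} (c : Fin p → ℕ) (i : Fin p) : ℤ := ∑ j ∈ Finset.Ioi i, (c j : ℤ)

def sfin (p s : ℕ) : Finset (Fin p → Fin s) :=
  Finset.univ.filter fun lam => ∀ i j, i < j → lam i < lam j
def wfin (p s : ℕ) : Finset (Fin p → Fin s) :=
  Finset.univ.filter fun lam => ∀ i j, i ≤ j → lam i ≤ lam j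

section Ring
variable {R : Type*} [CommRing R]

lemma sum_comps_eq {k p : ℕ} (F : (Fin p → ℕ) → R) :
    ∑ K ∈ comps k p, F (fun i => (K i : ℕ)) = ∑ c ∈ compsNat k p, F c := by
  refine Finset.sum_bij' (fun K _ => fun i => ((K i : ℕ)))
    (fun c hc => fun i => (⟨c i, Nat.lt_succ_of_le (compsNat_le hc i)⟩ : Fin (k+1)))
    ?_ ?_ ?_ ?_ ?_
  · intro K hK
    simp only [comps, mem_filter, mem_univ, true_and] at hK
    exact mem_compsNat.2 hK
  · intro c hc
    rw [mem_compsNat] at hc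
    simp only [comps, mem_filter, mem_univ, true_and]
    exact hc
  · intro K hK; funext i; rfl
  · intro c hc; funext i; rfl
  · intro K hK; rfl

lemma sum_Icc_one_eq_range {k : ℕ} (f : ℕ → R) :
    ∑ p ∈ Finset.Icc 1 k, f p = ∑ q ∈ Finset.range k, f (q+1) := by
  refine Finset.sum_nbij' (fun p => p - 1) (fun q => q + 1) ?_ ?_ ?_ ?_ ?_ <;>
    simp only [mem_Icc, mem_range]
  · intros; omega
  · intros; omega
  · intro a ha; omega
  · intro a ha; rfl
  · intro a ha; rw [Nat.sub_add_cancel ha.1]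

lemma Tpoly_eq (y : ℕ → ℤ → R) (n h : ℤ) (k s : ℕ) :
    Tpoly y n h k s = ∑ q ∈ Finset.range k, ∑ c ∈ compsNat k (q+1),
      ∑ lam ∈ sfin (q+1) s, ∏ i, y (c i) (((lam i : ℕ) : ℤ) * h + pref c i * n) := by
  rw [Tpoly, sum_Icc_one_eq_range]
  refine Finset.sum_congr rfl fun q _ => ?_
  rw [← sum_comps_eq (fun c => ∑ lam ∈ sfin (q+1) s, ∏ i, y (c i) (((lam i : ℕ) : ℤ) * h + pref c i * n))]
  rfl

lemma Spoly_eq (y : ℕ → ℤ → R) (n h : ℤ) (k s : ℕ) :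
    Spoly y n h k s = (-1) ^ k * ∑ q ∈ Finset.range k, (-1) ^ (q+1) *
      ∑ c ∈ compsNat k (q+1),
      ∑ lam ∈ wfin (q+1) s, ∏ i, y (c i) (((lam i : ℕ) : ℤ) * h + suf c i * n) := by
  rw [Spoly, sum_Icc_one_eq_range]
  refine congrArg _ (Finset.sum_congr rfl fun q _ => congrArg _ ?_)
  rw [← sum_comps_eq (fun c => ∑ lam ∈ wfin (q+1) s, ∏ i, y (c i) (((lam i : ℕ) : ℤ) * h + suf c i * n))]
  rfl

end Ring

section Helpers

lemma mem_sfin {p s : ℕ} {lam : Fin p → Fin s} :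
    lam ∈ sfin p s ↔ ∀ i j, i < j → lam i < lam j := by simp [sfin]

lemma mem_wfin {p s : ℕ} {lam : Fin p → Fin s} :
    lam ∈ wfin p s ↔ ∀ i j, i ≤ j → lam i ≤ lam j := by simp [wfin]

lemma compsNat_eq_empty {m q : ℕ} (hmq : m < q) : compsNat m q = ∅ := by
  rw [Finset.eq_empty_iff_forall_notMem]
  intro c hc
  rw [mem_compsNat] at hc
  have h1 : (Finset.univ : Finset (Fin q)).card • 1 ≤ ∑ i, c i :=
    Finset.card_nsmul_le_sum _ _ _ (fun i _ => hc.1 i)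
  simp only [Finset.card_univ, Fintype.card_fin, smul_eq_mul, mul_one] at h1
  omega

lemma compsNat_pos_zero {m : ℕ} (hm : 1 ≤ m) : compsNat m 0 = ∅ := by
  rw [Finset.eq_empty_iff_forall_notMem]
  intro c hc
  rw [mem_compsNat] at hc
  have := hc.2
  simp only [Finset.univ_eq_empty, Finset.sum_empty] at this
  omega

lemma compsNat_zero_zero : compsNat 0 0 = {fun i => i.elim0} := by
  refine Finset.eq_singleton_iff_unique_mem.2 ⟨?_, fun x _ => funext fun i => i.elim0⟩
  rw [mem_compsNat]
  exact ⟨fun i => i.elim0, by simp⟩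

lemma sfin_zero (s : ℕ) : sfin 0 s = {fun i => i.elim0} := by
  refine Finset.eq_singleton_iff_unique_mem.2 ⟨?_, fun x _ => funext fun i => i.elim0⟩
  rw [mem_sfin]
  exact fun i => i.elim0

lemma wfin_zero (s : ℕ) : wfin 0 s = {fun i => i.elim0} := by
  refine Finset.eq_singleton_iff_unique_mem.2 ⟨?_, fun x _ => funext fun i => i.elim0⟩
  rw [mem_wfin]
  exact fun i => i.elim0

lemma sum_Iio_castSucc {M : Type*} [AddCommMonoid M] {q : ℕ} (f : Fin (q+1) → M) (i : Fin q) :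
    ∑ j ∈ Finset.Iio (Fin.castSucc i), f j = ∑ j ∈ Finset.Iio i, f (Fin.castSucc j) := by
  rw [Fin.Iio_castSucc, Finset.sum_map]
  rfl

lemma sum_Iio_last {M : Type*} [AddCommMonoid M] {q : ℕ} (f : Fin (q+1) → M) :
    ∑ j ∈ Finset.Iio (Fin.last q), f j = ∑ j : Fin q, f (Fin.castSucc j) := by
  rw [Fin.Iio_last_eq_map, Finset.sum_map]
  rfl

lemma Ioi_last_eq_empty {q : ℕ} : Finset.Ioi (Fin.last q) = (∅ : Finset (Fin (q+1))) := by
  rw [Finset.eq_empty_iff_forall_notMem]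
  intro a ha
  rw [Finset.mem_Ioi] at ha
  exact absurd ha (not_lt.2 (Fin.le_last a))

lemma sum_Ioi_last {M : Type*} [AddCommMonoid M] {q : ℕ} (f : Fin (q+1) → M) :
    ∑ j ∈ Finset.Ioi (Fin.last q), f j = 0 := by
  rw [Ioi_last_eq_empty, Finset.sum_empty]

lemma Ioi_castSucc_eq {q : ℕ} (i : Fin q) :
    Finset.Ioi (Fin.castSucc i)
      = insert (Fin.last q) ((Finset.Ioi i).map Fin.castSuccEmb) := by
  ext a
  simp only [Finset.mem_Ioi, Finset.mem_insert, Finset.mem_map]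
  constructor
  · intro ha
    by_cases hal : a = Fin.last q
    · exact Or.inl hal
    · right
      have haq : (a : ℕ) ≠ q := fun hh => hal (Fin.ext hh)
      have haq' : (a : ℕ) < q + 1 := a.isLt
      refine ⟨⟨a.val, by omega⟩, ?_, ?_⟩
      · rw [Fin.lt_def] at ha ⊢
        exact ha
      · exact Fin.ext rfl
  · rintro (rfl | ⟨b, hb, rfl⟩)
    · exact Fin.castSucc_lt_last i
    · exact Fin.castSucc_lt_castSucc_iff.2 hb

lemma sum_Ioi_castSucc {M : Type*} [AddCommMonoid M] {q : ℕ} (f : Fin (q+1) → M) (i : Fin q) :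
    ∑ j ∈ Finset.Ioi (Fin.castSucc i), f j
      = (∑ j ∈ Finset.Ioi i, f (Fin.castSucc j)) + f (Fin.last q) := by
  rw [Ioi_castSucc_eq, Finset.sum_insert, Finset.sum_map, add_comm]
  · rfl
  · rintro hmem
    rw [Finset.mem_map] at hmem
    obtain ⟨b, _, hb⟩ := hmem
    exact absurd (Fin.ext_iff.1 hb) (by have := b.isLt; simp; omega)

end Helpers

section Sign
variable {R : Type*} [CommRing R]

lemma neg_one_pow_mul_self (k : ℕ) : ((-1:R)^k) * (-1)^k = 1 := by
  rw [← pow_add]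
  exact Even.neg_one_pow ⟨k, rfl⟩

lemma neg_one_pow_sub {r k : ℕ} (hrk : r ≤ k) : ((-1:R))^(k-r) = (-1)^k * (-1)^r := by
  conv_rhs => rw [← Nat.sub_add_cancel hrk, pow_add]
  rw [mul_assoc, neg_one_pow_mul_self, mul_one]

end Sign


section TS
variable {R : Type*} [CommRing R]

lemma Tpoly_succ' (y : ℕ → ℤ → R) (n h : ℤ) (k s : ℕ) (hk : 1 ≤ k) :
    Tpoly y n h k (s+1) = Tpoly y n h k s + y k ((s:ℤ)*h)
      + ∑ r ∈ Finset.Ico 1 k, Tpoly y n h (k-r) s * y r ((s:ℤ)*h + ((k-r : ℕ):ℤ)*n) := by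
  have key : ∀ (q : ℕ), ∀ r ∈ Finset.Icc 1 k,
      (∑ x ∈ ((compsNat k (q+1)) ×ˢ ((sfin (q+1) (s+1)).filter
          (fun lam => lam (Fin.last q) = Fin.last s))).filter
          (fun x => x.1 (Fin.last q) = r),
        ∏ i, y (x.1 i) (((x.2 i : ℕ) : ℤ) * h + pref x.1 i * n))
      = (∑ c ∈ compsNat (k-r) q, ∑ lam ∈ sfin q s,
          ∏ i, y (c i) (((lam i : ℕ) : ℤ) * h + pref c i * n))
          * y r ((s:ℤ)*h + ((k-r:ℕ):ℤ)*n) := by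
    intro q r hr
    rw [Finset.mem_Icc] at hr
    have hps : (∑ x ∈ (compsNat (k-r) q) ×ˢ (sfin q s),
          (∏ i, y (x.1 i) (((x.2 i : ℕ) : ℤ) * h + pref x.1 i * n))
            * y r ((s:ℤ)*h + ((k-r:ℕ):ℤ)*n))
        = ∑ c ∈ compsNat (k-r) q, ∑ lam ∈ sfin q s,
            (∏ i, y (c i) (((lam i : ℕ) : ℤ) * h + pref c i * n))
              * y r ((s:ℤ)*h + ((k-r:ℕ):ℤ)*n) := Finset.sum_product _ _ _
    rw [Finset.sum_mul, Finset.sum_congr rfl (fun c _ => Finset.sum_mul _ _ _), ← hps]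
    refine Finset.sum_bij'
      (i := fun x hx => (fun i => x.1 (Fin.castSucc i), fun i =>
        (⟨(x.2 (Fin.castSucc i) : ℕ), by
          simp only [Finset.mem_filter, Finset.mem_product, mem_sfin] at hx
          obtain ⟨⟨hc, hlam, hL2⟩, hL1⟩ := hx
          have h1 : x.2 (Fin.castSucc i) < x.2 (Fin.last q) :=
            hlam _ _ (Fin.castSucc_lt_last i)
          rw [hL2] at h1
          rw [Fin.lt_def, Fin.val_last] at h1
          exact h1⟩ : Fin s)))
      (j := fun x hx => (Fin.snoc x.1 r, Fin.snoc (fun i => Fin.castSucc (x.2 i)) (Fin.last s)))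
      ?_ ?_ ?_ ?_ ?_
    · -- forward membership
      intro x hx
      simp only [Finset.mem_filter, Finset.mem_product, mem_sfin] at hx
      obtain ⟨⟨hc, hlam, hL2⟩, hL1⟩ := hx
      obtain ⟨hpos, hsum⟩ := mem_compsNat.1 hc
      rw [Fin.sum_univ_castSucc, hL1] at hsum
      simp only [Finset.mem_product, mem_compsNat, mem_sfin]
      refine ⟨⟨fun i => hpos _, ?_⟩, ?_⟩
      · have hrk : r ≤ k := by
          have := hpos (Fin.last q)
          omega
        omega
      · intro i j hij
        rw [Fin.lt_def]
        have := hlam _ _ (Fin.castSucc_lt_castSucc_iff.2 hij)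
        rw [Fin.lt_def] at this
        exact this
    · -- backward membership
      intro x hx
      simp only [Finset.mem_product, mem_compsNat, mem_sfin] at hx
      obtain ⟨⟨hpos, hsum⟩, hlam⟩ := hx
      simp only [Finset.mem_filter, Finset.mem_product, mem_compsNat, mem_sfin]
      refine ⟨⟨⟨?_, ?_⟩, ?_, Fin.snoc_last _ _⟩, Fin.snoc_last _ _⟩
      · intro i
        rcases Fin.eq_castSucc_or_eq_last i with ⟨i', rfl⟩ | rfl
        · simp only [Fin.snoc_castSucc]; exact hpos i'
        · simp only [Fin.snoc_last]; omega
      · rw [Fin.sum_univ_castSucc]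
        simp only [Fin.snoc_castSucc, Fin.snoc_last]
        omega
      · intro i j hij
        rcases Fin.eq_castSucc_or_eq_last j with ⟨j', rfl⟩ | rfl
        · rcases Fin.eq_castSucc_or_eq_last i with ⟨i', rfl⟩ | rfl
          · simp only [Fin.snoc_castSucc]
            exact Fin.castSucc_lt_castSucc_iff.2 (hlam _ _ (Fin.castSucc_lt_castSucc_iff.1 hij))
          · exact absurd (lt_trans hij (Fin.castSucc_lt_last j')) (lt_irrefl _)
        · rcases Fin.eq_castSucc_or_eq_last i with ⟨i', rfl⟩ | rfl
          · simp only [Fin.snoc_castSucc, Fin.snoc_last]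
            exact Fin.castSucc_lt_last _
          · exact absurd hij (lt_irrefl _)
    · -- left inverse
      intro x hx
      simp only [Finset.mem_filter, Finset.mem_product, mem_sfin] at hx
      obtain ⟨⟨hc, hlam, hL2⟩, hL1⟩ := hx
      refine Prod.ext ?_ ?_
      · funext i
        simp only []
        rcases Fin.eq_castSucc_or_eq_last i with ⟨i', rfl⟩ | rfl
        · simp only [Fin.snoc_castSucc]
        · simp only [Fin.snoc_last]
          exact hL1.symm
      · funext i
        simp only []
        rcases Fin.eq_castSucc_or_eq_last i with ⟨i', rfl⟩ | rfl
        · simp only [Fin.snoc_castSucc]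
          exact Fin.ext rfl
        · simp only [Fin.snoc_last]
          exact hL2.symm
    · -- right inverse
      intro x hx
      refine Prod.ext ?_ ?_
      · funext i
        simp only [Fin.snoc_castSucc]
      · funext i
        simp only [Fin.snoc_castSucc]
        exact Fin.ext rfl
    · -- values
      intro x hx
      simp only [Finset.mem_filter, Finset.mem_product, mem_sfin] at hx
      obtain ⟨⟨hc, hlam, hL2⟩, hL1⟩ := hx
      have hpref : pref x.1 (Fin.last q) = ((k-r:ℕ):ℤ) := by
        obtain ⟨hpos, hsum⟩ := mem_compsNat.1 hc
        rw [Fin.sum_univ_castSucc, hL1] at hsum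
        have hsum' : ∑ j : Fin q, x.1 (Fin.castSucc j) = k - r := by omega
        rw [pref, sum_Iio_last, ← Nat.cast_sum, hsum']
      rw [Fin.prod_univ_castSucc]
      simp only []
      congr 1
      · refine Finset.prod_congr rfl fun i _ => ?_
        congr 1
        rw [pref, pref, sum_Iio_castSucc]
      · rw [hL1, hL2, hpref, Fin.val_last]
  -- main assembly
  rw [Tpoly_eq y n h k (s+1), Tpoly_eq y n h k s]
  have hsplit : ∀ q ∈ Finset.range k,
      (∑ c ∈ compsNat k (q+1), ∑ lam ∈ sfin (q+1) (s+1),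
        ∏ i, y (c i) (((lam i:ℕ):ℤ) * h + pref c i * n))
      = (∑ c ∈ compsNat k (q+1), ∑ lam ∈ sfin (q+1) s,
          ∏ i, y (c i) (((lam i:ℕ):ℤ) * h + pref c i * n))
        + ∑ x ∈ (compsNat k (q+1)) ×ˢ ((sfin (q+1) (s+1)).filter
              (fun lam => lam (Fin.last q) = Fin.last s)),
            ∏ i, y (x.1 i) (((x.2 i:ℕ):ℤ) * h + pref x.1 i * n) := by
    intro q hq
    have hps : (∑ x ∈ (compsNat k (q+1)) ×ˢ ((sfin (q+1) (s+1)).filter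
            (fun lam => lam (Fin.last q) = Fin.last s)),
          ∏ i, y (x.1 i) (((x.2 i:ℕ):ℤ) * h + pref x.1 i * n))
        = ∑ c ∈ compsNat k (q+1), ∑ lam ∈ (sfin (q+1) (s+1)).filter
              (fun lam => lam (Fin.last q) = Fin.last s),
            ∏ i, y (c i) (((lam i:ℕ):ℤ) * h + pref c i * n) := Finset.sum_product _ _ _
    rw [hps, ← Finset.sum_add_distrib]
    refine Finset.sum_congr rfl fun c hc => ?_
    rw [← Finset.sum_filter_add_sum_filter_not (sfin (q+1) (s+1))
      (fun lam => lam (Fin.last q) = Fin.last s), add_comm]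
    congr 1
    refine Finset.sum_bij'
      (i := fun lam hlam => fun i => (⟨(lam i : ℕ), by
        simp only [Finset.mem_filter, mem_sfin] at hlam
        obtain ⟨hs', hne⟩ := hlam
        have hLlt : (lam (Fin.last q) : ℕ) < s := by
          have h1 : (lam (Fin.last q) : ℕ) ≤ s := Fin.is_le _
          have h2 : (lam (Fin.last q) : ℕ) ≠ s := fun hh =>
            hne (Fin.ext (by rw [hh, Fin.val_last]))
          omega
        rcases Fin.eq_castSucc_or_eq_last i with ⟨i', rfl⟩ | rfl
        · have := hs' _ _ (Fin.castSucc_lt_last i')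
          rw [Fin.lt_def] at this
          omega
        · exact hLlt⟩ : Fin s))
      (j := fun lam' hlam' => fun i => Fin.castSucc (lam' i))
      ?_ ?_ ?_ ?_ ?_
    · intro lam hlam
      simp only [Finset.mem_filter, mem_sfin] at hlam
      rw [mem_sfin]
      intro i j hij
      rw [Fin.lt_def]
      have := hlam.1 _ _ hij
      rw [Fin.lt_def] at this
      exact this
    · intro lam' hlam'
      rw [mem_sfin] at hlam'
      rw [Finset.mem_filter, mem_sfin]
      constructor
      · intro i j hij
        exact Fin.castSucc_lt_castSucc_iff.2 (hlam' _ _ hij)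
      · intro hh
        have := congrArg Fin.val hh
        rw [Fin.coe_castSucc, Fin.val_last] at this
        have := (lam' (Fin.last q)).isLt
        omega
    · intro lam hlam
      simp only []
      funext i
      exact Fin.ext rfl
    · intro lam' hlam'
      simp only []
      funext i
      exact Fin.ext rfl
    · intro lam hlam
      rfl
  rw [Finset.sum_congr rfl hsplit, Finset.sum_add_distrib, add_assoc]
  congr 1
  have hfib : ∀ q ∈ Finset.range k,
      (∑ x ∈ (compsNat k (q+1)) ×ˢ ((sfin (q+1) (s+1)).filter
          (fun lam => lam (Fin.last q) = Fin.last s)),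
        ∏ i, y (x.1 i) (((x.2 i:ℕ):ℤ) * h + pref x.1 i * n))
      = ∑ r ∈ Finset.Icc 1 k,
          ∑ x ∈ ((compsNat k (q+1)) ×ˢ ((sfin (q+1) (s+1)).filter
              (fun lam => lam (Fin.last q) = Fin.last s))).filter
              (fun x => x.1 (Fin.last q) = r),
            ∏ i, y (x.1 i) (((x.2 i:ℕ):ℤ) * h + pref x.1 i * n) := by
    intro q hq
    refine (Finset.sum_fiberwise_of_maps_to ?_ _).symm
    intro x hx
    rw [Finset.mem_product] at hx
    obtain ⟨hpos, hsum⟩ := mem_compsNat.1 hx.1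
    rw [Finset.mem_Icc]
    refine ⟨hpos _, compsNat_le hx.1 _⟩
  rw [Finset.sum_congr rfl hfib,
    Finset.sum_congr rfl (fun q hq => Finset.sum_congr rfl (fun r hr => key q r hr)),
    Finset.sum_comm, ← Finset.Ico_add_one_right_eq_Icc,
    Finset.sum_Ico_succ_top (by omega : 1 ≤ k), add_comm]
  congr 1
  · -- r = k term
    rw [Finset.sum_eq_single_of_mem 0 (Finset.mem_range.2 (by omega))]
    · rw [Nat.sub_self, compsNat_zero_zero, sfin_zero, Finset.sum_singleton,
        Finset.sum_singleton]
      simp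
    · intro q hq hq0
      rw [Nat.sub_self, compsNat_eq_empty (by omega), Finset.sum_empty, zero_mul]
  · -- middle terms
    refine Finset.sum_congr rfl fun r hr => ?_
    rw [Finset.mem_Ico] at hr
    rw [← Finset.sum_mul]
    congr 1
    rw [Tpoly_eq y n h (k-r) s]
    rw [← Finset.sum_subset (Finset.range_subset_range.2 (by omega : k - r + 1 ≤ k))
      (fun q hq hq' => ?_)]
    · rw [Finset.sum_range_succ']
      rw [compsNat_pos_zero (by omega), Finset.sum_empty, add_zero]
    · rw [Finset.mem_range] at hq hq'
      rw [compsNat_eq_empty (by omega), Finset.sum_empty]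

end TS

section SS
variable {R : Type*} [CommRing R]

lemma Spoly_succ' (y : ℕ → ℤ → R) (n h : ℤ) (k s : ℕ) (hk : 1 ≤ k) :
    Spoly y n h k (s+1) = Spoly y n h k s - (-1)^k * y k ((s:ℤ)*h)
      - ∑ r ∈ Finset.Ico 1 k,
          (-1)^r * y r ((s:ℤ)*h) * Spoly (shiftVar y ((r:ℤ)*n)) n h (k-r) (s+1) := by
  have key : ∀ (q : ℕ), ∀ r ∈ Finset.Icc 1 k,
      (∑ x ∈ ((compsNat k (q+1)) ×ˢ ((wfin (q+1) (s+1)).filter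
          (fun lam => lam (Fin.last q) = Fin.last s))).filter
          (fun x => x.1 (Fin.last q) = r),
        ∏ i, y (x.1 i) (((x.2 i : ℕ) : ℤ) * h + suf x.1 i * n))
      = (∑ c ∈ compsNat (k-r) q, ∑ lam ∈ wfin q (s+1),
          ∏ i, (shiftVar y ((r:ℤ)*n)) (c i) (((lam i : ℕ) : ℤ) * h + suf c i * n))
          * y r ((s:ℤ)*h) := by
    intro q r hr
    rw [Finset.mem_Icc] at hr
    have hps : (∑ x ∈ (compsNat (k-r) q) ×ˢ (wfin q (s+1)),
          (∏ i, (shiftVar y ((r:ℤ)*n)) (x.1 i) (((x.2 i : ℕ) : ℤ) * h + suf x.1 i * n))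
            * y r ((s:ℤ)*h))
        = ∑ c ∈ compsNat (k-r) q, ∑ lam ∈ wfin q (s+1),
            (∏ i, (shiftVar y ((r:ℤ)*n)) (c i) (((lam i : ℕ) : ℤ) * h + suf c i * n))
              * y r ((s:ℤ)*h) := Finset.sum_product _ _ _
    rw [Finset.sum_mul, Finset.sum_congr rfl (fun c _ => Finset.sum_mul _ _ _), ← hps]
    refine Finset.sum_bij'
      (i := fun x hx => (fun i => x.1 (Fin.castSucc i), fun i => x.2 (Fin.castSucc i)))
      (j := fun x hx => (Fin.snoc x.1 r, Fin.snoc x.2 (Fin.last s)))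
      ?_ ?_ ?_ ?_ ?_
    · -- forward membership
      intro x hx
      simp only [Finset.mem_filter, Finset.mem_product, mem_wfin] at hx
      obtain ⟨⟨hc, hlam, hL2⟩, hL1⟩ := hx
      obtain ⟨hpos, hsum⟩ := mem_compsNat.1 hc
      rw [Fin.sum_univ_castSucc, hL1] at hsum
      simp only [Finset.mem_product, mem_compsNat, mem_wfin]
      refine ⟨⟨fun i => hpos _, by omega⟩, ?_⟩
      · intro i j hij
        exact hlam _ _ (Fin.castSucc_le_castSucc_iff.2 hij)
    · -- backward membership
      intro x hx
      simp only [Finset.mem_product, mem_compsNat, mem_wfin] at hx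
      obtain ⟨⟨hpos, hsum⟩, hlam⟩ := hx
      simp only [Finset.mem_filter, Finset.mem_product, mem_compsNat, mem_wfin]
      refine ⟨⟨⟨?_, ?_⟩, ?_, Fin.snoc_last _ _⟩, Fin.snoc_last _ _⟩
      · intro i
        rcases Fin.eq_castSucc_or_eq_last i with ⟨i', rfl⟩ | rfl
        · simp only [Fin.snoc_castSucc]; exact hpos i'
        · simp only [Fin.snoc_last]; omega
      · rw [Fin.sum_univ_castSucc]
        simp only [Fin.snoc_castSucc, Fin.snoc_last]
        omega
      · intro i j hij
        rcases Fin.eq_castSucc_or_eq_last j with ⟨j', rfl⟩ | rfl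
        · rcases Fin.eq_castSucc_or_eq_last i with ⟨i', rfl⟩ | rfl
          · simp only [Fin.snoc_castSucc]
            exact hlam _ _ (Fin.castSucc_le_castSucc_iff.1 hij)
          · exact absurd (lt_of_le_of_lt hij (Fin.castSucc_lt_last j')) (lt_irrefl _)
        · simp only [Fin.snoc_last]
          exact Fin.le_last _
    · -- left inverse
      intro x hx
      simp only [Finset.mem_filter, Finset.mem_product, mem_wfin] at hx
      obtain ⟨⟨hc, hlam, hL2⟩, hL1⟩ := hx
      refine Prod.ext ?_ ?_
      · funext i
        simp only []
        rcases Fin.eq_castSucc_or_eq_last i with ⟨i', rfl⟩ | rfl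
        · simp only [Fin.snoc_castSucc]
        · simp only [Fin.snoc_last]
          exact hL1.symm
      · funext i
        simp only []
        rcases Fin.eq_castSucc_or_eq_last i with ⟨i', rfl⟩ | rfl
        · simp only [Fin.snoc_castSucc]
        · simp only [Fin.snoc_last]
          exact hL2.symm
    · -- right inverse
      intro x hx
      refine Prod.ext ?_ ?_
      · funext i
        simp only [Fin.snoc_castSucc]
      · funext i
        simp only [Fin.snoc_castSucc]
    · -- values
      intro x hx
      simp only [Finset.mem_filter, Finset.mem_product, mem_wfin] at hx
      obtain ⟨⟨hc, hlam, hL2⟩, hL1⟩ := hx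
      have hsufL : suf x.1 (Fin.last q) = 0 := by
        rw [suf, Ioi_last_eq_empty, Finset.sum_empty]
      rw [Fin.prod_univ_castSucc]
      simp only [shiftVar]
      congr 1
      · refine Finset.prod_congr rfl fun i _ => ?_
        congr 1
        rw [suf, suf, sum_Ioi_castSucc, hL1]
        push_cast
        ring
      · rw [hL1, hL2, hsufL, Fin.val_last]
        norm_num
  -- main assembly
  rw [Spoly_eq y n h k (s+1), Spoly_eq y n h k s]
  have hsplit : ∀ q ∈ Finset.range k,
      (∑ c ∈ compsNat k (q+1), ∑ lam ∈ wfin (q+1) (s+1),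
        ∏ i, y (c i) (((lam i:ℕ):ℤ) * h + suf c i * n))
      = (∑ c ∈ compsNat k (q+1), ∑ lam ∈ wfin (q+1) s,
          ∏ i, y (c i) (((lam i:ℕ):ℤ) * h + suf c i * n))
        + ∑ x ∈ (compsNat k (q+1)) ×ˢ ((wfin (q+1) (s+1)).filter
              (fun lam => lam (Fin.last q) = Fin.last s)),
            ∏ i, y (x.1 i) (((x.2 i:ℕ):ℤ) * h + suf x.1 i * n) := by
    intro q hq
    have hps : (∑ x ∈ (compsNat k (q+1)) ×ˢ ((wfin (q+1) (s+1)).filter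
            (fun lam => lam (Fin.last q) = Fin.last s)),
          ∏ i, y (x.1 i) (((x.2 i:ℕ):ℤ) * h + suf x.1 i * n))
        = ∑ c ∈ compsNat k (q+1), ∑ lam ∈ (wfin (q+1) (s+1)).filter
              (fun lam => lam (Fin.last q) = Fin.last s),
            ∏ i, y (c i) (((lam i:ℕ):ℤ) * h + suf c i * n) := Finset.sum_product _ _ _
    rw [hps, ← Finset.sum_add_distrib]
    refine Finset.sum_congr rfl fun c hc => ?_
    rw [← Finset.sum_filter_add_sum_filter_not (wfin (q+1) (s+1))
      (fun lam => lam (Fin.last q) = Fin.last s), add_comm]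
    congr 1
    refine Finset.sum_bij'
      (i := fun lam hlam => fun i => (⟨(lam i : ℕ), by
        simp only [Finset.mem_filter, mem_wfin] at hlam
        obtain ⟨hs', hne⟩ := hlam
        have hLlt : (lam (Fin.last q) : ℕ) < s := by
          have h1 : (lam (Fin.last q) : ℕ) ≤ s := Fin.is_le _
          have h2 : (lam (Fin.last q) : ℕ) ≠ s := fun hh =>
            hne (Fin.ext (by rw [hh, Fin.val_last]))
          omega
        have := hs' i (Fin.last q) (Fin.le_last i)
        rw [Fin.le_def] at this
        omega⟩ : Fin s))
      (j := fun lam' hlam' => fun i => Fin.castSucc (lam' i))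
      ?_ ?_ ?_ ?_ ?_
    · intro lam hlam
      simp only [Finset.mem_filter, mem_wfin] at hlam
      rw [mem_wfin]
      intro i j hij
      rw [Fin.le_def]
      have := hlam.1 _ _ hij
      rw [Fin.le_def] at this
      exact this
    · intro lam' hlam'
      rw [mem_wfin] at hlam'
      rw [Finset.mem_filter, mem_wfin]
      constructor
      · intro i j hij
        exact Fin.castSucc_le_castSucc_iff.2 (hlam' _ _ hij)
      · intro hh
        have h1 := congrArg Fin.val hh
        rw [Fin.coe_castSucc, Fin.val_last] at h1
        have := (lam' (Fin.last q)).isLt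
        omega
    · intro lam hlam
      funext i
      exact Fin.ext rfl
    · intro lam' hlam'
      funext i
      exact Fin.ext rfl
    · intro lam hlam
      rfl
  rw [Finset.sum_congr rfl (fun q hq => by rw [hsplit q hq, mul_add]),
    Finset.sum_add_distrib, mul_add]
  -- now handle the E part
  have hfib : ∀ q ∈ Finset.range k,
      (∑ x ∈ (compsNat k (q+1)) ×ˢ ((wfin (q+1) (s+1)).filter
          (fun lam => lam (Fin.last q) = Fin.last s)),
        ∏ i, y (x.1 i) (((x.2 i:ℕ):ℤ) * h + suf x.1 i * n))
      = ∑ r ∈ Finset.Icc 1 k,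
          (∑ c ∈ compsNat (k-r) q, ∑ lam ∈ wfin q (s+1),
            ∏ i, (shiftVar y ((r:ℤ)*n)) (c i) (((lam i : ℕ) : ℤ) * h + suf c i * n))
            * y r ((s:ℤ)*h) := by
    intro q hq
    rw [← Finset.sum_congr rfl (fun r hr => key q r hr)]
    refine (Finset.sum_fiberwise_of_maps_to ?_ _).symm
    intro x hx
    rw [Finset.mem_product] at hx
    obtain ⟨hpos, hsum⟩ := mem_compsNat.1 hx.1
    rw [Finset.mem_Icc]
    exact ⟨hpos _, compsNat_le hx.1 _⟩
  have hE : ∀ r ∈ Finset.Ico 1 k,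
      (∑ q ∈ Finset.range k, (-1:R)^(q+1) *
        (∑ c ∈ compsNat (k-r) q, ∑ lam ∈ wfin q (s+1),
          ∏ i, (shiftVar y ((r:ℤ)*n)) (c i) (((lam i : ℕ) : ℤ) * h + suf c i * n)))
      = -((-1:R)^(k-r) * Spoly (shiftVar y ((r:ℤ)*n)) n h (k-r) (s+1)) := by
    intro r hr
    rw [Finset.mem_Ico] at hr
    rw [← Finset.sum_subset (Finset.range_subset_range.2 (by omega : k - r + 1 ≤ k))
      (fun q hq hq' => ?_)]
    · rw [Finset.sum_range_succ', compsNat_pos_zero (by omega : 1 ≤ k - r)]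
      simp only [Finset.sum_empty, mul_zero, add_zero]
      rw [Spoly_eq]
      rw [Finset.sum_congr rfl (fun q' _ => show
          ((-1:R)^(q'+1+1) * (∑ c ∈ compsNat (k-r) (q'+1), ∑ lam ∈ wfin (q'+1) (s+1),
            ∏ i, (shiftVar y ((r:ℤ)*n)) (c i) (((lam i : ℕ) : ℤ) * h + suf c i * n)))
          = -((-1:R)^(q'+1) * (∑ c ∈ compsNat (k-r) (q'+1), ∑ lam ∈ wfin (q'+1) (s+1),
            ∏ i, (shiftVar y ((r:ℤ)*n)) (c i) (((lam i : ℕ) : ℤ) * h + suf c i * n))) from by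
        rw [pow_succ]
        ring)]
      rw [Finset.sum_neg_distrib]
      linear_combination (∑ q' ∈ Finset.range (k-r), (-1:R)^(q'+1) *
        (∑ c ∈ compsNat (k-r) (q'+1), ∑ lam ∈ wfin (q'+1) (s+1),
          ∏ i, (shiftVar y ((r:ℤ)*n)) (c i) (((lam i : ℕ) : ℤ) * h + suf c i * n)))
        * neg_one_pow_mul_self (R := R) (k-r)
    · rw [Finset.mem_range] at hq hq'
      rw [compsNat_eq_empty (by omega), Finset.sum_empty]
      simp
  have hEk : (∑ q ∈ Finset.range k, (-1:R)^(q+1) *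
        (∑ c ∈ compsNat (k-k) q, ∑ lam ∈ wfin q (s+1),
          ∏ i, (shiftVar y ((k:ℤ)*n)) (c i) (((lam i : ℕ) : ℤ) * h + suf c i * n)))
      = -1 := by
    rw [Finset.sum_eq_single_of_mem 0 (Finset.mem_range.2 (by omega))]
    · rw [Nat.sub_self, compsNat_zero_zero, wfin_zero, Finset.sum_singleton,
        Finset.sum_singleton]
      simp
    · intro q hq hq0
      rw [Nat.sub_self, compsNat_eq_empty (by omega), Finset.sum_empty]
      simp
  have h1 : (∑ q ∈ Finset.range k, (-1:R)^(q+1) *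
      (∑ x ∈ (compsNat k (q+1)) ×ˢ ((wfin (q+1) (s+1)).filter
          (fun lam => lam (Fin.last q) = Fin.last s)),
        ∏ i, y (x.1 i) (((x.2 i:ℕ):ℤ) * h + suf x.1 i * n)))
    = ∑ r ∈ Finset.Icc 1 k, (∑ q ∈ Finset.range k, (-1:R)^(q+1) *
        (∑ c ∈ compsNat (k-r) q, ∑ lam ∈ wfin q (s+1),
          ∏ i, (shiftVar y ((r:ℤ)*n)) (c i) (((lam i : ℕ) : ℤ) * h + suf c i * n)))
        * y r ((s:ℤ)*h) := by
    rw [Finset.sum_congr rfl (fun q hq => by rw [hfib q hq, Finset.mul_sum]),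
      Finset.sum_comm]
    refine Finset.sum_congr rfl fun r hr => ?_
    rw [Finset.sum_mul]
    exact Finset.sum_congr rfl fun q hq => (mul_assoc _ _ _).symm
  have h2 : (∑ r ∈ Finset.Icc 1 k, (∑ q ∈ Finset.range k, (-1:R)^(q+1) *
        (∑ c ∈ compsNat (k-r) q, ∑ lam ∈ wfin q (s+1),
          ∏ i, (shiftVar y ((r:ℤ)*n)) (c i) (((lam i : ℕ) : ℤ) * h + suf c i * n)))
        * y r ((s:ℤ)*h))
      = (∑ r ∈ Finset.Ico 1 k,
          (-((-1:R)^(k-r) * Spoly (shiftVar y ((r:ℤ)*n)) n h (k-r) (s+1))) * y r ((s:ℤ)*h))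
        + (-1) * y k ((s:ℤ)*h) := by
    rw [← Finset.Ico_add_one_right_eq_Icc, Finset.sum_Ico_succ_top (by omega : 1 ≤ k), hEk]
    congr 1
    exact Finset.sum_congr rfl fun r hr => by rw [hE r hr]
  rw [h1, h2]
  have h3 : ∀ r ∈ Finset.Ico 1 k,
      (-((-1:R)^(k-r) * Spoly (shiftVar y ((r:ℤ)*n)) n h (k-r) (s+1))) * y r ((s:ℤ)*h)
      = -((-1:R)^k * ((-1)^r * y r ((s:ℤ)*h) * Spoly (shiftVar y ((r:ℤ)*n)) n h (k-r) (s+1))) := by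
    intro r hr
    rw [Finset.mem_Ico] at hr
    rw [neg_one_pow_sub (by omega : r ≤ k)]
    ring
  rw [Finset.sum_congr rfl h3, Finset.sum_neg_distrib, ← Finset.mul_sum]
  linear_combination (-(∑ r ∈ Finset.Ico 1 k,
      (-1:R)^r * y r ((s:ℤ)*h) * Spoly (shiftVar y ((r:ℤ)*n)) n h (k-r) (s+1)))
    * neg_one_pow_mul_self (R := R) k

end SS

section Ring2
variable {R : Type*} [CommRing R]

def mulF (n : ℤ) (f g : ℕ → ℤ → R) : ℕ → ℤ → R :=
  fun k α => ∑ j ∈ Finset.range (k+1), f j α * g (k-j) (α + (j:ℤ)*n)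

def oneF : ℕ → ℤ → R := fun k _ => if k = 0 then 1 else 0

lemma one_mulF (n : ℤ) (g : ℕ → ℤ → R) : mulF n oneF g = g := by
  funext k α
  rw [mulF, Finset.sum_eq_single 0]
  · simp [oneF]
  · intro j _ hj; simp [oneF, hj]
  · intro hk; simp at hk

lemma mulF_assoc (n : ℤ) (f g e : ℕ → ℤ → R) :
    mulF n (mulF n f g) e = mulF n f (mulF n g e) := by
  funext k α
  simp only [mulF, Finset.sum_mul, Finset.mul_sum]
  rw [Finset.sum_sigma', Finset.sum_sigma']
  refine Finset.sum_nbij' (fun x => ⟨x.2, x.1 - x.2⟩) (fun x => ⟨x.1 + x.2, x.1⟩) ?_ ?_ ?_ ?_ ?_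
  · rintro ⟨a,b⟩ hx
    simp only [Finset.mem_sigma, Finset.mem_range] at *
    omega
  · rintro ⟨a,b⟩ hx
    simp only [Finset.mem_sigma, Finset.mem_range] at *
    omega
  · rintro ⟨a,b⟩ hx
    simp only [Finset.mem_sigma, Finset.mem_range] at hx
    show (⟨b + (a - b), b⟩ : (_ : ℕ) × ℕ) = ⟨a, b⟩
    simp only [show b + (a - b) = a from by omega]
  · rintro ⟨a,b⟩ hx
    simp only [Finset.mem_sigma, Finset.mem_range] at hx
    show (⟨a, a + b - a⟩ : (_ : ℕ) × ℕ) = ⟨a, b⟩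
    simp only [show a + b - a = b from by omega]
  · rintro ⟨a,b⟩ hx
    simp only [Finset.mem_sigma, Finset.mem_range] at hx
    have hba : b ≤ a := by omega
    have hak : a ≤ k := by omega
    rw [show k - b - (a - b) = k - a from by omega,
      show (α + (b:ℤ)*n) + ((a-b : ℕ):ℤ)*n = α + (a:ℤ)*n from by
        push_cast [Nat.cast_sub hba]; ring]
    ring

def Tf (y : ℕ → ℤ → R) (n h : ℤ) (s : ℕ) : ℕ → ℤ → R :=
  fun k α => if k = 0 then 1 else Tpoly (shiftVar y α) n h k s

def Sf (y : ℕ → ℤ → R) (n h : ℤ) (s : ℕ) : ℕ → ℤ → R :=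
  fun k α => if k = 0 then 1 else (-1)^k * Spoly (shiftVar y α) n h k s

def bF (y : ℕ → ℤ → R) (h : ℤ) (s : ℕ) : ℕ → ℤ → R :=
  fun k α => if k = 0 then 1 else y k ((s:ℤ)*h + α)

lemma Tpoly_zero (y : ℕ → ℤ → R) (n h : ℤ) (k : ℕ) : Tpoly y n h k 0 = 0 := by
  rw [Tpoly_eq]
  refine Finset.sum_eq_zero fun q _ => Finset.sum_eq_zero fun c _ => ?_
  haveI : IsEmpty (Fin (q+1) → Fin 0) := ⟨fun f => (f 0).elim0⟩
  rw [show sfin (q+1) 0 = ∅ from Finset.eq_empty_of_isEmpty _, Finset.sum_empty]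

lemma Spoly_zero (y : ℕ → ℤ → R) (n h : ℤ) (k : ℕ) : Spoly y n h k 0 = 0 := by
  rw [Spoly_eq]
  have : ∀ q ∈ Finset.range k, ((-1:R)^(q+1) * ∑ c ∈ compsNat k (q+1),
      ∑ lam ∈ wfin (q+1) 0, ∏ i, y (c i) (((lam i : ℕ) : ℤ) * h + suf c i * n)) = 0 := by
    intro q _
    haveI : IsEmpty (Fin (q+1) → Fin 0) := ⟨fun f => (f 0).elim0⟩
    rw [show wfin (q+1) 0 = ∅ from Finset.eq_empty_of_isEmpty _]
    simp
  rw [Finset.sum_congr rfl this]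
  simp

lemma Tf_zero (y : ℕ → ℤ → R) (n h : ℤ) : Tf y n h 0 = oneF := by
  funext k α
  by_cases hk : k = 0 <;> simp [Tf, oneF, hk, Tpoly_zero]

lemma Sf_zero (y : ℕ → ℤ → R) (n h : ℤ) : Sf y n h 0 = oneF := by
  funext k α
  by_cases hk : k = 0 <;> simp [Sf, oneF, hk, Spoly_zero]

lemma shiftVar_zero (y : ℕ → ℤ → R) : shiftVar y 0 = y := by
  funext r j; simp [shiftVar]

lemma shiftVar_shiftVar (y : ℕ → ℤ → R) (α β : ℤ) :
    shiftVar (shiftVar y α) β = shiftVar y (β + α) := by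
  funext r j; simp [shiftVar, add_assoc]

lemma Tf_succ (y : ℕ → ℤ → R) (n h : ℤ) (s : ℕ) :
    Tf y n h (s+1) = mulF n (Tf y n h s) (bF y h s) := by
  funext k α
  rcases Nat.eq_zero_or_pos k with hk | hk
  · subst hk; simp [Tf, mulF, bF]
  have hkne : k ≠ 0 := by omega
  rw [mulF, Finset.sum_range_succ, Finset.range_eq_Ico, Finset.sum_eq_sum_Ico_succ_bot hk]
  simp only [Tf, bF, Nat.sub_self, Nat.sub_zero, if_neg hkne, Nat.cast_zero, zero_mul,
    add_zero, one_mul, mul_one, if_pos rfl, if_true, reduceIte, zero_add]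
  rw [Tpoly_succ' (shiftVar y α) n h k s hk,
    show (∑ x ∈ Finset.Ico 1 k,
        ((if x = 0 then (1:R) else Tpoly (shiftVar y α) n h x s) *
          if k - x = 0 then 1 else y (k - x) ((s:ℤ) * h + (α + (x:ℤ) * n))))
      = ∑ x ∈ Finset.Ico 1 k,
          Tpoly (shiftVar y α) n h x s * y (k - x) ((s:ℤ) * h + (α + (x:ℤ) * n)) from
      Finset.sum_congr rfl fun x hx => by
        rw [Finset.mem_Ico] at hx
        rw [if_neg (by omega), if_neg (by omega)]]
  rw [show (∑ r ∈ Finset.Ico 1 k,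
        Tpoly (shiftVar y α) n h (k-r) s * shiftVar y α r ((s:ℤ)*h + ((k-r : ℕ):ℤ)*n))
      = ∑ x ∈ Finset.Ico 1 k,
          Tpoly (shiftVar y α) n h x s * y (k - x) ((s:ℤ) * h + (α + (x:ℤ) * n)) from ?hmid]
  case hmid =>
    refine Finset.sum_nbij' (fun r => k - r) (fun x => k - x) ?_ ?_ ?_ ?_ ?_ <;>
      simp only [Finset.mem_Ico]
    · intros; omega
    · intros; omega
    · intros; omega
    · intros; omega
    · intro r hr
      rw [show k - (k - r) = r from by omega]
      simp only [shiftVar]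
      rw [show ((s:ℤ)*h + ((k-r : ℕ):ℤ)*n + α) = (s:ℤ)*h + (α + ((k-r:ℕ):ℤ)*n) from by ring]
  simp only [shiftVar]
  ring

lemma Sf_succ (y : ℕ → ℤ → R) (n h : ℤ) (s : ℕ) :
    Sf y n h s = mulF n (bF y h s) (Sf y n h (s+1)) := by
  funext k α
  rcases Nat.eq_zero_or_pos k with hk | hk
  · subst hk; simp [Sf, mulF, bF]
  have hkne : k ≠ 0 := by omega
  rw [mulF, Finset.sum_range_succ, Finset.range_eq_Ico, Finset.sum_eq_sum_Ico_succ_bot hk]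
  simp only [Sf, bF, Nat.sub_self, Nat.sub_zero, if_neg hkne, Nat.cast_zero, zero_mul,
    add_zero, one_mul, mul_one, if_pos rfl, if_true, reduceIte, zero_add]
  rw [show (∑ x ∈ Finset.Ico 1 k,
      ((if x = 0 then (1:R) else y x ((s:ℤ) * h + α)) *
        if k - x = 0 then 1 else
          (-1) ^ (k - x) * Spoly (shiftVar y (α + (x:ℤ) * n)) n h (k - x) (s + 1)))
    = ∑ x ∈ Finset.Ico 1 k, (-1:R)^k *
        ((-1) ^ x * y x ((s:ℤ)*h + α) * Spoly (shiftVar y (α + (x:ℤ) * n)) n h (k - x) (s + 1)) from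
    Finset.sum_congr rfl fun x hx => by
      rw [Finset.mem_Ico] at hx
      rw [if_neg (by omega), if_neg (by omega), neg_one_pow_sub (by omega : x ≤ k)]
      ring]
  have hS : Spoly (shiftVar y α) n h k s
      = Spoly (shiftVar y α) n h k (s+1) + (-1)^k * (shiftVar y α) k ((s:ℤ)*h)
        + ∑ r ∈ Finset.Ico 1 k, (-1)^r * (shiftVar y α) r ((s:ℤ)*h) *
            Spoly (shiftVar (shiftVar y α) ((r:ℤ)*n)) n h (k-r) (s+1) := by
    have := Spoly_succ' (shiftVar y α) n h k s hk
    linear_combination -this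
  rw [hS, mul_add, mul_add, ← mul_assoc ((-1:R)^k) ((-1)^k) _, neg_one_pow_mul_self, one_mul,
    Finset.mul_sum]
  rw [show (∑ r ∈ Finset.Ico 1 k, (-1:R)^k *
        ((-1)^r * (shiftVar y α) r ((s:ℤ)*h) *
          Spoly (shiftVar (shiftVar y α) ((r:ℤ)*n)) n h (k-r) (s+1)))
      = ∑ x ∈ Finset.Ico 1 k, (-1:R)^k *
        ((-1) ^ x * y x ((s:ℤ)*h + α) * Spoly (shiftVar y (α + (x:ℤ) * n)) n h (k - x) (s + 1)) from
    Finset.sum_congr rfl fun r hr => by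
      rw [shiftVar_shiftVar, add_comm ((r:ℤ)*n) α]
      rfl]
  rw [show (shiftVar y α) k ((s:ℤ)*h) = y k ((s:ℤ)*h + α) from rfl]
  ring

end Ring2

section Ring3
variable {R : Type*} [CommRing R]

lemma mulF_TS (y : ℕ → ℤ → R) (n h : ℤ) (t : ℕ) :
    mulF n (Tf y n h t) (Sf y n h t) = (oneF : ℕ → ℤ → R) := by
  induction t with
  | zero => rw [Tf_zero, Sf_zero, one_mulF]
  | succ t ih => rw [Tf_succ, mulF_assoc, ← Sf_succ, ih]

end Ring3


/-- `S^k_s + Σ_{j=1}^{k-1} (-1)^j T^j_s S^{k-j, jn}_s + (-1)^k T^k_s = 0`. -/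
theorem Spoly_Tpoly_inverse {R : Type*} [CommRing R] (y : ℕ → ℤ → R) (n h : ℤ)
    (hn : 1 ≤ n) (hh : 1 ≤ h) (k s : ℕ) (hk : 1 ≤ k) (hs : 1 ≤ s) :
    Spoly y n h k s +
      (∑ j ∈ Finset.Ico 1 k,
        (-1 : R) ^ j * Tpoly y n h j s * Spoly (shiftVar y ((j : ℤ) * n)) n h (k - j) s) +
      (-1 : R) ^ k * Tpoly y n h k s = 0 := by
  have hkne : k ≠ 0 := by omega
  have hk0 := congrFun (congrFun (mulF_TS y n h s) k) (0 : ℤ)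
  rw [mulF, Finset.sum_range_succ, Finset.range_eq_Ico,
    Finset.sum_eq_sum_Ico_succ_bot (by omega : 0 < k)] at hk0
  simp only [Tf, Sf, oneF, if_neg hkne, if_pos rfl, reduceIte, if_true, Nat.sub_self,
    Nat.sub_zero, Nat.cast_zero, zero_mul, zero_add, add_zero, one_mul, mul_one,
    shiftVar_zero] at hk0
  rw [show (∑ x ∈ Finset.Ico 1 k,
      ((if x = 0 then (1:R) else Tpoly y n h x s) *
        if k - x = 0 then 1 else (-1) ^ (k - x) * Spoly (shiftVar y ((x:ℤ) * n)) n h (k - x) s))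
    = ∑ j ∈ Finset.Ico 1 k, (-1:R)^k *
        ((-1) ^ j * Tpoly y n h j s * Spoly (shiftVar y ((j:ℤ) * n)) n h (k - j) s) from
    Finset.sum_congr rfl fun x hx => by
      rw [Finset.mem_Ico] at hx
      rw [if_neg (by omega), if_neg (by omega), neg_one_pow_sub (by omega : x ≤ k)]
      ring] at hk0
  rw [← Finset.mul_sum] at hk0
  rw [show Spoly y n h k s +
      (∑ j ∈ Finset.Ico 1 k,
        (-1 : R) ^ j * Tpoly y n h j s * Spoly (shiftVar y ((j : ℤ) * n)) n h (k - j) s) +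
      (-1 : R) ^ k * Tpoly y n h k s
    = (-1:R)^k * ((-1)^k * Spoly y n h k s +
        (-1:R)^k * ∑ j ∈ Finset.Ico 1 k,
          (-1 : R) ^ j * Tpoly y n h j s * Spoly (shiftVar y ((j : ℤ) * n)) n h (k - j) s +
        Tpoly y n h k s) from by
      rw [mul_add, mul_add, ← mul_assoc, neg_one_pow_mul_self, one_mul,
        ← mul_assoc, neg_one_pow_mul_self, one_mul]]
  rw [hk0, mul_zero]
end

section
/- For every k ≥ 1 and s ≥ 1, S^k_s = (-1)^k Σ_K (-1)^p T^{k_1}_s · T^{k_2, k_1 n}_s ⋯ T^{k_p, (k_1+...+k_{p-1})n}_s, where the sum is over all compositions K=(k_1,...,k_p) of k. -/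
open Finset

namespace S7

/-- ℕ-valued compositions of `k` into `p` positive parts. -/
def compsN (k p : ℕ) : Finset (Fin p → ℕ) :=
  (Fintype.piFinset fun _ => Finset.range (k+1)).filter
    fun K => (∀ i, 1 ≤ K i) ∧ (∑ i, K i) = k

lemma mem_compsN {k p : ℕ} {K : Fin p → ℕ} :
    K ∈ compsN k p ↔ (∀ i, 1 ≤ K i) ∧ (∑ i, K i) = k := by
  constructor
  · intro hK; exact (Finset.mem_filter.mp hK).2
  · intro hK
    refine Finset.mem_filter.mpr ⟨?_, hK⟩
    refine Fintype.mem_piFinset.mpr fun i => Finset.mem_range.mpr ?_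
    have : K i ≤ ∑ j, K j := Finset.single_le_sum (fun j _ => Nat.zero_le _) (mem_univ i)
    omega

lemma compsN_empty {k p : ℕ} (h : k < p) : compsN k p = ∅ := by
  ext K
  simp only [mem_compsN, Finset.notMem_empty, iff_false, not_and]
  intro h1 h2
  have : (p : ℕ) ≤ ∑ i, K i := by
    calc (p : ℕ) = ∑ _i : Fin p, 1 := by simp
    _ ≤ ∑ i, K i := Finset.sum_le_sum fun i _ => h1 i
  omega

lemma compsN_one {k : ℕ} (hk : 1 ≤ k) : compsN k 1 = {fun _ => k} := by
  ext K
  simp only [mem_compsN, Finset.mem_singleton]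
  constructor
  · rintro ⟨-, h2⟩
    funext i
    have : i = 0 := Subsingleton.elim _ _
    subst this
    simpa using h2
  · rintro rfl; exact ⟨fun i => hk, by simp⟩

/-- prefix sums (ℤ-valued). -/
def pN {p : ℕ} (K : Fin p → ℕ) (i : Fin p) : ℤ := ∑ j ∈ Finset.Iio i, (K j : ℤ)

lemma sum_Iio_fin {M : Type*} [AddCommMonoid M] {m : ℕ} (F : Fin m → M) (x : Fin m) :
    ∑ l ∈ Finset.Iio x, F l = ∑ l : Fin m, if l < x then F l else 0 := by
  rw [← Finset.sum_filter]
  congr 1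
  ext l
  simp

lemma pN_zero {p : ℕ} (K : Fin (p+1) → ℕ) : pN K 0 = 0 := by
  rw [pN]
  apply Finset.sum_eq_zero
  intro j hj
  rw [Finset.mem_Iio] at hj
  exact absurd hj (Fin.not_lt_zero j)

lemma pN_succ {p : ℕ} (K : Fin (p+1) → ℕ) (i : Fin p) :
    pN K i.succ = (K 0 : ℤ) + pN (fun l => K l.succ) i := by
  rw [pN, sum_Iio_fin, Fin.sum_univ_succ, pN, sum_Iio_fin]
  have h0 : ((0 : Fin (p+1)) < i.succ) := Fin.succ_pos i
  rw [if_pos h0]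
  congr 1
  apply Finset.sum_congr rfl
  intro l _
  have : l.succ < i.succ ↔ l < i := Fin.succ_lt_succ_iff
  simp only [this]

lemma pN_castAdd {t r : ℕ} (J : Fin t → ℕ) (L : Fin r → ℕ) (i : Fin t) :
    pN (Fin.append J L) (Fin.castAdd r i) = pN J i := by
  rw [pN, sum_Iio_fin, Fin.sum_univ_add, pN, sum_Iio_fin]
  have h2 : ∀ l : Fin r, ¬ (Fin.natAdd t l < Fin.castAdd r i) := by
    intro l
    simp only [Fin.lt_def, Fin.coe_natAdd, Fin.coe_castAdd]
    omega
  simp only [h2, if_false, Finset.sum_const_zero, add_zero]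
  apply Finset.sum_congr rfl
  intro l _
  have : Fin.castAdd r l < Fin.castAdd r i ↔ l < i := by
    simp only [Fin.lt_def, Fin.coe_castAdd]
  rw [Fin.append_left]
  simp only [this]

lemma pN_natAdd {t r : ℕ} (J : Fin t → ℕ) (L : Fin r → ℕ) (i : Fin r) :
    pN (Fin.append J L) (Fin.natAdd t i) = (∑ l, (J l : ℤ)) + pN L i := by
  rw [pN, sum_Iio_fin, Fin.sum_univ_add, pN, sum_Iio_fin]
  congr 1
  · apply Finset.sum_congr rfl
    intro l _
    have : Fin.castAdd r l < Fin.natAdd t i := by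
      simp only [Fin.lt_def, Fin.coe_natAdd, Fin.coe_castAdd]
      omega
    rw [Fin.append_left, if_pos this]
  · apply Finset.sum_congr rfl
    intro l _
    have : Fin.natAdd t l < Fin.natAdd t i ↔ l < i := by
      simp only [Fin.lt_def, Fin.coe_natAdd]
      omega
    rw [Fin.append_right]
    simp only [this]



/-- suffix sums (ℤ-valued). -/
def sN {p : ℕ} (K : Fin p → ℕ) (i : Fin p) : ℤ := ∑ j ∈ Finset.Ioi i, (K j : ℤ)

lemma pN_rev {p : ℕ} (K : Fin p → ℕ) (i : Fin p) :
    pN (fun l => K l.rev) i.rev = sN K i := by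
  rw [pN, sN]
  apply Finset.sum_nbij' (i := fun j => j.rev) (j := fun j => j.rev)
  · intro a ha
    rw [Finset.mem_Iio] at ha
    rw [Finset.mem_Ioi]
    have := Fin.rev_lt_rev.mpr ha
    rwa [Fin.rev_rev] at this
  · intro a ha
    rw [Finset.mem_Ioi] at ha
    rw [Finset.mem_Iio]
    exact Fin.rev_lt_rev.mpr ha
  · intro a _; exact Fin.rev_rev a
  · intro a _; exact Fin.rev_rev a
  · intro a _; rfl

variable {R : Type*} [CommRing R]

/-- The basic word product. -/
def wp (y : ℕ → ℤ → R) (n h α : ℤ) {s q : ℕ} (K : Fin q → ℕ) (lam : Fin q → Fin s) : R :=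
  ∏ i, y (K i) ((lam i : ℤ) * h + pN K i * n + α)

def sincF (s q : ℕ) : Finset (Fin q → Fin s) :=
  univ.filter fun lam => ∀ i j, i < j → lam i < lam j

def wdecF (s q : ℕ) : Finset (Fin q → Fin s) :=
  univ.filter fun lam => ∀ i j, i ≤ j → lam j ≤ lam i

def TN (y : ℕ → ℤ → R) (n h α : ℤ) (s k : ℕ) : R :=
  ∑ q ∈ Icc 1 k, ∑ K ∈ compsN k q, ∑ lam ∈ sincF s q, wp y n h α K lam

def CN (y : ℕ → ℤ → R) (n h α : ℤ) (s k : ℕ) : R :=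
  ∑ q ∈ Icc 1 k, (-1)^q * ∑ K ∈ compsN k q, ∑ lam ∈ wdecF s q, wp y n h α K lam

def AN (y : ℕ → ℤ → R) (n h α : ℤ) (s k : ℕ) : R :=
  ∑ p ∈ Icc 1 k, (-1)^p * ∑ K ∈ compsN k p, ∏ i, TN y n h (α + pN K i * n) s (K i)

lemma sum_comps_eq {k p : ℕ} (f : (Fin p → ℕ) → R) :
    ∑ K ∈ comps k p, f (fun i => (K i : ℕ)) = ∑ K ∈ compsN k p, f K := by
  apply Finset.sum_nbij' (i := fun K => fun i => ((K i : ℕ) : ℕ))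
    (j := fun K => fun i => (⟨min (K i) k, by omega⟩ : Fin (k+1)))
  · intro K hK
    rw [comps, Finset.mem_filter] at hK
    exact mem_compsN.mpr hK.2
  · intro K hK
    rw [mem_compsN] at hK
    rw [comps, Finset.mem_filter]
    have hle : ∀ i, K i ≤ k := by
      intro i
      rw [← hK.2]
      exact Finset.single_le_sum (fun j _ => Nat.zero_le _) (mem_univ i)
    constructor
    · exact mem_univ _
    · constructor
      · intro i
        simp only [min_eq_left (hle i)]
        exact hK.1 i
      · calc ∑ i : Fin p, ((⟨min (K i) k, by omega⟩ : Fin (k+1)) : ℕ)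
              = ∑ i : Fin p, K i := by
                apply Finset.sum_congr rfl
                intro i _
                simp [min_eq_left (hle i)]
          _ = k := hK.2
  · intro K hK
    rw [comps, Finset.mem_filter] at hK
    have hle : ∀ i, (K i : ℕ) ≤ k := by
      intro i
      have h1 : (K i : ℕ) ≤ ∑ j : Fin p, (K j : ℕ) :=
        Finset.single_le_sum (f := fun j => ((K j : ℕ))) (fun j _ => Nat.zero_le _) (mem_univ i)
      omega
    funext i
    apply Fin.ext
    simp [min_eq_left (hle i)]
  · intro K hK
    rw [mem_compsN] at hK
    have hle : ∀ i, K i ≤ k := by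
      intro i
      rw [← hK.2]
      exact Finset.single_le_sum (fun j _ => Nat.zero_le _) (mem_univ i)
    funext i
    simp [min_eq_left (hle i)]
  · intro K _; rfl

lemma Tpoly_eq_TN (y : ℕ → ℤ → R) (n h α : ℤ) (s k : ℕ) :
    Tpoly (shiftVar y α) n h k s = TN y n h α s k := by
  rw [Tpoly, TN]
  apply Finset.sum_congr rfl
  intro p _
  rw [← sum_comps_eq (f := fun K => ∑ lam ∈ sincF s p, wp y n h α K lam)]
  apply Finset.sum_congr rfl
  intro K _
  rw [sincF]
  apply Finset.sum_congr rfl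
  intro lam _
  rw [wp]
  apply Finset.prod_congr rfl
  intro i _
  rw [shiftVar]
  simp only [prefSum, pN]

lemma RHS_eq_AN (y : ℕ → ℤ → R) (n h : ℤ) (s k : ℕ) :
    ∑ p ∈ Finset.Icc 1 k, (-1 : R)^p *
        ∑ K ∈ comps k p, ∏ i, Tpoly (shiftVar y (prefSum K i * n)) n h ((K i : ℕ)) s
      = AN y n h 0 s k := by
  rw [AN]
  apply Finset.sum_congr rfl
  intro p _
  congr 1
  rw [← sum_comps_eq (f := fun K => ∏ i, TN y n h (0 + pN K i * n) s (K i))]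
  apply Finset.sum_congr rfl
  intro K _
  apply Finset.prod_congr rfl
  intro i _
  rw [Tpoly_eq_TN, zero_add]
  simp only [prefSum, pN]

lemma Spoly_eq_CN (y : ℕ → ℤ → R) (n h : ℤ) (s k : ℕ) :
    Spoly y n h k s = (-1)^k * CN y n h 0 s k := by
  rw [Spoly, CN, Finset.mul_sum, Finset.mul_sum]
  apply Finset.sum_congr rfl
  intro p _
  rw [← mul_assoc, ← mul_assoc]
  congr 1
  trans (∑ K ∈ compsN k p,
    ∑ lam ∈ Finset.univ.filter (fun lam : Fin p → Fin s => ∀ i j, i ≤ j → lam i ≤ lam j),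
      ∏ i, y (K i) ((lam i : ℤ) * h + sN K i * n))
  · exact sum_comps_eq (f := fun K => ∑ lam ∈
      Finset.univ.filter (fun lam : Fin p → Fin s => ∀ i j, i ≤ j → lam i ≤ lam j),
        ∏ i, y (K i) ((lam i : ℤ) * h + sN K i * n))
  · apply Finset.sum_nbij' (i := fun K => fun l : Fin p => K l.rev)
      (j := fun K => fun l : Fin p => K l.rev)
    · intro K hK
      rw [mem_compsN] at hK ⊢
      refine ⟨fun i => hK.1 _, ?_⟩
      rw [← hK.2]
      exact Fintype.sum_equiv Fin.revPerm _ _ (fun i => rfl)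
    · intro K hK
      rw [mem_compsN] at hK ⊢
      refine ⟨fun i => hK.1 _, ?_⟩
      rw [← hK.2]
      exact Fintype.sum_equiv Fin.revPerm _ _ (fun i => rfl)
    · intro K _; funext l; simp
    · intro K _; funext l; simp
    · intro K _
      apply Finset.sum_nbij' (i := fun lam => fun l : Fin p => lam l.rev)
        (j := fun lam => fun l : Fin p => lam l.rev)
      · intro lam hlam
        rw [Finset.mem_filter] at hlam
        rw [wdecF, Finset.mem_filter]
        refine ⟨mem_univ _, fun i j hij => ?_⟩
        exact hlam.2 _ _ (Fin.rev_le_rev.mpr hij)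
      · intro lam hlam
        rw [wdecF, Finset.mem_filter] at hlam
        rw [Finset.mem_filter]
        refine ⟨mem_univ _, fun i j hij => ?_⟩
        exact hlam.2 _ _ (Fin.rev_le_rev.mpr hij)
      · intro lam _; funext l; simp
      · intro lam _; funext l; simp
      · intro lam _
        rw [wp]
        apply Fintype.prod_equiv Fin.revPerm
        intro i
        simp only [Fin.revPerm_apply, Fin.rev_rev, pN_rev, add_zero]


lemma sum_compsN_succ {k p' : ℕ} (hp' : 1 ≤ p')
    (g : (Fin (p'+1) → ℕ) → R) (f : ℕ → (Fin p' → ℕ) → R)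
    (hfg : ∀ K, K ∈ compsN k (p'+1) → g K = f (K 0) (fun i => K i.succ)) :
    ∑ K ∈ compsN k (p'+1), g K
      = ∑ j ∈ Finset.Ico 1 k, ∑ K' ∈ compsN (k-j) p', f j K' := by
  rw [← Finset.sum_sigma (Finset.Ico 1 k) (fun j => compsN (k-j) p') (fun x => f x.1 x.2)]
  apply Finset.sum_nbij' (i := fun K => (⟨K 0, fun i => K i.succ⟩ : Σ _j : ℕ, (Fin p' → ℕ)))
    (j := fun x => Fin.cons x.1 x.2)
  · intro K hK
    rw [mem_compsN] at hK
    rw [Finset.mem_sigma]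
    have hsum := hK.2
    rw [Fin.sum_univ_succ] at hsum
    have htail : (p' : ℕ) ≤ ∑ i : Fin p', K i.succ := by
      calc (p' : ℕ) = ∑ _i : Fin p', 1 := by simp
      _ ≤ _ := Finset.sum_le_sum fun i _ => hK.1 i.succ
    have h00 := hK.1 0
    constructor
    · show K 0 ∈ Finset.Ico 1 k
      rw [Finset.mem_Ico]
      omega
    · show (fun i => K i.succ) ∈ compsN (k - K 0) p'
      rw [mem_compsN]
      refine ⟨fun i => hK.1 i.succ, ?_⟩
      show (∑ i : Fin p', K i.succ) = k - K 0
      omega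
  · rintro ⟨j, K'⟩ hx
    rw [Finset.mem_sigma, Finset.mem_Ico] at hx
    have hj1 : 1 ≤ j := hx.1.1
    have hjk : j < k := hx.1.2
    have hx2 : (∀ i, 1 ≤ K' i) ∧ (∑ i, K' i) = k - j := mem_compsN.mp hx.2
    rw [mem_compsN]
    constructor
    · intro i
      refine Fin.cases ?_ ?_ i
      · rw [Fin.cons_zero]; exact hj1
      · intro l; rw [Fin.cons_succ]; exact hx2.1 l
    · rw [Fin.sum_univ_succ, Fin.cons_zero]
      have h2 := hx2.2
      simp only [Fin.cons_succ]
      omega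
  · intro K _
    exact Fin.cons_self_tail K
  · rintro ⟨j, K'⟩ _
    simp only [Fin.cons_zero, Fin.cons_succ]
  · intro K hK
    exact hfg K hK

lemma rec_A (y : ℕ → ℤ → R) (n h : ℤ) (s : ℕ) {k : ℕ} (hk : 1 ≤ k) (α : ℤ) :
    AN y n h α s k
      = -(TN y n h α s k)
        - ∑ j ∈ Finset.Ico 1 k, TN y n h α s j * AN y n h (α + (j:ℤ) * n) s (k - j) := by
  have hsplit : Finset.Icc 1 k = insert 1 (Finset.Icc 2 k) := by
    ext p
    simp only [Finset.mem_Icc, Finset.mem_insert]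
    omega
  rw [AN, hsplit, Finset.sum_insert (by simp)]
  have h1 : ((-1 : R))^1 * ∑ K ∈ compsN k 1, ∏ i, TN y n h (α + pN K i * n) s (K i)
      = -(TN y n h α s k) := by
    rw [compsN_one hk, Finset.sum_singleton, Fin.prod_univ_one]
    have h0 : pN (fun _ : Fin 1 => k) 0 = 0 := pN_zero (p := 0) _
    rw [h0]
    norm_num
  rw [h1]
  -- remaining: ∑ p ∈ Icc 2 k ... = - ∑ j ...
  have hre : ∑ p ∈ Finset.Icc 2 k,
      ((-1 : R))^p * ∑ K ∈ compsN k p, ∏ i, TN y n h (α + pN K i * n) s (K i)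
      = ∑ p' ∈ Finset.Icc 1 (k-1),
        ((-1 : R))^(p'+1) * ∑ K ∈ compsN k (p'+1), ∏ i, TN y n h (α + pN K i * n) s (K i) := by
    apply Finset.sum_nbij' (i := fun p => p - 1) (j := fun p' => p' + 1)
    · intro p hp; rw [Finset.mem_Icc] at hp ⊢; omega
    · intro p hp; rw [Finset.mem_Icc] at hp ⊢; omega
    · intro p hp; rw [Finset.mem_Icc] at hp; omega
    · intro p _; rfl
    · intro p hp
      rw [Finset.mem_Icc] at hp
      have : p - 1 + 1 = p := by omega
      rw [this]
  rw [hre]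
  have hinner : ∀ p' ∈ Finset.Icc 1 (k-1),
      ((-1 : R))^(p'+1) * ∑ K ∈ compsN k (p'+1), ∏ i, TN y n h (α + pN K i * n) s (K i)
      = -∑ j ∈ Finset.Ico 1 k, TN y n h α s j *
          (((-1 : R))^p' * ∑ K' ∈ compsN (k-j) p',
            ∏ i, TN y n h ((α + (j:ℤ)*n) + pN K' i * n) s (K' i)) := by
    intro p' hp'
    rw [Finset.mem_Icc] at hp'
    rw [sum_compsN_succ hp'.1
      (f := fun j K' => TN y n h α s j *
        ∏ i, TN y n h ((α + (j:ℤ)*n) + pN K' i * n) s (K' i))]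
    · simp only [Finset.mul_sum, ← Finset.sum_neg_distrib]
      apply Finset.sum_congr rfl
      intro j _
      apply Finset.sum_congr rfl
      intro K' _
      ring
    · intro K hK
      dsimp only
      rw [Fin.prod_univ_succ, pN_zero K]
      simp only [zero_mul, add_zero]
      refine congrArg₂ (· * ·) rfl ?_
      apply Finset.prod_congr rfl
      intro i _
      rw [pN_succ]
      rw [show (α + (((K 0 : ℕ) : ℤ) + pN (fun l => K l.succ) i) * n)
          = ((α + ((K 0 : ℕ) : ℤ)*n) + pN (fun i => K i.succ) i * n) from by ring]
  rw [show (∑ p' ∈ Finset.Icc 1 (k-1),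
        ((-1 : R))^(p'+1) * ∑ K ∈ compsN k (p'+1), ∏ i, TN y n h (α + pN K i * n) s (K i))
      = ∑ p' ∈ Finset.Icc 1 (k-1), -∑ j ∈ Finset.Ico 1 k, TN y n h α s j *
          (((-1 : R))^p' * ∑ K' ∈ compsN (k-j) p',
            ∏ i, TN y n h ((α + (j:ℤ)*n) + pN K' i * n) s (K' i))
      from Finset.sum_congr rfl hinner, Finset.sum_neg_distrib]
  rw [Finset.sum_comm, sub_eq_add_neg]
  refine congrArg₂ (· + ·) rfl ?_
  rw [neg_inj]
  apply Finset.sum_congr rfl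
  intro j hj
  rw [Finset.mem_Ico] at hj
  rw [← Finset.mul_sum]
  refine congrArg (fun z => TN y n h α s j * z) ?_
  rw [AN]
  symm
  apply Finset.sum_subset
  · intro p hp
    rw [Finset.mem_Icc] at hp ⊢
    omega
  · intro p hp hnp
    rw [Finset.mem_Icc] at hp
    rw [Finset.mem_Icc] at hnp
    have : compsN (k - j) p = ∅ := compsN_empty (by omega)
    rw [this]
    simp

def ValidT {s q : ℕ} (t : ℕ) (lam : Fin q → Fin s) : Prop :=
  (∀ i j : Fin q, (i:ℕ) < (j:ℕ) → (j:ℕ) < t → lam i < lam j) ∧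
  (∀ i j : Fin q, t ≤ (i:ℕ) → (i:ℕ) ≤ (j:ℕ) → lam j ≤ lam i)

instance {s q : ℕ} (t : ℕ) : DecidablePred (ValidT (s := s) (q := q) t) := fun lam => by
  unfold ValidT; infer_instance

lemma wdecF_eq (s q : ℕ) :
    wdecF s q = Finset.univ.filter (fun lam : Fin q → Fin s => ValidT 0 lam) := by
  ext lam
  simp only [wdecF, Finset.mem_filter, mem_univ, true_and]
  unfold ValidT
  constructor
  · intro hl
    refine ⟨fun i j _ hj0 => absurd hj0 (by omega), fun i j _ hij => ?_⟩
    exact hl i j hij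
  · intro hl i j hij
    exact hl.2 i j (by omega) hij

lemma sincF_eq (s q : ℕ) :
    sincF s q = Finset.univ.filter (fun lam : Fin q → Fin s => ValidT q lam) := by
  ext lam
  simp only [sincF, Finset.mem_filter, mem_univ, true_and]
  unfold ValidT
  constructor
  · intro hl
    refine ⟨fun i j hij _ => hl i j hij, fun i j hi _ => ?_⟩
    exact absurd i.isLt (by omega)
  · intro hl i j hij
    exact hl.1 i j hij j.isLt

lemma per_word {s q : ℕ} (hq : 1 ≤ q) (lam : Fin q → Fin s) :
    ∑ t ∈ Finset.range (q+1), (if ValidT t lam then ((-1 : R))^(q-t) else 0) = 0 := by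
  set P : ℕ → Prop := fun t => ∀ i j : Fin q, t ≤ (i:ℕ) → (i:ℕ) ≤ (j:ℕ) → lam j ≤ lam i with hP
  have hPdec : DecidablePred P := fun t => by rw [hP]; infer_instance
  have hex : ∃ t, P t := by
    refine ⟨q, fun i j hi _ => ?_⟩
    exact absurd i.isLt (by omega)
  set c := Nat.find hex with hcdef
  have hc : P c := Nat.find_spec hex
  have hcq : c < q := by
    have hq1 : P (q-1) := by
      intro i j hi hij
      have hi2 := i.isLt
      have hj2 := j.isLt
      have : i = j := Fin.ext (by omega)
      rw [this]
    have := Nat.find_min' hex hq1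
    omega
  have hstep : 1 ≤ c → lam ⟨c-1, by omega⟩ < lam ⟨c, hcq⟩ := by
    intro hc1
    have hnc : ¬ P (c-1) := Nat.find_min hex (by omega)
    have hex2 : ∃ i j : Fin q, (c-1 ≤ (i:ℕ)) ∧ ((i:ℕ) ≤ (j:ℕ)) ∧ lam i < lam j := by
      by_contra hall
      push_neg at hall
      apply hnc
      intro i j hi hij
      exact hall i j hi hij
    obtain ⟨i, j, hi, hij, hlt⟩ := hex2
    have hic : (i:ℕ) = c - 1 := by
      by_contra hne
      have hge : c ≤ (i:ℕ) := by omega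
      exact absurd (hc i j hge hij) (by rw [not_le]; exact hlt)
    have hjc : c ≤ (j:ℕ) := by
      by_contra hne
      have : (j:ℕ) = c - 1 := by omega
      have : i = j := Fin.ext (by omega)
      rw [this] at hlt
      exact lt_irrefl _ hlt
    have h2 : lam j ≤ lam ⟨c, hcq⟩ := hc ⟨c, hcq⟩ j (by simp) hjc
    have h1 : lam ⟨c-1, by omega⟩ = lam i := by
      congr 1
      exact Fin.ext hic.symm
    rw [h1]
    exact lt_of_lt_of_le hlt h2
  have hval : ∀ t, t ≤ q → ValidT t lam → t = c ∨ t = c + 1 := by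
    intro t htq hv
    have hct : c ≤ t := Nat.find_min' hex hv.2
    by_contra hne
    push_neg at hne
    have ht2 : c + 2 ≤ t := by omega
    have hc1q : c + 1 < q := by omega
    have hlt := hv.1 ⟨c, hcq⟩ ⟨c+1, hc1q⟩ (by simp) (by simp; omega)
    have hle := hc ⟨c, hcq⟩ ⟨c+1, hc1q⟩ (by simp) (by simp)
    exact absurd hle (not_le.mpr hlt)
  have hiff : ValidT c lam ↔ ValidT (c+1) lam := by
    constructor
    · intro hv
      constructor
      · intro i j hij hjc1
        by_cases hjc : (j:ℕ) < c
        · exact hv.1 i j hij hjc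
        · have hjc' : (j:ℕ) = c := by omega
          have hj : j = ⟨c, hcq⟩ := Fin.ext hjc'
          have hc1 : 1 ≤ c := by omega
          by_cases hic : (i:ℕ) = c - 1
          · have : i = ⟨c-1, by omega⟩ := Fin.ext hic
            rw [this, hj]
            exact hstep hc1
          · have h1 : lam i < lam ⟨c-1, by omega⟩ := by
              apply hv.1
              · simp; omega
              · simp; omega
            rw [hj]
            exact lt_trans h1 (hstep hc1)
      · intro i j hi hij
        exact hv.2 i j (by omega) hij
    · intro hv
      refine ⟨fun i j hij hjc => hv.1 i j hij (by omega), hc⟩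
  rw [← Finset.sum_filter]
  by_cases hvc : ValidT c lam
  · have hfil : (Finset.range (q+1)).filter (fun t => ValidT t lam) = {c, c+1} := by
      ext t
      simp only [Finset.mem_filter, Finset.mem_range, Finset.mem_insert, Finset.mem_singleton]
      constructor
      · rintro ⟨ht, hv⟩
        exact hval t (by omega) hv
      · rintro (rfl | rfl)
        · exact ⟨by omega, hvc⟩
        · exact ⟨by omega, hiff.mp hvc⟩
    rw [hfil, Finset.sum_pair (by omega)]
    have he : q - c = (q - (c+1)) + 1 := by omega
    rw [he, pow_succ]
    ring
  · have hfil : (Finset.range (q+1)).filter (fun t => ValidT t lam) = ∅ := by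
      ext t
      simp only [Finset.mem_filter, Finset.mem_range, Finset.notMem_empty, iff_false, not_and]
      intro ht hv
      rcases hval t (by omega) hv with rfl | rfl
      · exact hvc hv
      · exact hvc (hiff.mpr hv)
    rw [hfil, Finset.sum_empty]

lemma append_lt {α : Sort*} {t r : ℕ} (u : Fin t → α) (v : Fin r → α)
    (i : Fin (t+r)) (hi : (i:ℕ) < t) : Fin.append u v i = u ⟨i, hi⟩ := by
  revert hi
  refine Fin.addCases ?_ ?_ i
  · intro p hp
    exact Fin.append_left u v p
  · intro p hp
    exfalso
    simp only [Fin.coe_natAdd] at hp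
    omega

lemma append_ge {α : Sort*} {t r : ℕ} (u : Fin t → α) (v : Fin r → α)
    (i : Fin (t+r)) (hi : t ≤ (i:ℕ)) :
    Fin.append u v i = v ⟨(i:ℕ) - t, by have := i.isLt; omega⟩ := by
  revert hi
  refine Fin.addCases ?_ ?_ i
  · intro p hp
    exfalso
    simp only [Fin.coe_castAdd] at hp
    have := p.isLt
    omega
  · intro p hp
    rw [Fin.append_right]
    congr 1
    apply Fin.ext
    simp

lemma sum_split (y : ℕ → ℤ → R) (n h α : ℤ) (s : ℕ) (k t r : ℕ)
    (ht : 1 ≤ t) (hr : 1 ≤ r) :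
    ∑ j ∈ Finset.Ico 1 k,
      (∑ J ∈ compsN j t, ∑ u ∈ sincF s t, wp y n h α J u) *
      (∑ L ∈ compsN (k-j) r, ∑ v ∈ wdecF s r, wp y n h (α + (j:ℤ)*n) L v)
    = ∑ K ∈ compsN k (t+r),
        ∑ lam ∈ Finset.univ.filter (fun lam : Fin (t+r) → Fin s => ValidT t lam),
          wp y n h α K lam := by
  have hmaps : ∀ K ∈ compsN k (t+r), (∑ i : Fin t, K (Fin.castAdd r i)) ∈ Finset.Ico 1 k := by
    intro K hK
    rw [mem_compsN] at hK
    have htot := hK.2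
    rw [Fin.sum_univ_add] at htot
    have h1 : 1 ≤ ∑ i : Fin t, K (Fin.castAdd r i) := by
      have ha : K (Fin.castAdd r ⟨0, ht⟩) ≤ ∑ i : Fin t, K (Fin.castAdd r i) :=
        Finset.single_le_sum (f := fun i : Fin t => K (Fin.castAdd r i))
          (fun i _ => Nat.zero_le _) (mem_univ (⟨0, ht⟩ : Fin t))
      have hb := hK.1 (Fin.castAdd r ⟨0, ht⟩)
      omega
    have h2 : 1 ≤ ∑ i : Fin r, K (Fin.natAdd t i) := by
      have ha : K (Fin.natAdd t ⟨0, hr⟩) ≤ ∑ i : Fin r, K (Fin.natAdd t i) :=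
        Finset.single_le_sum (f := fun i : Fin r => K (Fin.natAdd t i))
          (fun i _ => Nat.zero_le _) (mem_univ (⟨0, hr⟩ : Fin r))
      have hb := hK.1 (Fin.natAdd t ⟨0, hr⟩)
      omega
    rw [Finset.mem_Ico]
    omega
  rw [← Finset.sum_fiberwise_of_maps_to hmaps]
  apply Finset.sum_congr rfl
  intro j hj
  rw [Finset.mem_Ico] at hj
  rw [Finset.sum_mul_sum]
  rw [← Finset.sum_product']
  apply Finset.sum_nbij' (i := fun x => Fin.append x.1 x.2)
    (j := fun K => ((fun i => K (Fin.castAdd r i)), (fun i => K (Fin.natAdd t i))))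
  · intro x hx
    rw [Finset.mem_product] at hx
    have hx1 := mem_compsN.mp hx.1
    have hx2 := mem_compsN.mp hx.2
    rw [Finset.mem_filter]
    have hg : (∑ i : Fin t, Fin.append x.1 x.2 (Fin.castAdd r i)) = j := by
      calc (∑ i : Fin t, Fin.append x.1 x.2 (Fin.castAdd r i))
          = ∑ i : Fin t, x.1 i := by
            apply Finset.sum_congr rfl
            intro i _
            rw [Fin.append_left]
        _ = j := hx1.2
    refine ⟨mem_compsN.mpr ⟨?_, ?_⟩, hg⟩
    · intro i
      refine Fin.addCases ?_ ?_ i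
      · intro p; rw [Fin.append_left]; exact hx1.1 p
      · intro p; rw [Fin.append_right]; exact hx2.1 p
    · rw [Fin.sum_univ_add]
      have e1 : (∑ i : Fin t, Fin.append x.1 x.2 (Fin.castAdd r i)) = j := hg
      have e2 : (∑ i : Fin r, Fin.append x.1 x.2 (Fin.natAdd t i))
          = ∑ i : Fin r, x.2 i := by
        apply Finset.sum_congr rfl
        intro i _
        rw [Fin.append_right]
      rw [e1, e2, hx2.2]
      omega
  · intro K hK
    rw [Finset.mem_filter] at hK
    have hK1 := mem_compsN.mp hK.1
    have htot := hK1.2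
    rw [Fin.sum_univ_add] at htot
    rw [Finset.mem_product]
    constructor
    · apply mem_compsN.mpr
      exact ⟨fun i => hK1.1 _, hK.2⟩
    · apply mem_compsN.mpr
      refine ⟨fun i => hK1.1 _, ?_⟩
      show (∑ i : Fin r, K (Fin.natAdd t i)) = k - j
      have := hK.2
      omega
  · intro x hx
    apply Prod.ext
    · funext i; exact Fin.append_left _ _ i
    · funext i; exact Fin.append_right _ _ i
  · intro K _
    funext i
    refine Fin.addCases ?_ ?_ i
    · intro p; rw [Fin.append_left]
    · intro p; rw [Fin.append_right]
  · intro x hx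
    rw [Finset.mem_product] at hx
    have hx1 := mem_compsN.mp hx.1
    rw [Finset.sum_mul_sum, ← Finset.sum_product']
    apply Finset.sum_nbij' (i := fun uv => Fin.append uv.1 uv.2)
      (j := fun lam => ((fun i => lam (Fin.castAdd r i)), (fun i => lam (Fin.natAdd t i))))
    · intro uv huv
      rw [Finset.mem_product, sincF, wdecF, Finset.mem_filter, Finset.mem_filter] at huv
      have hu := huv.1.2
      have hv := huv.2.2
      rw [Finset.mem_filter]
      refine ⟨mem_univ _, ?_, ?_⟩
      · intro a b hab hbt
        have hat : (a:ℕ) < t := by omega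
        rw [append_lt _ _ a hat, append_lt _ _ b hbt]
        exact hu _ _ (by rw [Fin.mk_lt_mk]; omega)
      · intro a b hta hab
        have htb : t ≤ (b:ℕ) := by omega
        rw [append_ge _ _ a hta, append_ge _ _ b htb]
        exact hv _ _ (by rw [Fin.mk_le_mk]; omega)
    · intro lam hlam
      rw [Finset.mem_filter] at hlam
      have hV := hlam.2
      rw [Finset.mem_product, sincF, wdecF, Finset.mem_filter, Finset.mem_filter]
      refine ⟨⟨mem_univ _, ?_⟩, ⟨mem_univ _, ?_⟩⟩
      · intro a b hab
        apply hV.1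
        · simp only [Fin.coe_castAdd]; exact hab
        · simp only [Fin.coe_castAdd]; exact b.isLt
      · intro a b hab
        apply hV.2
        · simp only [Fin.coe_natAdd]; omega
        · simp only [Fin.coe_natAdd]; omega
    · intro uv _
      apply Prod.ext
      · funext i; exact Fin.append_left _ _ i
      · funext i; exact Fin.append_right _ _ i
    · intro lam _
      funext i
      refine Fin.addCases ?_ ?_ i
      · intro p; rw [Fin.append_left]
      · intro p; rw [Fin.append_right]
    · intro uv huv
      rw [Finset.mem_product] at huv
      rw [wp, wp, wp, Fin.prod_univ_add]
      have hsum : (∑ l, x.1 l) = j := hx1.2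
      have hxs : (∑ l, ((x.1 l : ℕ) : ℤ)) = (j : ℤ) := by
        rw [← Nat.cast_sum]
        exact_mod_cast congrArg (fun z : ℕ => (z : ℤ)) hsum
      refine congrArg₂ (· * ·) ?_ ?_
      · apply Finset.prod_congr rfl
        intro i _
        rw [Fin.append_left, Fin.append_left, pN_castAdd]
      · apply Finset.prod_congr rfl
        intro i _
        rw [Fin.append_right, Fin.append_right, pN_natAdd]
        congr 1
        rw [hxs]
        ring

lemma sigma_mk_eq {a b c d : ℕ} (h1 : a = c) (h2 : b = d) :
    (⟨a, b⟩ : Σ _ : ℕ, ℕ) = ⟨c, d⟩ := by subst h1; subst h2; rfl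

lemma sum_tri (k : ℕ) (G : ℕ → ℕ → R)
    (hG : ∀ t r, 1 ≤ t → 1 ≤ r → k < t + r → G t r = 0) :
    ∑ t ∈ Finset.Icc 1 k, ∑ r ∈ Finset.Icc 1 k, G t r
      = ∑ q ∈ Finset.Icc 1 k, ∑ t ∈ Finset.Ico 1 q, G t (q - t) := by
  have step1 : ∀ t ∈ Finset.Icc 1 k,
      ∑ r ∈ Finset.Icc 1 k, G t r = ∑ r ∈ Finset.Icc 1 (k - t), G t r := by
    intro t ht
    rw [Finset.mem_Icc] at ht
    symm
    apply Finset.sum_subset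
    · intro r hr
      rw [Finset.mem_Icc] at hr ⊢
      omega
    · intro r hr hnr
      rw [Finset.mem_Icc] at hr
      rw [Finset.mem_Icc] at hnr
      exact hG t r (by omega) (by omega) (by omega)
  rw [Finset.sum_congr rfl step1]
  rw [Finset.sum_sigma', Finset.sum_sigma']
  apply Finset.sum_nbij' (i := fun x => (⟨x.1 + x.2, x.1⟩ : Σ _ : ℕ, ℕ))
    (j := fun x => (⟨x.2, x.1 - x.2⟩ : Σ _ : ℕ, ℕ))
  · rintro ⟨t, r⟩ hx
    rw [Finset.mem_sigma] at hx
    have h1 : 1 ≤ t ∧ t ≤ k := Finset.mem_Icc.mp hx.1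
    have h2 : 1 ≤ r ∧ r ≤ k - t := Finset.mem_Icc.mp hx.2
    rw [Finset.mem_sigma]
    constructor
    · show t + r ∈ Finset.Icc 1 k
      rw [Finset.mem_Icc]
      omega
    · show t ∈ Finset.Ico 1 (t + r)
      rw [Finset.mem_Ico]
      omega
  · rintro ⟨q, t⟩ hx
    rw [Finset.mem_sigma] at hx
    have h1 : 1 ≤ q ∧ q ≤ k := Finset.mem_Icc.mp hx.1
    have h2 : 1 ≤ t ∧ t < q := Finset.mem_Ico.mp hx.2
    rw [Finset.mem_sigma]
    constructor
    · show t ∈ Finset.Icc 1 k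
      rw [Finset.mem_Icc]
      omega
    · show q - t ∈ Finset.Icc 1 (k - t)
      rw [Finset.mem_Icc]
      omega
  · rintro ⟨t, r⟩ hx
    show (⟨t, t + r - t⟩ : Σ _ : ℕ, ℕ) = ⟨t, r⟩
    exact sigma_mk_eq rfl (by omega)
  · rintro ⟨q, t⟩ hx
    rw [Finset.mem_sigma] at hx
    have h2 : 1 ≤ t ∧ t < q := Finset.mem_Ico.mp hx.2
    show (⟨t + (q - t), t⟩ : Σ _ : ℕ, ℕ) = ⟨q, t⟩
    exact sigma_mk_eq (by omega) rfl
  · rintro ⟨t, r⟩ hx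
    show G t r = G t (t + r - t)
    rw [show t + r - t = r from by omega]

lemma key_zero (y : ℕ → ℤ → R) (n h : ℤ) (s : ℕ) {k : ℕ} (hk : 1 ≤ k) (α : ℤ) :
    CN y n h α s k + TN y n h α s k
      + (∑ j ∈ Finset.Ico 1 k, TN y n h α s j * CN y n h (α + (j:ℤ)*n) s (k-j)) = 0 := by
  have hA : (∑ j ∈ Finset.Ico 1 k, TN y n h α s j * CN y n h (α + (j:ℤ)*n) s (k-j))
      = ∑ t ∈ Finset.Icc 1 k, ∑ r ∈ Finset.Icc 1 k,
          ((-1:R))^r * ∑ K ∈ compsN k (t+r),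
            ∑ lam ∈ Finset.filter (fun lam : Fin (t+r) → Fin s => ValidT t lam) Finset.univ,
              wp y n h α K lam := by
    have h1 : ∀ j ∈ Finset.Ico 1 k,
        TN y n h α s j * CN y n h (α + (j:ℤ)*n) s (k-j)
        = ∑ t ∈ Finset.Icc 1 k, ∑ r ∈ Finset.Icc 1 k, ((-1:R))^r *
            ((∑ J ∈ compsN j t, ∑ u ∈ sincF s t, wp y n h α J u) *
             (∑ L ∈ compsN (k-j) r, ∑ v ∈ wdecF s r, wp y n h (α + (j:ℤ)*n) L v)) := by
      intro j hj
      rw [Finset.mem_Ico] at hj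
      rw [TN, CN]
      rw [show (∑ q ∈ Finset.Icc 1 j, ∑ K ∈ compsN j q, ∑ lam ∈ sincF s q, wp y n h α K lam)
          = ∑ q ∈ Finset.Icc 1 k, ∑ K ∈ compsN j q, ∑ lam ∈ sincF s q, wp y n h α K lam from
        Finset.sum_subset
          (by intro x hx
              rw [Finset.mem_Icc] at hx ⊢
              omega)
          (by intro x hx hnx
              rw [Finset.mem_Icc] at hx
              rw [Finset.mem_Icc] at hnx
              rw [compsN_empty (by omega)]
              simp)]
      rw [show (∑ q ∈ Finset.Icc 1 (k-j), ((-1:R))^q * ∑ K ∈ compsN (k-j) q,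
              ∑ lam ∈ wdecF s q, wp y n h (α + (j:ℤ)*n) K lam)
          = ∑ q ∈ Finset.Icc 1 k, ((-1:R))^q * ∑ K ∈ compsN (k-j) q,
              ∑ lam ∈ wdecF s q, wp y n h (α + (j:ℤ)*n) K lam from
        Finset.sum_subset
          (by intro x hx
              rw [Finset.mem_Icc] at hx ⊢
              omega)
          (by intro x hx hnx
              rw [Finset.mem_Icc] at hx
              rw [Finset.mem_Icc] at hnx
              rw [compsN_empty (by omega)]
              simp)]
      rw [Finset.sum_mul_sum]
      apply Finset.sum_congr rfl
      intro t _
      apply Finset.sum_congr rfl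
      intro r _
      ring
    rw [Finset.sum_congr rfl h1]
    rw [Finset.sum_comm]
    apply Finset.sum_congr rfl
    intro t ht
    rw [Finset.sum_comm]
    apply Finset.sum_congr rfl
    intro r hr
    rw [Finset.mem_Icc] at ht
    rw [Finset.mem_Icc] at hr
    rw [← Finset.mul_sum]
    rw [sum_split y n h α s k t r ht.1 hr.1]
  have hA2 : (∑ j ∈ Finset.Ico 1 k, TN y n h α s j * CN y n h (α + (j:ℤ)*n) s (k-j))
      = ∑ q ∈ Finset.Icc 1 k, ∑ t ∈ Finset.Ico 1 q,
          ((-1:R))^(q-t) * ∑ K ∈ compsN k q,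
            ∑ lam ∈ Finset.filter (fun lam : Fin q → Fin s => ValidT t lam) Finset.univ,
              wp y n h α K lam := by
    rw [hA]
    have htri := sum_tri k
      (fun t r => ((-1:R))^r * ∑ K ∈ compsN k (t+r),
        ∑ lam ∈ Finset.filter (fun lam : Fin (t+r) → Fin s => ValidT t lam) Finset.univ,
          wp y n h α K lam)
      (by intro t r _ _ hkr
          rw [compsN_empty hkr]
          simp)
    rw [htri]
    apply Finset.sum_congr rfl
    intro q hq
    apply Finset.sum_congr rfl
    intro t htq
    rw [Finset.mem_Ico] at htq
    rw [show t + (q - t) = q from by omega]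
  have hCN : CN y n h α s k = ∑ q ∈ Finset.Icc 1 k, ((-1:R))^(q-0) *
      ∑ K ∈ compsN k q,
        ∑ lam ∈ Finset.filter (fun lam : Fin q → Fin s => ValidT 0 lam) Finset.univ,
          wp y n h α K lam := by
    rw [CN]
    apply Finset.sum_congr rfl
    intro q _
    rw [wdecF_eq, Nat.sub_zero]
  have hTN : TN y n h α s k = ∑ q ∈ Finset.Icc 1 k, ((-1:R))^(q-q) *
      ∑ K ∈ compsN k q,
        ∑ lam ∈ Finset.filter (fun lam : Fin q → Fin s => ValidT q lam) Finset.univ,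
          wp y n h α K lam := by
    rw [TN]
    apply Finset.sum_congr rfl
    intro q _
    rw [sincF_eq, Nat.sub_self, pow_zero, one_mul]
  rw [hA2, hCN, hTN]
  rw [← Finset.sum_add_distrib, ← Finset.sum_add_distrib]
  apply Finset.sum_eq_zero
  intro q hq
  rw [Finset.mem_Icc] at hq
  have hr : ∑ t ∈ Finset.range (q+1), ((-1:R))^(q-t) *
      (∑ K ∈ compsN k q,
        ∑ lam ∈ Finset.filter (fun lam : Fin q → Fin s => ValidT t lam) Finset.univ,
          wp y n h α K lam) = 0 := by
    calc ∑ t ∈ Finset.range (q+1), ((-1:R))^(q-t) *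
        (∑ K ∈ compsN k q,
          ∑ lam ∈ Finset.filter (fun lam : Fin q → Fin s => ValidT t lam) Finset.univ,
            wp y n h α K lam)
        = ∑ K ∈ compsN k q, ∑ t ∈ Finset.range (q+1),
            ∑ lam ∈ Finset.filter (fun lam : Fin q → Fin s => ValidT t lam) Finset.univ,
              ((-1:R))^(q-t) * wp y n h α K lam := by
          rw [Finset.sum_comm]
          apply Finset.sum_congr rfl
          intro t _
          rw [Finset.mul_sum]
          apply Finset.sum_congr rfl
          intro K _
          rw [Finset.mul_sum]
      _ = ∑ K ∈ compsN k q, ∑ lam : Fin q → Fin s,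
            (∑ t ∈ Finset.range (q+1), if ValidT t lam then ((-1:R))^(q-t) else 0)
              * wp y n h α K lam := by
          apply Finset.sum_congr rfl
          intro K _
          have hfil : ∀ t ∈ Finset.range (q+1),
              (∑ lam ∈ Finset.filter (fun lam : Fin q → Fin s => ValidT t lam) Finset.univ,
                ((-1:R))^(q-t) * wp y n h α K lam)
              = ∑ lam : Fin q → Fin s,
                  if ValidT t lam then ((-1:R))^(q-t) * wp y n h α K lam else 0 := by
            intro t _
            rw [Finset.sum_filter]
          rw [Finset.sum_congr rfl hfil, Finset.sum_comm]
          apply Finset.sum_congr rfl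
          intro lam _
          rw [Finset.sum_mul]
          apply Finset.sum_congr rfl
          intro t _
          rw [ite_mul, zero_mul]
      _ = 0 := by
          apply Finset.sum_eq_zero
          intro K _
          apply Finset.sum_eq_zero
          intro lam _
          rw [per_word (by omega) lam, zero_mul]
  rw [Finset.sum_range_succ, Finset.range_eq_Ico,
    Finset.sum_eq_sum_Ico_succ_bot (by omega)] at hr
  linear_combination hr

lemma rec_C (y : ℕ → ℤ → R) (n h : ℤ) (s : ℕ) {k : ℕ} (hk : 1 ≤ k) (α : ℤ) :
    CN y n h α s k
      = -(TN y n h α s k)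
        - ∑ j ∈ Finset.Ico 1 k, TN y n h α s j * CN y n h (α + (j:ℤ) * n) s (k - j) := by
  linear_combination key_zero y n h s hk α

lemma AN_eq_CN (y : ℕ → ℤ → R) (n h : ℤ) (s : ℕ) :
    ∀ k, 1 ≤ k → ∀ α, AN y n h α s k = CN y n h α s k := by
  intro k
  induction k using Nat.strong_induction_on with
  | _ k ih =>
    intro hk α
    rw [rec_A y n h s hk α, rec_C y n h s hk α]
    congr 1
    apply Finset.sum_congr rfl
    intro j hj
    rw [Finset.mem_Ico] at hj
    rw [ih (k - j) (by omega) (by omega) (α + (j:ℤ)*n)]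

end S7

/-- `S^k_s = (-1)^k Σ_K (-1)^p T^{k_1}_s T^{k_2, k_1 n}_s ⋯ T^{k_p, (k_1+⋯+k_{p-1})n}_s`. -/
theorem Spoly_eq_comp_sum_Tpoly {R : Type*} [CommRing R] (y : ℕ → ℤ → R) (n h : ℤ)
    (hn : 1 ≤ n) (hh : 1 ≤ h) (k s : ℕ) (hk : 1 ≤ k) (hs : 1 ≤ s) :
    Spoly y n h k s =
      (-1) ^ k * ∑ p ∈ Finset.Icc 1 k, (-1) ^ p *
        ∑ K ∈ comps k p,
          ∏ i, Tpoly (shiftVar y (prefSum K i * n)) n h ((K i : ℕ)) s := by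
  rw [S7.Spoly_eq_CN y n h s k, S7.RHS_eq_AN y n h s k]
  rw [S7.AN_eq_CN y n h s k hk 0]
end

section
/- The discrete polynomials T^k_s satisfy the composition identity T^k_{s_1+s_2}(i) = T^k_{s_1}(i + s_2 h) + Σ_{j=1}^{k-1} T^j_{s_2}(i) · T^{k-j}_{s_1}(i + s_2 h + j n) + T^k_{s_2}(i) for all k ≥ 1 and s_1, s_2 ≥ 1. -/
open Finset

/-- The discrete polynomial `T^k_s(i)` built from fields `f r : ℤ → R`. -/
def Td {R : Type*} [CommRing R] (f : ℕ → ℤ → R) (n h : ℤ) (k s : ℕ) (i : ℤ) : R :=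
  Tpoly (fun r j => f r (i + j)) n h k s

namespace TdComp

/-- ℤ-valued partial sum of the entries of `g` with index (value) below `t`. -/
def pZ {s : ℕ} (g : Fin s → ℕ) (t : ℕ) : ℤ :=
  ∑ m : Fin s, if (m : ℕ) < t then (g m : ℤ) else 0

lemma pZ_zero {s : ℕ} (g : Fin s → ℕ) : pZ g 0 = 0 := by simp [pZ]

lemma pZ_succ {q : ℕ} (K : Fin (q + 1) → ℕ) (t : ℕ) :
    pZ K (t + 1) = (K 0 : ℤ) + pZ (fun m => K m.succ) t := by
  rw [pZ, Fin.sum_univ_succ]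
  simp only [Fin.val_zero, Fin.val_succ, pZ]
  congr 1
  · simp

lemma pZ_castAdd {s₂ s₁ : ℕ} (g : Fin (s₂ + s₁) → ℕ) (l : Fin s₂) :
    pZ g ((Fin.castAdd s₁ l : Fin (s₂ + s₁)) : ℕ) = pZ (fun m => g (Fin.castAdd s₁ m)) (l : ℕ) := by
  rw [pZ, pZ, Fin.sum_univ_add]
  simp only [Fin.coe_castAdd, Fin.coe_natAdd]
  have h2 : ∀ m : Fin s₁,
      (if s₂ + (m : ℕ) < (l : ℕ) then (g (Fin.natAdd s₂ m) : ℤ) else 0) = 0 :=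
    fun m => if_neg (by omega)
  simp only [h2, Finset.sum_const_zero, add_zero]

lemma pZ_natAdd {s₂ s₁ : ℕ} (g : Fin (s₂ + s₁) → ℕ) (l : Fin s₁) :
    pZ g ((Fin.natAdd s₂ l : Fin (s₂ + s₁)) : ℕ) =
      (∑ m : Fin s₂, (g (Fin.castAdd s₁ m) : ℤ)) + pZ (fun m => g (Fin.natAdd s₂ m)) (l : ℕ) := by
  rw [pZ, pZ, Fin.sum_univ_add]
  simp only [Fin.coe_castAdd, Fin.coe_natAdd]
  have h1 : ∀ m : Fin s₂,
      (if (m : ℕ) < s₂ + (l : ℕ) then (g (Fin.castAdd s₁ m) : ℤ) else 0)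
        = (g (Fin.castAdd s₁ m) : ℤ) := fun m => if_pos (by omega)
  have h2 : ∀ m : Fin s₁,
      (if s₂ + (m : ℕ) < s₂ + (l : ℕ) then (g (Fin.natAdd s₂ m) : ℤ) else 0)
        = (if (m : ℕ) < (l : ℕ) then (g (Fin.natAdd s₂ m) : ℤ) else 0) := by
    intro m; congr 1; simp only [eq_iff_iff]; omega
  simp only [h1, h2]

/-- Prefix sums, restated via `pZ`. -/
lemma prefSum_eq {k p : ℕ} (K : Fin p → Fin (k + 1)) (i : Fin p) :
    prefSum K i = pZ (fun m => (K m : ℕ)) (i : ℕ) := by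
  have hset : Finset.Iio i = Finset.univ.filter (fun m : Fin p => (m : ℕ) < (i : ℕ)) := by
    ext m
    simp only [Finset.mem_Iio, Finset.mem_filter, Finset.mem_univ, true_and, Fin.lt_def]
  rw [prefSum, pZ, hset, Finset.sum_filter]

variable {R : Type*} [CommRing R]

/-- Reformulation of `Tpoly` where the composition is recorded as the
function assigning to each position `l < s` the part sitting at `l` (or `0`). -/
def V (y : ℕ → ℤ → R) (n h : ℤ) (k s : ℕ) : R :=
  ∑ g ∈ Finset.Nat.antidiagonalTuple s k,
    ∏ l : Fin s, if g l = 0 then 1 else y (g l) (((l : ℕ) : ℤ) * h + pZ g (l : ℕ) * n)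

lemma V_zero (y : ℕ → ℤ → R) (n h : ℤ) (s : ℕ) : V y n h 0 s = 1 := by
  rw [V, Finset.Nat.antidiagonalTuple_zero_right, Finset.sum_singleton]
  simp

lemma V_one (y : ℕ → ℤ → R) (n h : ℤ) (k : ℕ) :
    V y n h k 1 = if k = 0 then 1 else y k 0 := by
  rw [V, Finset.Nat.antidiagonalTuple_one, Finset.sum_singleton, Fin.prod_univ_one]
  simp [pZ]

/-- Compositions with parts valued in `ℕ`. -/
def comps' (k p : ℕ) : Finset (Fin p → ℕ) :=
  (Finset.Nat.antidiagonalTuple p k).filter fun K => ∀ i, 1 ≤ K i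

lemma mem_comps' {k p : ℕ} {K : Fin p → ℕ} :
    K ∈ comps' k p ↔ (∑ i, K i) = k ∧ ∀ i, 1 ≤ K i := by
  simp [comps', Finset.Nat.mem_antidiagonalTuple]

/-- Strictly increasing tuples. -/
def SI (p s : ℕ) : Finset (Fin p → Fin s) :=
  Finset.univ.filter fun lam => ∀ i j : Fin p, i < j → lam i < lam j

/-- `Tpoly`, with ℕ-valued compositions. -/
def Tp (y : ℕ → ℤ → R) (n h : ℤ) (k s : ℕ) : R :=
  ∑ p ∈ Finset.Icc 1 k, ∑ K ∈ comps' k p, ∑ lam ∈ SI p s,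
    ∏ i, y (K i) (((lam i : ℕ) : ℤ) * h + pZ K (i : ℕ) * n)

lemma Tpoly_eq_Tp (y : ℕ → ℤ → R) (n h : ℤ) (k s : ℕ) :
    Tpoly y n h k s = Tp y n h k s := by
  rw [Tpoly, Tp]
  refine Finset.sum_congr rfl fun p _ => ?_
  refine Finset.sum_nbij' (i := fun K m => ((K m : ℕ) : ℕ))
    (j := fun (K' : Fin p → ℕ) m => (⟨K' m % (k + 1), Nat.mod_lt _ (Nat.succ_pos k)⟩ : Fin (k+1)))
    ?_ ?_ ?_ ?_ ?_
  · intro K hK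
    simp only [comps, Finset.mem_filter, Finset.mem_univ, true_and] at hK
    exact mem_comps'.mpr ⟨hK.2, hK.1⟩
  · intro K' hK'
    rw [mem_comps'] at hK'
    have hle : ∀ m, K' m ≤ k := fun m =>
      hK'.1 ▸ Finset.single_le_sum (f := K') (fun i _ => Nat.zero_le _) (Finset.mem_univ m)
    have hmod : ∀ m, K' m % (k + 1) = K' m := fun m =>
      Nat.mod_eq_of_lt (by have := hle m; omega)
    simp only [comps, Finset.mem_filter, Finset.mem_univ, true_and, hmod]
    exact ⟨hK'.2, hK'.1⟩
  · intro K hK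
    funext m
    exact Fin.ext (Nat.mod_eq_of_lt (K m).isLt)
  · intro K' hK'
    rw [mem_comps'] at hK'
    have hle : ∀ m, K' m ≤ k := fun m =>
      hK'.1 ▸ Finset.single_le_sum (f := K') (fun i _ => Nat.zero_le _) (Finset.mem_univ m)
    funext m
    exact Nat.mod_eq_of_lt (by have := hle m; omega)
  · intro K hK
    refine Finset.sum_congr rfl fun lam _ => Finset.prod_congr rfl fun m _ => ?_
    rw [prefSum_eq]

lemma V_append (y : ℕ → ℤ → R) (n h : ℤ) (k s₂ s₁ : ℕ) :
    V y n h k (s₂ + s₁) =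
      ∑ j ∈ Finset.range (k + 1),
        V y n h j s₂ * V (shiftVar y ((s₂ : ℤ) * h + (j : ℤ) * n)) n h (k - j) s₁ := by
  have step1 : ∀ j ∈ Finset.range (k + 1),
      V y n h j s₂ * V (shiftVar y ((s₂ : ℤ) * h + (j : ℤ) * n)) n h (k - j) s₁
      = ∑ x ∈ (Finset.Nat.antidiagonalTuple s₂ j) ×ˢ (Finset.Nat.antidiagonalTuple s₁ (k - j)),
          (∏ l : Fin s₂, if x.1 l = 0 then 1 else y (x.1 l) (((l : ℕ) : ℤ) * h + pZ x.1 (l : ℕ) * n)) *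
          (∏ l : Fin s₁, if x.2 l = 0 then 1 else
            y (x.2 l) ((((l : ℕ) : ℤ) * h + pZ x.2 (l : ℕ) * n) + ((s₂ : ℤ) * h + (j : ℤ) * n))) := by
    intro j _
    rw [V, V, Finset.sum_mul_sum, Finset.sum_product]
    rfl
  rw [Finset.sum_congr rfl step1, Finset.sum_sigma']
  rw [V]
  refine Finset.sum_bij'
    (i := fun g _ => (⟨∑ m : Fin s₂, g (Fin.castAdd s₁ m),
      ((fun m => g (Fin.castAdd s₁ m)), (fun m => g (Fin.natAdd s₂ m)))⟩ :
      Σ _ : ℕ, (Fin s₂ → ℕ) × (Fin s₁ → ℕ)))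
    (j := fun z _ => Fin.append z.2.1 z.2.2) ?_ ?_ ?_ ?_ ?_
  · intro g hg
    rw [Finset.Nat.mem_antidiagonalTuple] at hg
    rw [Fin.sum_univ_add] at hg
    refine Finset.mem_sigma.mpr ⟨?_, Finset.mem_product.mpr ⟨?_, ?_⟩⟩
    · dsimp only; exact Finset.mem_range.mpr (by omega)
    · dsimp only; exact Finset.Nat.mem_antidiagonalTuple.mpr rfl
    · dsimp only; exact Finset.Nat.mem_antidiagonalTuple.mpr (by omega)
  · intro z hz
    rw [Finset.mem_sigma, Finset.mem_product, Finset.mem_range,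
      Finset.Nat.mem_antidiagonalTuple, Finset.Nat.mem_antidiagonalTuple] at hz
    rw [Finset.Nat.mem_antidiagonalTuple, Fin.sum_univ_add]
    simp only [Fin.append_left, Fin.append_right]
    omega
  · intro g hg
    exact Fin.append_castAdd_natAdd
  · intro z hz
    obtain ⟨j, g₁, g₂⟩ := z
    rw [Finset.mem_sigma, Finset.mem_product, Finset.mem_range,
      Finset.Nat.mem_antidiagonalTuple, Finset.Nat.mem_antidiagonalTuple] at hz
    rw [Sigma.ext_iff]
    constructor
    · simp only [Fin.append_left]
      exact hz.2.1
    · rw [heq_iff_eq, Prod.ext_iff]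
      constructor
      · funext m; exact Fin.append_left _ _ _
      · funext m; exact Fin.append_right _ _ _
  · intro g hg
    rw [Fin.prod_univ_add]
    congr 1
    · refine Finset.prod_congr rfl fun l _ => ?_
      rw [pZ_castAdd, Fin.coe_castAdd]
    · refine Finset.prod_congr rfl fun l _ => ?_
      rw [pZ_natAdd, Fin.coe_natAdd]
      congr 2
      push_cast
      ring

lemma sum_Icc_one {M : Type*} [AddCommMonoid M] (k : ℕ) (F : ℕ → M) :
    ∑ p ∈ Finset.Icc 1 k, F p = ∑ q ∈ Finset.range k, F (q + 1) := by
  rw [← Finset.Ico_add_one_right_eq_Icc, Finset.sum_Ico_eq_sum_range,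
    show k + 1 - 1 = k from rfl]
  exact Finset.sum_congr rfl fun q _ => by rw [add_comm]

lemma lam_pos {q s : ℕ} {lam : Fin (q + 1) → Fin (s + 1)}
    (hSI : ∀ a b : Fin (q + 1), a < b → lam a < lam b) (h0 : ¬ lam 0 = 0)
    (m : Fin (q + 1)) : 1 ≤ (lam m : ℕ) := by
  have h00 : (lam 0 : ℕ) ≠ 0 := fun hh => h0 (Fin.ext hh)
  rcases eq_or_ne m 0 with rfl | hm
  · omega
  · have hlt := hSI 0 m (Fin.pos_of_ne_zero hm)
    rw [Fin.lt_def] at hlt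
    omega

/-- Part A of the one-step recursion: terms whose first position is not `0`. -/
lemma partA (y : ℕ → ℤ → R) (n h : ℤ) (q s : ℕ) (K : Fin (q + 1) → ℕ) :
    ∑ lam ∈ (SI (q + 1) (s + 1)).filter (fun lam => ¬ lam 0 = 0),
        ∏ m, y (K m) (((lam m : ℕ) : ℤ) * h + pZ K (m : ℕ) * n)
    = ∑ lam ∈ SI (q + 1) s,
        ∏ m, shiftVar y h (K m) (((lam m : ℕ) : ℤ) * h + pZ K (m : ℕ) * n) := by
  refine Finset.sum_bij'
    (i := fun lam hlam => fun m => (⟨(lam m : ℕ) - 1, by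
      have hmem := Finset.mem_filter.mp hlam
      have hSI := (Finset.mem_filter.mp hmem.1).2
      have h1 := lam_pos hSI hmem.2 m
      have h2 : (lam m : ℕ) < s + 1 := (lam m).isLt
      omega⟩ : Fin s))
    (j := fun lam' _ => fun m => Fin.succ (lam' m)) ?_ ?_ ?_ ?_ ?_
  · intro lam hlam
    have hmem := Finset.mem_filter.mp hlam
    have hSI := (Finset.mem_filter.mp hmem.1).2
    rw [SI, Finset.mem_filter]
    refine ⟨Finset.mem_univ _, fun a b hab => ?_⟩
    have := hSI a b hab
    rw [Fin.lt_def] at this ⊢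
    have ha := lam_pos hSI hmem.2 a
    dsimp only
    omega
  · intro lam' hlam'
    rw [SI, Finset.mem_filter] at hlam'
    rw [Finset.mem_filter, SI, Finset.mem_filter]
    refine ⟨⟨Finset.mem_univ _, fun a b hab => ?_⟩, ?_⟩
    · have := hlam'.2 a b hab
      rw [Fin.lt_def] at this ⊢
      simp only [Fin.val_succ]
      omega
    · exact fun hcon => Fin.succ_ne_zero (lam' 0) hcon
  · intro lam hlam
    have hmem := Finset.mem_filter.mp hlam
    have hSI := (Finset.mem_filter.mp hmem.1).2
    funext m
    apply Fin.ext
    have h1 := lam_pos hSI hmem.2 m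
    dsimp only
    simp only [Fin.val_succ]
    omega
  · intro lam' hlam'
    funext m
    apply Fin.ext
    dsimp only
    simp only [Fin.val_succ]
    omega
  · intro lam hlam
    have hmem := Finset.mem_filter.mp hlam
    have hSI := (Finset.mem_filter.mp hmem.1).2
    refine Finset.prod_congr rfl fun m _ => ?_
    have h1 := lam_pos hSI hmem.2 m
    simp only [shiftVar]
    congr 1
    have : ((((lam m : ℕ) - 1 : ℕ)) : ℤ) = ((lam m : ℕ) : ℤ) - 1 := by omega
    rw [this]
    ring

/-- Part B of the one-step recursion: terms whose first position is `0`,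
with at least two parts, organized by the first part `j = K 0`. -/
lemma partB (y : ℕ → ℤ → R) (n h : ℤ) (q s k : ℕ) :
    ∑ K ∈ comps' k (q + 1), ∑ lam ∈ (SI (q + 1) (s + 1)).filter (fun lam => lam 0 = 0),
        ∏ m, y (K m) (((lam m : ℕ) : ℤ) * h + pZ K (m : ℕ) * n)
    = ∑ j ∈ Finset.Icc 1 (k - q), ∑ K' ∈ comps' (k - j) q, ∑ lam' ∈ SI q s,
        y j 0 * ∏ m, shiftVar y (h + (j : ℤ) * n) (K' m)
          (((lam' m : ℕ) : ℤ) * h + pZ K' (m : ℕ) * n) := by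
  have hrhs : ∑ z ∈ (Finset.Icc 1 (k - q)).sigma
        (fun j => comps' (k - j) q ×ˢ SI q s),
        y z.1 0 * ∏ m, shiftVar y (h + (z.1 : ℤ) * n) (z.2.1 m)
          (((z.2.2 m : ℕ) : ℤ) * h + pZ z.2.1 (m : ℕ) * n)
      = ∑ j ∈ Finset.Icc 1 (k - q), ∑ K' ∈ comps' (k - j) q, ∑ lam' ∈ SI q s,
        y j 0 * ∏ m, shiftVar y (h + (j : ℤ) * n) (K' m)
          (((lam' m : ℕ) : ℤ) * h + pZ K' (m : ℕ) * n) := by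
    rw [Finset.sum_sigma]
    refine Finset.sum_congr rfl fun j _ => ?_
    rw [Finset.sum_product]
  rw [← hrhs, ← Finset.sum_product']
  refine Finset.sum_bij'
    (i := fun x hx => (⟨x.1 0, ((fun m => x.1 m.succ), (fun m => (⟨(x.2 m.succ : ℕ) - 1, by
        have hx2 := (Finset.mem_product.mp hx).2
        have hmem := Finset.mem_filter.mp hx2
        have hSI := (Finset.mem_filter.mp hmem.1).2
        have h0 : x.2 0 = 0 := hmem.2
        have hlt := hSI 0 m.succ (Fin.succ_pos m)
        rw [Fin.lt_def, h0] at hlt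
        have h2 : (x.2 m.succ : ℕ) < s + 1 := (x.2 m.succ).isLt
        simp only [Fin.val_zero] at hlt
        omega⟩ : Fin s)))⟩ :
      Σ _ : ℕ, (Fin q → ℕ) × (Fin q → Fin s)))
    (j := fun z _ => (Fin.cons z.1 z.2.1, Fin.cons 0 (fun m => Fin.succ (z.2.2 m)))) ?_ ?_ ?_ ?_ ?_
  · intro x hx
    obtain ⟨hx1, hx2⟩ := Finset.mem_product.mp hx
    rw [mem_comps'] at hx1
    have hsum : x.1 0 + ∑ m : Fin q, x.1 m.succ = k := by
      rw [← Fin.sum_univ_succ]; exact hx1.1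
    have htail : q ≤ ∑ m : Fin q, x.1 m.succ := by
      calc q = ∑ _m : Fin q, 1 := by simp
      _ ≤ ∑ m : Fin q, x.1 m.succ := Finset.sum_le_sum fun m _ => hx1.2 m.succ
    have hmem := Finset.mem_filter.mp hx2
    have hSI := (Finset.mem_filter.mp hmem.1).2
    refine Finset.mem_sigma.mpr ⟨?_, Finset.mem_product.mpr ⟨?_, ?_⟩⟩
    · dsimp only
      rw [Finset.mem_Icc]
      exact ⟨hx1.2 0, by omega⟩
    · dsimp only
      rw [mem_comps']
      exact ⟨by omega, fun m => hx1.2 m.succ⟩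
    · dsimp only
      rw [SI, Finset.mem_filter]
      refine ⟨Finset.mem_univ _, fun a b hab => ?_⟩
      have := hSI a.succ b.succ (by rwa [Fin.succ_lt_succ_iff])
      rw [Fin.lt_def] at this ⊢
      have h0 : x.2 0 = 0 := hmem.2
      have ha := hSI 0 a.succ (Fin.succ_pos a)
      rw [Fin.lt_def, h0] at ha
      simp only [Fin.val_zero] at ha
      dsimp only
      omega
  · intro z hz
    obtain ⟨j, K', lam'⟩ := z
    rw [Finset.mem_sigma, Finset.mem_product] at hz
    obtain ⟨hj, hK', hlam'⟩ := hz
    rw [Finset.mem_Icc] at hj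
    rw [mem_comps'] at hK'
    rw [SI, Finset.mem_filter] at hlam'
    dsimp only at *
    rw [Finset.mem_product]
    constructor
    · rw [mem_comps']
      constructor
      · rw [Fin.sum_univ_succ]
        simp only [Fin.cons_zero, Fin.cons_succ]
        omega
      · intro m
        refine Fin.cases ?_ ?_ m
        · simpa using hj.1
        · intro m'; simpa using hK'.2 m'
    · rw [Finset.mem_filter, SI, Finset.mem_filter]
      refine ⟨⟨Finset.mem_univ _, fun a b hab => ?_⟩, by simp⟩
      rcases Fin.eq_zero_or_eq_succ b with rfl | ⟨b', rfl⟩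
      · rw [Fin.lt_def] at hab
        have hz0 : ((0 : Fin (q + 1)) : ℕ) = 0 := rfl
        omega
      · rcases Fin.eq_zero_or_eq_succ a with rfl | ⟨a', rfl⟩
        · simp only [Fin.cons_zero, Fin.cons_succ]
          exact Fin.succ_pos _
        · simp only [Fin.cons_succ]
          rw [Fin.succ_lt_succ_iff]
          exact hlam'.2 a' b' (Fin.succ_lt_succ_iff.mp hab)
  · intro x hx
    obtain ⟨hx1, hx2⟩ := Finset.mem_product.mp hx
    have hmem := Finset.mem_filter.mp hx2
    have hSI := (Finset.mem_filter.mp hmem.1).2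
    have h0 : x.2 0 = 0 := hmem.2
    dsimp only
    rw [Prod.ext_iff]
    constructor
    · exact Fin.cons_self_tail x.1
    · funext m
      refine Fin.cases ?_ ?_ m
      · dsimp only
        rw [Fin.cons_zero, h0]
      · intro m'
        dsimp only
        rw [Fin.cons_succ]
        apply Fin.ext
        simp only [Fin.val_succ]
        have hlt := hSI 0 m'.succ (Fin.succ_pos m')
        rw [Fin.lt_def, h0] at hlt
        simp only [Fin.val_zero] at hlt
        omega
  · intro z hz
    obtain ⟨j, K', lam'⟩ := z
    dsimp only
    rw [Sigma.ext_iff]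
    refine ⟨by dsimp only; exact Fin.cons_zero _ _, ?_⟩
    rw [heq_iff_eq, Prod.ext_iff]
    constructor
    · funext m; dsimp only; exact Fin.cons_succ _ _ _
    · funext m
      apply Fin.ext
      dsimp only
      rw [Fin.cons_succ]
      simp only [Fin.val_succ]
      omega
  · intro x hx
    obtain ⟨hx1, hx2⟩ := Finset.mem_product.mp hx
    have hmem := Finset.mem_filter.mp hx2
    have hSI := (Finset.mem_filter.mp hmem.1).2
    have h0 : x.2 0 = 0 := hmem.2
    dsimp only
    rw [Fin.prod_univ_succ]
    congr 1
    · rw [h0]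
      simp only [Fin.val_zero, Nat.cast_zero, pZ_zero, zero_mul, add_zero]
    · refine Finset.prod_congr rfl fun m _ => ?_
      simp only [shiftVar, Fin.val_succ]
      rw [pZ_succ]
      congr 1
      have hlt := hSI 0 m.succ (Fin.succ_pos m)
      rw [Fin.lt_def, h0] at hlt
      simp only [Fin.val_zero] at hlt
      have hc : ((((x.2 m.succ : ℕ) - 1 : ℕ)) : ℤ) = ((x.2 m.succ : ℕ) : ℤ) - 1 := by omega
      rw [hc]
      ring

/-- One-step recursion for `Tp`. -/
lemma Tp_succ (y : ℕ → ℤ → R) (n h : ℤ) (k s : ℕ) (hk : 1 ≤ k) :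
    Tp y n h k (s + 1) = Tp (shiftVar y h) n h k s
      + (∑ j ∈ Finset.Ico 1 k, y j 0 * Tp (shiftVar y (h + (j : ℤ) * n)) n h (k - j) s)
      + y k 0 := by
  rw [Tp, sum_Icc_one]
  have hsplit : ∀ q ∈ Finset.range k,
      (∑ K ∈ comps' k (q + 1), ∑ lam ∈ SI (q + 1) (s + 1),
        ∏ m, y (K m) (((lam m : ℕ) : ℤ) * h + pZ K (m : ℕ) * n))
      = (∑ K ∈ comps' k (q + 1), ∑ lam ∈ (SI (q + 1) (s + 1)).filter (fun lam => lam 0 = 0),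
          ∏ m, y (K m) (((lam m : ℕ) : ℤ) * h + pZ K (m : ℕ) * n))
        + (∑ K ∈ comps' k (q + 1), ∑ lam ∈ SI (q + 1) s,
          ∏ m, shiftVar y h (K m) (((lam m : ℕ) : ℤ) * h + pZ K (m : ℕ) * n)) := by
    intro q _
    rw [← Finset.sum_add_distrib]
    refine Finset.sum_congr rfl fun K _ => ?_
    rw [← partA y n h q s K,
      Finset.sum_filter_add_sum_filter_not (SI (q + 1) (s + 1)) (fun lam => lam 0 = 0)]
  rw [Finset.sum_congr rfl hsplit, Finset.sum_add_distrib]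
  have hA : (∑ q ∈ Finset.range k, ∑ K ∈ comps' k (q + 1), ∑ lam ∈ SI (q + 1) s,
      ∏ m, shiftVar y h (K m) (((lam m : ℕ) : ℤ) * h + pZ K (m : ℕ) * n))
      = Tp (shiftVar y h) n h k s := by
    rw [Tp, sum_Icc_one]
  have hB : (∑ q ∈ Finset.range k, ∑ K ∈ comps' k (q + 1),
      ∑ lam ∈ (SI (q + 1) (s + 1)).filter (fun lam => lam 0 = 0),
        ∏ m, y (K m) (((lam m : ℕ) : ℤ) * h + pZ K (m : ℕ) * n))
      = y k 0 + ∑ j ∈ Finset.Ico 1 k, y j 0 * Tp (shiftVar y (h + (j : ℤ) * n)) n h (k - j) s := by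
    rw [Finset.range_eq_Ico, Finset.sum_eq_sum_Ico_succ_bot (by omega : (0 : ℕ) < k)]
    congr 1
    · -- the `q = 0` term
      have hc : comps' k (0 + 1) = {fun _ : Fin 1 => k} := by
        ext K
        rw [mem_comps', Finset.mem_singleton]
        constructor
        · rintro ⟨h1, _⟩
          funext i
          rw [Subsingleton.elim (α := Fin 1) i 0, ← h1, Fin.sum_univ_one]
        · rintro rfl
          exact ⟨by rw [Fin.sum_univ_one], fun i => hk⟩
      have hlam : (SI (0 + 1) (s + 1)).filter (fun lam => lam 0 = 0)
          = {fun _ : Fin 1 => (0 : Fin (s + 1))} := by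
        ext lam
        simp only [SI, Finset.mem_filter, Finset.mem_univ, true_and, Finset.mem_singleton]
        constructor
        · rintro ⟨-, h0⟩
          funext i
          rw [Subsingleton.elim (α := Fin 1) i 0, h0]
        · rintro rfl
          exact ⟨fun a b hab => absurd hab
            (by rw [Subsingleton.elim (α := Fin 1) a b]; exact lt_irrefl b), rfl⟩
      rw [hc, hlam, Finset.sum_singleton, Finset.sum_singleton, Fin.prod_univ_one]
      simp [pZ_zero]
    · rw [Finset.sum_congr rfl (fun q _ => partB y n h q s k)]
      rw [Finset.sum_comm' (s := Finset.Ico 1 k) (t := fun q => Finset.Icc 1 (k - q))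
        (t' := Finset.Ico 1 k) (s' := fun j => Finset.Icc 1 (k - j))
        (by intro q j; simp only [Finset.mem_Ico, Finset.mem_Icc]; omega)]
      refine Finset.sum_congr rfl fun j hj => ?_
      rw [Tp, Finset.mul_sum]
      refine Finset.sum_congr rfl fun p _ => ?_
      rw [Finset.mul_sum]
      refine Finset.sum_congr rfl fun K' _ => ?_
      rw [Finset.mul_sum]
  rw [hA, hB]
  ring

/-- One-step recursion for `V`. -/
lemma V_succ (y : ℕ → ℤ → R) (n h : ℤ) (k s : ℕ) (hk : 1 ≤ k) :
    V y n h k (s + 1) = V (shiftVar y h) n h k s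
      + (∑ j ∈ Finset.Ico 1 k, y j 0 * V (shiftVar y (h + (j : ℤ) * n)) n h (k - j) s)
      + y k 0 := by
  have h1 : V y n h k (s + 1) = V y n h k (1 + s) := by rw [add_comm]
  rw [h1, V_append y n h k 1 s, Finset.range_eq_Ico,
    Finset.sum_eq_sum_Ico_succ_bot (Nat.succ_pos k), Finset.sum_Ico_succ_top hk]
  simp only [V_one, V_zero, Nat.cast_zero, Nat.cast_one, zero_mul, one_mul, add_zero,
    Nat.sub_zero, Nat.sub_self, mul_one]
  simp only [if_true]
  rw [if_neg (by omega : ¬ k = 0), one_mul]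
  have hmid : ∑ j ∈ Finset.Ico 1 k,
      (if j = 0 then 1 else y j 0) * V (shiftVar y (h + (j : ℤ) * n)) n h (k - j) s
      = ∑ j ∈ Finset.Ico 1 k, y j 0 * V (shiftVar y (h + (j : ℤ) * n)) n h (k - j) s := by
    refine Finset.sum_congr rfl fun j hj => ?_
    rw [Finset.mem_Ico] at hj
    rw [if_neg (by omega)]
  rw [hmid]
  ring

/-- `Tp` agrees with `V` for `k ≥ 1`. -/
lemma Tp_eq_V (n h : ℤ) : ∀ (s k : ℕ), 1 ≤ k → ∀ y : ℕ → ℤ → R,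
    Tp y n h k s = V y n h k s := by
  intro s
  induction s with
  | zero =>
    intro k hk y
    have hTp : Tp y n h k 0 = 0 := by
      rw [Tp]
      refine Finset.sum_eq_zero fun p hp => ?_
      rw [Finset.mem_Icc] at hp
      haveI : IsEmpty (Fin p → Fin 0) := ⟨fun f => (f ⟨0, by omega⟩).elim0⟩
      refine Finset.sum_eq_zero fun K _ => ?_
      rw [SI, Finset.univ_eq_empty, Finset.filter_empty, Finset.sum_empty]
    have hV : V y n h k 0 = 0 := by
      rw [V]
      cases k with
      | zero => omega
      | succ m => rw [Finset.Nat.antidiagonalTuple_zero_succ, Finset.sum_empty]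
    rw [hTp, hV]
  | succ s ih =>
    intro k hk y
    rw [Tp_succ y n h k s hk, V_succ y n h k s hk, ih k hk (shiftVar y h)]
    congr 1
    congr 1
    refine Finset.sum_congr rfl fun j hj => ?_
    rw [Finset.mem_Ico] at hj
    rw [ih (k - j) (by omega) (shiftVar y (h + (j : ℤ) * n))]

end TdComp

/-- the composition identity
`T^k_{s₁+s₂}(i) = T^k_{s₁}(i+s₂h) + Σ_{j=1}^{k-1} T^j_{s₂}(i) T^{k-j}_{s₁}(i+s₂h+jn) + T^k_{s₂}(i)`. -/
theorem Td_comp {R : Type*} [CommRing R] (f : ℕ → ℤ → R) (n h : ℤ)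
    (hn : 1 ≤ n) (hh : 1 ≤ h) (k s₁ s₂ : ℕ) (hk : 1 ≤ k) (hs₁ : 1 ≤ s₁) (hs₂ : 1 ≤ s₂) (i : ℤ) :
    Td f n h k (s₁ + s₂) i =
      Td f n h k s₁ (i + (s₂ : ℤ) * h) +
        (∑ j ∈ Finset.Ico 1 k,
          Td f n h j s₂ i * Td f n h (k - j) s₁ (i + (s₂ : ℤ) * h + (j : ℤ) * n)) +
      Td f n h k s₂ i := by
  have hTd : ∀ (k' s' : ℕ), 1 ≤ k' → ∀ b : ℤ,
      Td f n h k' s' b = TdComp.V (fun r j => f r (b + j)) n h k' s' := by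
    intro k' s' hk' b
    rw [Td, TdComp.Tpoly_eq_Tp, TdComp.Tp_eq_V n h s' k' hk']
  have hy : ∀ α : ℤ, shiftVar (fun r j => f r (i + j)) α
      = fun r j => f r (i + α + j) := by
    intro α
    funext r j
    simp only [shiftVar]
    congr 1
    ring
  have hVs : ∀ (k' s' : ℕ), 1 ≤ k' → ∀ α : ℤ,
      TdComp.V (shiftVar (fun r j => f r (i + j)) α) n h k' s' = Td f n h k' s' (i + α) := by
    intro k' s' hk' α
    rw [hy α]
    exact (hTd k' s' hk' (i + α)).symm
  rw [hTd k (s₁ + s₂) hk i, show s₁ + s₂ = s₂ + s₁ from add_comm _ _,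
    TdComp.V_append _ n h k s₂ s₁, Finset.range_eq_Ico,
    Finset.sum_eq_sum_Ico_succ_bot (Nat.succ_pos k), Finset.sum_Ico_succ_top hk]
  simp only [TdComp.V_zero, one_mul, Nat.cast_zero, zero_mul, add_zero, Nat.sub_zero,
    Nat.sub_self, mul_one]
  rw [hVs k s₁ hk ((s₂ : ℤ) * h)]
  have hmid : ∀ j ∈ Finset.Ico 1 k,
      TdComp.V (fun r j' => f r (i + j')) n h j s₂
        * TdComp.V (shiftVar (fun r j' => f r (i + j')) ((s₂ : ℤ) * h + (j : ℤ) * n)) n h (k - j) s₁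
      = Td f n h j s₂ i * Td f n h (k - j) s₁ (i + (s₂ : ℤ) * h + (j : ℤ) * n) := by
    intro j hj
    rw [Finset.mem_Ico] at hj
    rw [← hTd j s₂ hj.1 i, hVs (k - j) s₁ (by omega) ((s₂ : ℤ) * h + (j : ℤ) * n),
      show i + ((s₂ : ℤ) * h + (j : ℤ) * n) = i + (s₂ : ℤ) * h + (j : ℤ) * n from
        (add_assoc _ _ _).symm]
  rw [Finset.sum_congr rfl hmid, ← hTd k s₂ hk i]
  ring
end

section
/- Define x^k_j = S^{k,j}_1, i.e. the shift by j of S^k_1 = (-1)^k Σ_K (-1)^p y^{k_1}_{(k_2+...+k_p)n} ⋯ y^{k_{p-1}}_{k_p n} y^{k_p}_0 (sum over compositions K of k). Then for every k ≥ 1 and j ∈ ℤ the relation x^k_j + Σ_{q=1}^{k-1} (-1)^q y^q_{j+(k-q)n} x^{k-q}_j + (-1)^k y^k_j = 0 holds. -/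
open Finset

/-- The variables `x^k_j = (-1)^k Σ_K (-1)^p y^{k_1}_{j+(k_2+⋯+k_p)n} ⋯ y^{k_p}_j`
(sum over compositions `K` of `k`), i.e. `x^k_j = S^{k,j}_1`. -/
def Xvar {R : Type*} [CommRing R] (y : ℕ → ℤ → R) (n : ℤ) (k : ℕ) (j : ℤ) : R :=
  (-1) ^ k * ∑ p ∈ Finset.Icc 1 k, (-1) ^ p *
    ∑ K ∈ comps k p, ∏ i, y ((K i : ℕ)) (j + sufSum K i * n)

lemma comps_mem {k p : ℕ} {K : Fin p → Fin (k+1)} (h : K ∈ comps k p) :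
    (∀ i, 1 ≤ (K i : ℕ)) ∧ (∑ i, (K i : ℕ)) = k := by
  simpa [comps] using h

lemma comps_eq_empty {k p : ℕ} (h : k < p) : comps k p = ∅ := by
  ext K
  simp only [comps, mem_filter, mem_univ, true_and, Finset.notMem_empty, iff_false, not_and]
  intro h1 h2
  have hp : p ≤ ∑ i, (K i : ℕ) := by
    calc p = ∑ _i : Fin p, 1 := by simp
    _ ≤ _ := Finset.sum_le_sum fun i _ => h1 i
  omega

lemma comps_one {k : ℕ} (hk : 1 ≤ k) :
    comps k 1 = {fun _ => (⟨k, Nat.lt_succ_self k⟩ : Fin (k+1))} := by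
  ext K
  simp only [comps, mem_filter, mem_univ, true_and, mem_singleton]
  constructor
  · rintro ⟨h1, h2⟩
    funext i
    have hi : i = 0 := Subsingleton.elim _ _
    subst hi
    exact Fin.ext (by simpa [Fin.sum_univ_one] using h2)
  · rintro rfl
    exact ⟨fun i => hk, by simp [Fin.sum_univ_one]⟩

lemma sufSum_fin_one {k : ℕ} (K : Fin 1 → Fin (k+1)) (i : Fin 1) : sufSum K i = 0 := by
  have hi : i = 0 := Subsingleton.elim _ _
  subst hi
  rw [sufSum]
  have : (Finset.Ioi (0 : Fin 1)) = ∅ := by decide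
  rw [this, Finset.sum_empty]

lemma tail_sum {k p : ℕ} {K : Fin (p+1) → Fin (k+1)} (hK : K ∈ comps k (p+1)) :
    ∑ l : Fin p, (K l.succ : ℕ) = k - (K 0 : ℕ) := by
  obtain ⟨h1, h2⟩ := comps_mem hK
  rw [Fin.sum_univ_succ] at h2
  omega

lemma head_mem {k p : ℕ} {K : Fin (p+1) → Fin (k+1)} (hp : 1 ≤ p) (hK : K ∈ comps k (p+1)) :
    (K 0 : ℕ) ∈ Finset.Ico 1 k := by
  obtain ⟨h1, h2⟩ := comps_mem hK
  rw [Fin.sum_univ_succ] at h2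
  have hp' : p ≤ ∑ l : Fin p, (K l.succ : ℕ) := by
    calc p = ∑ _l : Fin p, 1 := by simp
    _ ≤ _ := Finset.sum_le_sum fun l _ => h1 l.succ
  have := h1 0
  simp only [Finset.mem_Ico]
  omega

lemma tail_lt {k p : ℕ} {K : Fin (p+1) → Fin (k+1)} (hK : K ∈ comps k (p+1)) (l : Fin p) :
    (K l.succ : ℕ) < k - (K 0 : ℕ) + 1 := by
  have hs := tail_sum hK
  have : (K l.succ : ℕ) ≤ ∑ m : Fin p, (K m.succ : ℕ) :=
    Finset.single_le_sum (f := fun m : Fin p => (K m.succ : ℕ)) (fun m _ => Nat.zero_le _) (Finset.mem_univ l)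
  omega

lemma comps_succ_sum {R : Type*} [CommRing R] (f : ℕ → ℤ → R) (k p : ℕ) (hp : 1 ≤ p) :
    ∑ K ∈ comps k (p+1), ∏ i, f (K i : ℕ) (sufSum K i)
      = ∑ q ∈ Finset.Ico 1 k, f q ((k - q : ℕ) : ℤ) *
          ∑ K ∈ comps (k-q) p, ∏ i, f (K i : ℕ) (sufSum K i) := by
  have hrw : ∀ q ∈ Finset.Ico 1 k, f q ((k-q:ℕ):ℤ) * ∑ K ∈ comps (k-q) p, ∏ i, f (K i : ℕ) (sufSum K i)
      = ∑ K ∈ comps (k-q) p, f q ((k-q:ℕ):ℤ) * ∏ i, f (K i : ℕ) (sufSum K i) :=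
    fun q _ => Finset.mul_sum _ _ _
  rw [Finset.sum_congr rfl hrw, Finset.sum_sigma']
  refine Finset.sum_bij'
    (i := fun K hK => ⟨(K 0 : ℕ), fun l => ⟨(K l.succ : ℕ), tail_lt hK l⟩⟩)
    (j := fun x hx => Fin.cons ⟨x.1, by
        have := (Finset.mem_sigma.mp hx).1; simp only [Finset.mem_Ico] at this; omega⟩
      (fun l => ⟨(x.2 l : ℕ), by
        have h1 := (Finset.mem_sigma.mp hx).1
        simp only [Finset.mem_Ico] at h1
        have := (x.2 l).isLt; omega⟩))
    ?_ ?_ ?_ ?_ ?_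
  · intro K hK
    rw [Finset.mem_sigma]
    refine ⟨head_mem hp hK, ?_⟩
    obtain ⟨h1, h2⟩ := comps_mem hK
    simp only [comps, Finset.mem_filter, Finset.mem_univ, true_and]
    exact ⟨fun l => h1 l.succ, tail_sum hK⟩
  · intro x hx
    obtain ⟨hq, hK'⟩ := Finset.mem_sigma.mp hx
    simp only [Finset.mem_Ico] at hq
    obtain ⟨h1, h2⟩ := comps_mem hK'
    simp only [comps, Finset.mem_filter, Finset.mem_univ, true_and]
    constructor
    · intro i
      refine Fin.cases ?_ (fun l => ?_) i
      · simpa using hq.1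
      · simpa using h1 l
    · rw [Fin.sum_univ_succ]
      simp only [Fin.cons_zero, Fin.cons_succ]
      have : ∑ l : Fin p, ((fun l => (⟨(x.2 l : ℕ), by
          have := (x.2 l).isLt; omega⟩ : Fin (k+1))) l : ℕ) = ∑ l : Fin p, (x.2 l : ℕ) := rfl
      omega
  · intro K hK
    funext i
    refine Fin.cases ?_ (fun l => ?_) i
    · simp [Fin.ext_iff]
    · simp [Fin.ext_iff]
  · intro x hx
    refine Sigma.ext ?_ ?_
    · simp
    · simp only [Fin.cons_succ]
      refine heq_of_eq ?_
      funext l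
      rfl
  · intro K hK
    rw [Fin.prod_univ_succ]
    congr 1
    · congr 1
      rw [sufSum, Fin.sum_Ioi_zero]
      have : ∑ l : Fin p, ((K l.succ : ℕ) : ℤ) = ((k - (K 0 : ℕ) : ℕ) : ℤ) := by
        rw [← Nat.cast_sum, tail_sum hK]
      exact this
    · apply Finset.prod_congr rfl
      intro l _
      congr 1
      rw [sufSum, sufSum, Fin.sum_Ioi_succ]

lemma Arec {R : Type*} [CommRing R] (f : ℕ → ℤ → R) (k : ℕ) (hk : 1 ≤ k) :
    ∑ p ∈ Finset.Icc 1 k, (-1:R)^p * ∑ K ∈ comps k p, ∏ i, f (K i : ℕ) (sufSum K i)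
      = - f k 0 - ∑ q ∈ Finset.Ico 1 k, f q ((k-q:ℕ):ℤ) *
          ∑ p ∈ Finset.Icc 1 (k-q), (-1:R)^p * ∑ K ∈ comps (k-q) p, ∏ i, f (K i : ℕ) (sufSum K i) := by
  have hins : Finset.Icc 1 k = insert 1 (Finset.Icc 2 k) := by
    ext m; simp only [Finset.mem_Icc, Finset.mem_insert]; omega
  have hmap : Finset.Icc 2 k = Finset.map ⟨fun p => p+1, fun a b h => by simpa using h⟩ (Finset.Icc 1 (k-1)) := by
    ext m
    simp only [Finset.mem_map, Finset.mem_Icc, Function.Embedding.coeFn_mk]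
    constructor
    · intro h; exact ⟨m-1, by omega, show m - 1 + 1 = m by omega⟩
    · rintro ⟨a, ha, rfl⟩
      show 2 ≤ a + 1 ∧ a + 1 ≤ k
      omega
  rw [hins, Finset.sum_insert (by simp), hmap, Finset.sum_map]
  have h1 : (-1:R)^1 * ∑ K ∈ comps k 1, ∏ i, f (K i : ℕ) (sufSum K i) = - f k 0 := by
    rw [comps_one hk, Finset.sum_singleton, Fin.prod_univ_one, sufSum_fin_one]
    ring
  rw [h1]
  show -f k 0 + ∑ x ∈ Finset.Icc 1 (k-1), (-1:R)^(x+1) * ∑ K ∈ comps k (x+1), ∏ i, f (K i : ℕ) (sufSum K i) = _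
  have h2 : ∀ p ∈ Finset.Icc 1 (k-1),
      (-1:R)^(p+1) * ∑ K ∈ comps k (p+1), ∏ i, f (K i:ℕ) (sufSum K i)
      = ∑ q ∈ Finset.Ico 1 k, -(f q ((k-q:ℕ):ℤ) *
          ((-1:R)^p * ∑ K ∈ comps (k-q) p, ∏ i, f (K i:ℕ) (sufSum K i))) := by
    intro p hp
    simp only [Finset.mem_Icc] at hp
    rw [comps_succ_sum f k p hp.1, Finset.mul_sum]
    exact Finset.sum_congr rfl fun q _ => by ring
  rw [Finset.sum_congr rfl h2, Finset.sum_comm]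
  have h3 : ∀ q ∈ Finset.Ico 1 k,
      ∑ p ∈ Finset.Icc 1 (k-1), -(f q ((k-q:ℕ):ℤ) *
          ((-1:R)^p * ∑ K ∈ comps (k-q) p, ∏ i, f (K i:ℕ) (sufSum K i)))
      = -(f q ((k-q:ℕ):ℤ) * ∑ p ∈ Finset.Icc 1 (k-q),
          (-1:R)^p * ∑ K ∈ comps (k-q) p, ∏ i, f (K i:ℕ) (sufSum K i)) := by
    intro q hq
    simp only [Finset.mem_Ico] at hq
    have hsub : Finset.Icc 1 (k-q) ⊆ Finset.Icc 1 (k-1) := by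
      intro m hm; simp only [Finset.mem_Icc] at *; omega
    have hzero : ∀ p ∈ Finset.Icc 1 (k-1), p ∉ Finset.Icc 1 (k-q) →
        (-1:R)^p * ∑ K ∈ comps (k-q) p, ∏ i, f (K i:ℕ) (sufSum K i) = 0 := by
      intro p hp hnp
      simp only [Finset.mem_Icc] at hp hnp
      rw [comps_eq_empty (by omega), Finset.sum_empty, mul_zero]
    rw [Finset.sum_neg_distrib, ← Finset.mul_sum, ← Finset.sum_subset hsub hzero]
  rw [Finset.sum_congr rfl h3, Finset.sum_neg_distrib]
  ring


/-- `x^k_j + Σ_{q=1}^{k-1} (-1)^q y^q_{j+(k-q)n} x^{k-q}_j + (-1)^k y^k_j = 0`. -/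
theorem Xvar_rel {R : Type*} [CommRing R] (y : ℕ → ℤ → R) (n : ℤ)
    (hn : 1 ≤ n) (k : ℕ) (hk : 1 ≤ k) (j : ℤ) :
    Xvar y n k j +
      (∑ q ∈ Finset.Ico 1 k,
        (-1 : R) ^ q * y q (j + ((k - q : ℕ) : ℤ) * n) * Xvar y n (k - q) j) +
      (-1 : R) ^ k * y k j = 0 := by
  have hX : ∀ m : ℕ, Xvar y n m j = (-1:R)^m *
      ∑ p ∈ Finset.Icc 1 m, (-1:R)^p * ∑ K ∈ comps m p, ∏ i, y (K i : ℕ) (j + sufSum K i * n) :=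
    fun m => rfl
  have key := Arec (fun r t => y r (j + t * n)) k hk
  simp only [zero_mul, add_zero] at key
  simp only [hX, key]
  rw [mul_sub]
  have h4 : ∀ q ∈ Finset.Ico 1 k,
      (-1:R)^q * y q (j + ((k-q:ℕ):ℤ) * n) * ((-1:R)^(k-q) *
        ∑ p ∈ Finset.Icc 1 (k-q), (-1:R)^p * ∑ K ∈ comps (k-q) p, ∏ i, y (K i : ℕ) (j + sufSum K i * n))
      = (-1:R)^k * (y q (j + ((k-q:ℕ):ℤ) * n) *
        ∑ p ∈ Finset.Icc 1 (k-q), (-1:R)^p * ∑ K ∈ comps (k-q) p, ∏ i, y (K i : ℕ) (j + sufSum K i * n)) := by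
    intro q hq
    simp only [Finset.mem_Ico] at hq
    have hqk : q + (k - q) = k := by omega
    rw [show (-1:R)^k = (-1:R)^q * (-1:R)^(k-q) from by rw [← pow_add, hqk]]
    ring
  rw [Finset.sum_congr rfl h4, ← Finset.mul_sum]
  ring
end
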